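/- arXiv:1303.0615 — 6 statements merged into one kernel-verified Lean document; each statement's English description precedes it below -/
import Mathlib

section
/- In the RIFS interpolation setup with matching conditions, let C(I) = {φ ∈ C⁰(I) : φ(x_i) = y_i, i = 0, 1, …, n}, a complete metric space under the sup norm. Then the operator T : C(I) → C(I) defined by (Tφ)(x) = F_{i,k}(L_{i,k}^{−1}(x), φ(L_{i,k}^{−1}(x))) for x ∈ I_i (i = 1, …, n, k = γ(i)) is well defined (i.e., Tφ is continuous and interpolates the data) and is a contraction on C(I). -/
open Set

/-- Gluing: continuity on a union of two closed sets. -/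
lemma rifs_glue {f : ℝ → ℝ} {s t : Set ℝ} (hs : IsClosed s) (ht : IsClosed t)
    (h1 : ContinuousOn f s) (h2 : ContinuousOn f t) : ContinuousOn f (s ∪ t) := by
  intro p hp
  have c1 : ContinuousWithinAt f s p := by
    by_cases h : p ∈ s
    · exact h1 p h
    · exact continuousWithinAt_of_notMem_closure (by rwa [hs.closure_eq])
  have c2 : ContinuousWithinAt f t p := by
    by_cases h : p ∈ t
    · exact h2 p h
    · exact continuousWithinAt_of_notMem_closure (by rwa [ht.closure_eq])
  exact c1.union c2

/-- Continuity of the inverse of a continuous bijection between compact intervals. -/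
lemma rifs_inv_cont {L Linv : ℝ → ℝ} {p q c d : ℝ}
    (hL : ContinuousOn L (Icc p q))
    (hmap : MapsTo L (Icc p q) (Icc c d))
    (hmap' : MapsTo Linv (Icc c d) (Icc p q))
    (hLI : ∀ t ∈ Icc c d, L (Linv t) = t)
    (hIL : ∀ u ∈ Icc p q, Linv (L u) = u) :
    ContinuousOn Linv (Icc c d) := by
  haveI : CompactSpace (Icc p q) := isCompact_iff_compactSpace.mp isCompact_Icc
  let eqv : Icc p q ≃ Icc c d :=
    { toFun := fun u => ⟨L u, hmap u.2⟩
      invFun := fun t => ⟨Linv t, hmap' t.2⟩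
      left_inv := fun u => Subtype.ext (hIL u u.2)
      right_inv := fun t => Subtype.ext (hLI t t.2) }
  have hc : Continuous (eqv : Icc p q → Icc c d) := by
    apply Continuous.subtype_mk
    exact hL.restrict.congr (fun u => rfl)
  let h := hc.homeoOfEquivCompactToT2
  rw [continuousOn_iff_continuous_restrict]
  have : domRestrict (Icc c d) Linv = fun t => ((h.symm t : Icc p q) : ℝ) := by
    funext t; rfl
  rw [this]
  exact continuous_subtype_val.comp h.symm.continuous

/-- **Well-definedness and contractivity of the Read–Bajraktarević operator.**
In the RIFS interpolation setup with matching conditions, the operator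
`(Tφ)(x) = F_{i,k}(L_{i,k}⁻¹(x), φ(L_{i,k}⁻¹(x)))` for `x ∈ I_i` is a well-defined
contraction on `C(I) = {φ ∈ C⁰(I) : φ(x_i) = y_i}` with the sup norm. -/
theorem stmt1
    -- the data set P: x 0 < x 1 < … < x n, points (x i, y i)
    (n l : ℕ) (hn : 0 < n) (hl : 0 < l)
    (x y : ℕ → ℝ) (hx : ∀ i < n, x i < x (i + 1))
    -- domains Ĩ_k = [x (s k), x (e k)], with e k − s k ≥ 2
    (s e : ℕ → ℕ)
    (hse : ∀ k, 1 ≤ k → k ≤ l → s k + 2 ≤ e k ∧ e k ≤ n)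
    -- each region I_i is related to the domain Ĩ_(γ i)
    (γ : ℕ → ℕ) (hγ : ∀ i, 1 ≤ i → i ≤ n → 1 ≤ γ i ∧ γ i ≤ l)
    -- H is a (sufficiently large) interval containing all the y i
    (H0 H1 : ℝ) (hH01 : H0 ≤ H1) (hH : ∀ i ≤ n, y i ∈ Icc H0 H1)
    (L Linv b sfun : ℕ → ℝ → ℝ) (a : ℝ → ℝ)
    -- L i : Ĩ_(γ i) → I_i is a contraction homeomorphism mapping endpoints onto endpoints,
    -- with inverse Linv i
    (hLmap : ∀ i, 1 ≤ i → i ≤ n →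
      MapsTo (L i) (Icc (x (s (γ i))) (x (e (γ i)))) (Icc (x (i - 1)) (x i)))
    (hLend : ∀ i, 1 ≤ i → i ≤ n →
      (L i) '' {x (s (γ i)), x (e (γ i))} = {x (i - 1), x i})
    (hLcon : ∀ i, 1 ≤ i → i ≤ n → ∃ c : ℝ, 0 ≤ c ∧ c < 1 ∧
      ∀ u ∈ Icc (x (s (γ i))) (x (e (γ i))),
      ∀ v ∈ Icc (x (s (γ i))) (x (e (γ i))), |L i u - L i v| ≤ c * |u - v|)
    (hLinv : ∀ i, 1 ≤ i → i ≤ n →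
      (MapsTo (Linv i) (Icc (x (i - 1)) (x i)) (Icc (x (s (γ i))) (x (e (γ i)))) ∧
       (∀ t ∈ Icc (x (i - 1)) (x i), L i (Linv i t) = t) ∧
       (∀ u ∈ Icc (x (s (γ i))) (x (e (γ i))), Linv i (L i u) = u)))
    -- a is Lipschitz with constant La, fixing the interpolation values over domain endpoints
    (La : ℝ) (hLa0 : 0 ≤ La)
    (ha : ∀ u v : ℝ, |a u - a v| ≤ La * |u - v|)
    (hafix : ∀ k, 1 ≤ k → k ≤ l → a (y (s k)) = y (s k) ∧ a (y (e k)) = y (e k))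
    -- b i is Lipschitz on Ĩ_(γ i)
    (hb : ∀ i, 1 ≤ i → i ≤ n → ∃ K : ℝ, 0 ≤ K ∧
      ∀ u ∈ Icc (x (s (γ i))) (x (e (γ i))),
      ∀ v ∈ Icc (x (s (γ i))) (x (e (γ i))), |b i u - b i v| ≤ K * |u - v|)
    -- sfun i is a contraction on I_i with sup_{I_i} |sfun i| · La < 1
    (hscon : ∀ i, 1 ≤ i → i ≤ n → ∃ c : ℝ, 0 ≤ c ∧ c < 1 ∧
      ∀ u ∈ Icc (x (i - 1)) (x i), ∀ v ∈ Icc (x (i - 1)) (x i),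
        |sfun i u - sfun i v| ≤ c * |u - v|)
    (hsLa : ∀ i, 1 ≤ i → i ≤ n → ∃ sb : ℝ,
      (∀ u ∈ Icc (x (i - 1)) (x i), |sfun i u| ≤ sb) ∧ sb * La < 1)
    -- matching conditions: F_{i,k}(x_α, y_α) = y_β whenever L_{i,k}(x_α) = x_β
    (hmatch : ∀ i, 1 ≤ i → i ≤ n → ∀ α ∈ ({s (γ i), e (γ i)} : Set ℕ),
      ∀ β ∈ ({i - 1, i} : Set ℕ), L i (x α) = x β →
        sfun i (x β) * a (y α) + b i (x α) = y β) :
    -- conclusion: T is well defined on C(I) and is a contraction there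
    ∃ T : (ℝ → ℝ) → (ℝ → ℝ),
      (∀ φ : ℝ → ℝ,
        (ContinuousOn φ (Icc (x 0) (x n)) ∧ ∀ i ≤ n, φ (x i) = y i) →
        ((∀ i, 1 ≤ i → i ≤ n → ∀ t ∈ Icc (x (i - 1)) (x i),
            T φ t = sfun i (L i (Linv i t)) * a (φ (Linv i t)) + b i (Linv i t)) ∧
         (ContinuousOn (T φ) (Icc (x 0) (x n)) ∧ ∀ i ≤ n, T φ (x i) = y i))) ∧
      (∃ c : ℝ, 0 ≤ c ∧ c < 1 ∧ ∀ φ ψ : ℝ → ℝ,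
        (ContinuousOn φ (Icc (x 0) (x n)) ∧ ∀ i ≤ n, φ (x i) = y i) →
        (ContinuousOn ψ (Icc (x 0) (x n)) ∧ ∀ i ≤ n, ψ (x i) = y i) →
        ∀ t ∈ Icc (x 0) (x n),
          |T φ t - T ψ t| ≤
            c * sSup {d : ℝ | ∃ u ∈ Icc (x 0) (x n), d = |φ u - ψ u|}) := by
  classical
  -- monotonicity of the knots
  have hmono : ∀ p q : ℕ, p ≤ q → q ≤ n → x p ≤ x q := by
    intro p q hpq hqn
    induction q, hpq using Nat.le_induction with
    | base => exact le_rfl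
    | succ q hq ih =>
      exact le_trans (ih (by omega)) (le_of_lt (hx q (by omega)))
  have hsmono : ∀ p q : ℕ, p < q → q ≤ n → x p < x q := by
    intro p q hpq hqn
    have h1 : x (q - 1) < x (q - 1 + 1) := hx (q - 1) (by omega)
    have h2 : q - 1 + 1 = q := by omega
    rw [h2] at h1
    exact lt_of_le_of_lt (hmono p (q - 1) (by omega) (by omega)) h1
  -- index arithmetic for domains
  have hdom : ∀ i, 1 ≤ i → i ≤ n → s (γ i) < e (γ i) ∧ e (γ i) ≤ n := by
    intro i h1 h2
    have hk := hγ i h1 h2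
    have := hse (γ i) hk.1 hk.2
    omega
  have hsubI : ∀ i, 1 ≤ i → i ≤ n →
      Icc (x (s (γ i))) (x (e (γ i))) ⊆ Icc (x 0) (x n) := by
    intro i h1 h2 u hu
    have hd := hdom i h1 h2
    exact ⟨le_trans (hmono 0 (s (γ i)) (by omega) (by omega)) hu.1,
      le_trans hu.2 (hmono (e (γ i)) n (by omega) le_rfl)⟩
  have hIsubI : ∀ i, 1 ≤ i → i ≤ n → Icc (x (i - 1)) (x i) ⊆ Icc (x 0) (x n) := by
    intro i h1 h2 t ht
    exact ⟨le_trans (hmono 0 (i - 1) (by omega) (by omega)) ht.1,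
      le_trans ht.2 (hmono i n h2 le_rfl)⟩
  have hsmem : ∀ i, 1 ≤ i → i ≤ n →
      x (s (γ i)) ∈ Icc (x (s (γ i))) (x (e (γ i))) := by
    intro i h1 h2
    have hd := hdom i h1 h2
    exact ⟨le_rfl, hmono _ _ (by omega) (by omega)⟩
  have hemem : ∀ i, 1 ≤ i → i ≤ n →
      x (e (γ i)) ∈ Icc (x (s (γ i))) (x (e (γ i))) := by
    intro i h1 h2
    have hd := hdom i h1 h2
    exact ⟨hmono _ _ (by omega) (by omega), le_rfl⟩
  -- the index function
  obtain ⟨ind, hind1, hindn, hindmem⟩ : ∃ ind : ℝ → ℕ, (∀ t, 1 ≤ ind t) ∧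
      (∀ t, ind t ≤ n) ∧
      (∀ t ∈ Icc (x 0) (x n), t ∈ Icc (x (ind t - 1)) (x (ind t))) := by
    have hex : ∀ t : ℝ, ∃ m : ℕ, t ≤ x (m + 1) ∨ n ≤ m + 1 :=
      fun t => ⟨n - 1, Or.inr (by omega)⟩
    refine ⟨fun t => Nat.find (hex t) + 1, fun t => Nat.succ_le_succ (Nat.zero_le _), ?_, ?_⟩
    · intro t
      show Nat.find (hex t) + 1 ≤ n
      have : Nat.find (hex t) ≤ n - 1 := Nat.find_le (Or.inr (by omega))
      omega
    · intro t ht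
      show t ∈ Icc (x (Nat.find (hex t) + 1 - 1)) (x (Nat.find (hex t) + 1))
      have hspec := Nat.find_spec (hex t)
      have hle : Nat.find (hex t) ≤ n - 1 := Nat.find_le (Or.inr (by omega))
      constructor
      · simp only [Nat.add_sub_cancel]
        by_cases h0 : Nat.find (hex t) = 0
        · rw [h0]; exact ht.1
        · have hmin := Nat.find_min (hex t) (m := Nat.find (hex t) - 1) (by omega)
          push_neg at hmin
          have h2 : Nat.find (hex t) - 1 + 1 = Nat.find (hex t) := by omega
          rw [h2] at hmin
          exact le_of_lt hmin.1
      · rcases hspec with h | h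
        · exact h
        · have : Nat.find (hex t) + 1 = n := by omega
          rw [this]; exact ht.2
  -- the building blocks of the operator
  obtain ⟨G, hG⟩ : ∃ G : (ℝ → ℝ) → ℕ → ℝ → ℝ, ∀ φ i t,
      G φ i t = sfun i (L i (Linv i t)) * a (φ (Linv i t)) + b i (Linv i t) :=
    ⟨_, fun _ _ _ => rfl⟩
  -- value of each piece at the knots (uses the matching conditions)
  have hknot : ∀ φ : ℝ → ℝ, (∀ j ≤ n, φ (x j) = y j) → ∀ i, 1 ≤ i → i ≤ n →
      ∀ m : ℕ, (m = i - 1 ∨ m = i) → G φ i (x m) = y m := by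
    intro φ hφ i h1 h2 m hm
    have hd := hdom i h1 h2
    have hmem : x m ∈ ({x (i - 1), x i} : Set ℝ) := by
      rcases hm with h | h <;> subst h <;> simp
    rw [← hLend i h1 h2] at hmem
    obtain ⟨u, hu, hLu⟩ := hmem
    obtain ⟨α, hαse, hxα⟩ : ∃ α : ℕ, (α = s (γ i) ∨ α = e (γ i)) ∧ u = x α := by
      rcases hu with h | h
      · exact ⟨s (γ i), Or.inl rfl, h⟩
      · exact ⟨e (γ i), Or.inr rfl, h⟩
    subst hxα
    have hαn : α ≤ n := by rcases hαse with h | h <;> omega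
    have humem : x α ∈ Icc (x (s (γ i))) (x (e (γ i))) := by
      rcases hαse with h | h <;> subst h
      · exact hsmem i h1 h2
      · exact hemem i h1 h2
    have hLinvm : Linv i (x m) = x α := by
      rw [← hLu]; exact (hLinv i h1 h2).2.2 _ humem
    rw [hG, hLinvm, hLu, hφ α hαn]
    refine hmatch i h1 h2 α ?_ m ?_ hLu
    · rcases hαse with h | h <;> subst h <;> simp
    · rcases hm with h | h <;> subst h <;> simp
  -- the operator agrees with the right piece on each region
  have hTf : ∀ φ : ℝ → ℝ, (∀ j ≤ n, φ (x j) = y j) → ∀ i, 1 ≤ i → i ≤ n →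
      ∀ t ∈ Icc (x (i - 1)) (x i), G φ (ind t) t = G φ i t := by
    intro φ hφ i h1 h2 t ht
    have htI : t ∈ Icc (x 0) (x n) := hIsubI i h1 h2 ht
    have htj := hindmem t htI
    have hj1 := hind1 t
    have hjn := hindn t
    set j := ind t with hjdef
    clear_value j
    rcases lt_trichotomy j i with h | h | h
    · have hxj : x j ≤ x (i - 1) := hmono _ _ (by omega) (by omega)
      have htxj : t = x j := le_antisymm htj.2 (le_trans hxj ht.1)
      have hji : j = i - 1 := by
        by_contra hc
        have hlt : x j < x (i - 1) := hsmono _ _ (by omega) (by omega)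
        rw [htxj] at ht
        linarith [ht.1]
      rw [htxj, hknot φ hφ j hj1 hjn j (Or.inr rfl),
        hknot φ hφ i h1 h2 j (Or.inl hji)]
    · rw [h]
    · have hxi : x i ≤ x (j - 1) := hmono _ _ (by omega) (by omega)
      have htxi : t = x i := le_antisymm ht.2 (le_trans hxi htj.1)
      have hji : i = j - 1 := by
        by_contra hc
        have hlt : x i < x (j - 1) := hsmono _ _ (by omega) (by omega)
        rw [htxi] at htj
        linarith [htj.1]
      rw [htxi, hknot φ hφ j hj1 hjn i (Or.inl hji),
        hknot φ hφ i h1 h2 i (Or.inr rfl)]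
  -- interpolation at the knots
  have hTknot : ∀ φ : ℝ → ℝ, (∀ j ≤ n, φ (x j) = y j) → ∀ m ≤ n,
      G φ (ind (x m)) (x m) = y m := by
    intro φ hφ m hm
    have hj1 := hind1 (x m)
    have hjn := hindn (x m)
    have hmI : x m ∈ Icc (x 0) (x n) := ⟨hmono 0 m (by omega) hm, hmono m n hm le_rfl⟩
    have htj := hindmem (x m) hmI
    have hmj : m = ind (x m) - 1 ∨ m = ind (x m) := by
      by_contra hc
      push_neg at hc
      rcases lt_trichotomy m (ind (x m)) with h | h | h
      · have : x m < x (ind (x m) - 1) := hsmono _ _ (by omega) (by omega)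
        linarith [htj.1]
      · exact hc.2 h
      · have : x (ind (x m)) < x m := hsmono _ _ (by omega) hm
        linarith [htj.2]
    exact hknot φ hφ (ind (x m)) hj1 hjn m hmj
  -- continuity of each piece
  have hggcont : ∀ φ : ℝ → ℝ, ContinuousOn φ (Icc (x 0) (x n)) → ∀ i, 1 ≤ i → i ≤ n →
      ContinuousOn (G φ i) (Icc (x (i - 1)) (x i)) := by
    intro φ hφ i h1 h2
    obtain ⟨hLinvmap, hLIi, hILi⟩ := hLinv i h1 h2
    have hLcontA : ContinuousOn (L i) (Icc (x (s (γ i))) (x (e (γ i)))) := by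
      obtain ⟨c, hc0, hc1, hc⟩ := hLcon i h1 h2
      refine (LipschitzOnWith.of_dist_le_mul (K := Real.toNNReal c) ?_).continuousOn
      intro u hu v hv
      rw [Real.dist_eq, Real.dist_eq, Real.coe_toNNReal c hc0]
      exact hc u hu v hv
    have hLinvC : ContinuousOn (Linv i) (Icc (x (i - 1)) (x i)) :=
      rifs_inv_cont hLcontA (hLmap i h1 h2) hLinvmap hLIi hILi
    have hacont : Continuous a := by
      refine (LipschitzWith.of_dist_le_mul (K := Real.toNNReal La) ?_).continuous
      intro u v
      rw [Real.dist_eq, Real.dist_eq, Real.coe_toNNReal La hLa0]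
      exact ha u v
    have hbcont : ContinuousOn (b i) (Icc (x (s (γ i))) (x (e (γ i)))) := by
      obtain ⟨K, hK0, hK⟩ := hb i h1 h2
      refine (LipschitzOnWith.of_dist_le_mul (K := Real.toNNReal K) ?_).continuousOn
      intro u hu v hv
      rw [Real.dist_eq, Real.dist_eq, Real.coe_toNNReal K hK0]
      exact hK u hu v hv
    have hscont : ContinuousOn (sfun i) (Icc (x (i - 1)) (x i)) := by
      obtain ⟨c, hc0, hc1, hc⟩ := hscon i h1 h2
      refine (LipschitzOnWith.of_dist_le_mul (K := Real.toNNReal c) ?_).continuousOn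
      intro u hu v hv
      rw [Real.dist_eq, Real.dist_eq, Real.coe_toNNReal c hc0]
      exact hc u hu v hv
    have hLLinv : ContinuousOn (fun t => L i (Linv i t)) (Icc (x (i - 1)) (x i)) :=
      hLcontA.comp hLinvC hLinvmap
    have heq : ∀ t, G φ i t = sfun i (L i (Linv i t)) * a (φ (Linv i t)) + b i (Linv i t) :=
      hG φ i
    have : ContinuousOn
        (fun t => sfun i (L i (Linv i t)) * a (φ (Linv i t)) + b i (Linv i t))
        (Icc (x (i - 1)) (x i)) := by
      apply ContinuousOn.add
      · apply ContinuousOn.mul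
        · exact hscont.comp hLLinv (fun t ht => hLmap i h1 h2 (hLinvmap ht))
        · exact hacont.comp_continuousOn
            (hφ.comp hLinvC (fun t ht => hsubI i h1 h2 (hLinvmap ht)))
      · exact hbcont.comp hLinvC hLinvmap
    exact this.congr (fun t _ => heq t)
  -- continuity of the glued operator
  have hTcont : ∀ φ : ℝ → ℝ, ContinuousOn φ (Icc (x 0) (x n)) →
      (∀ j ≤ n, φ (x j) = y j) →
      ContinuousOn (fun t => G φ (ind t) t) (Icc (x 0) (x n)) := by
    intro φ hφc hφv
    have hpiece : ∀ i, 1 ≤ i → i ≤ n →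
        ContinuousOn (fun t => G φ (ind t) t) (Icc (x (i - 1)) (x i)) := by
      intro i h1 h2
      exact (hggcont φ hφc i h1 h2).congr (fun t ht => hTf φ hφv i h1 h2 t ht)
    have main : ∀ i, 1 ≤ i → i ≤ n →
        ContinuousOn (fun t => G φ (ind t) t) (Icc (x 0) (x i)) := by
      intro i h1 h2
      induction i with
      | zero => omega
      | succ m ih =>
        by_cases hm : m = 0
        · subst hm; simpa using hpiece 1 le_rfl h2
        · have hcu : Icc (x 0) (x m) ∪ Icc (x m) (x (m + 1)) = Icc (x 0) (x (m + 1)) :=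
            Icc_union_Icc_eq_Icc (hmono 0 m (by omega) (by omega))
              (le_of_lt (hx m (by omega)))
          rw [← hcu]
          refine rifs_glue isClosed_Icc isClosed_Icc (ih (by omega) (by omega)) ?_
          simpa using hpiece (m + 1) (by omega) h2
    exact main n hn le_rfl
  -- the contraction constant
  have hcsel : ∀ i : ℕ, ∃ cb : ℝ, 0 ≤ cb ∧ cb < 1 ∧
      (1 ≤ i → i ≤ n → ∀ u ∈ Icc (x (i - 1)) (x i), |sfun i u| * La ≤ cb) := by
    intro i
    by_cases h : 1 ≤ i ∧ i ≤ n
    · obtain ⟨sb, hsb, hsbLa⟩ := hsLa i h.1 h.2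
      refine ⟨max (sb * La) 0, le_max_right _ _, max_lt hsbLa zero_lt_one, ?_⟩
      intro _ _ u hu
      exact le_trans (mul_le_mul_of_nonneg_right (hsb u hu) hLa0) (le_max_left _ _)
    · exact ⟨0, le_rfl, zero_lt_one, fun h1 h2 => absurd ⟨h1, h2⟩ h⟩
  choose cf hcf0 hcf1 hcfb using hcsel
  have hne : (Finset.Icc 1 n).Nonempty := ⟨1, Finset.mem_Icc.mpr ⟨le_rfl, hn⟩⟩
  set C := (Finset.Icc 1 n).sup' hne cf with hC
  have hC0 : 0 ≤ C :=
    le_trans (hcf0 1) (Finset.le_sup' cf (Finset.mem_Icc.mpr ⟨le_rfl, hn⟩))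
  have hC1 : C < 1 := (Finset.sup'_lt_iff hne).mpr (fun i _ => hcf1 i)
  have hCge : ∀ i, 1 ≤ i → i ≤ n → cf i ≤ C :=
    fun i h1 h2 => Finset.le_sup' cf (Finset.mem_Icc.mpr ⟨h1, h2⟩)
  -- put it all together
  refine ⟨fun φ t => G φ (ind t) t, ?_, C, hC0, hC1, ?_⟩
  · rintro φ ⟨hφc, hφv⟩
    refine ⟨?_, hTcont φ hφc hφv, fun m hm => hTknot φ hφv m hm⟩
    intro i h1 h2 t ht
    show G φ (ind t) t = sfun i (L i (Linv i t)) * a (φ (Linv i t)) + b i (Linv i t)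
    rw [hTf φ hφv i h1 h2 t ht, hG]
  · rintro φ ψ ⟨hφc, hφv⟩ ⟨hψc, hψv⟩ t ht
    show |G φ (ind t) t - G ψ (ind t) t| ≤ C * sSup {d : ℝ | ∃ u ∈ Icc (x 0) (x n), d = |φ u - ψ u|}
    have hj1 := hind1 t
    have hjn := hindn t
    have htj := hindmem t ht
    obtain ⟨hLinvmap, hLIi, hILi⟩ := hLinv (ind t) hj1 hjn
    set j := ind t with hjdef
    set u := Linv j t with hu
    have humem : u ∈ Icc (x (s (γ j))) (x (e (γ j))) := hLinvmap htj
    have huI : u ∈ Icc (x 0) (x n) := hsubI j hj1 hjn humem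
    have hw : L j u ∈ Icc (x (j - 1)) (x j) := hLmap j hj1 hjn humem
    set D := {d : ℝ | ∃ v ∈ Icc (x 0) (x n), d = |φ v - ψ v|} with hD
    have hDimg : D = (fun v => |φ v - ψ v|) '' Icc (x 0) (x n) := by
      ext d; simp [hD, eq_comm]
    have hbdd : BddAbove D := by
      rw [hDimg]
      exact (isCompact_Icc.image_of_continuousOn ((hφc.sub hψc).abs)).bddAbove
    have hsup_ge : |φ u - ψ u| ≤ sSup D :=
      le_csSup hbdd ⟨u, huI, rfl⟩
    have hsup0 : 0 ≤ sSup D := by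
      have hx0 : x 0 ∈ Icc (x 0) (x n) := ⟨le_rfl, hmono 0 n (by omega) le_rfl⟩
      exact le_trans (abs_nonneg _) (le_csSup hbdd ⟨x 0, hx0, rfl⟩)
    have hdiff : G φ j t - G ψ j t = sfun j (L j u) * (a (φ u) - a (ψ u)) := by
      rw [hG, hG]; ring
    calc |G φ j t - G ψ j t|
        = |sfun j (L j u)| * |a (φ u) - a (ψ u)| := by rw [hdiff, abs_mul]
      _ ≤ |sfun j (L j u)| * (La * |φ u - ψ u|) :=
          mul_le_mul_of_nonneg_left (ha _ _) (abs_nonneg _)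
      _ = (|sfun j (L j u)| * La) * |φ u - ψ u| := by ring
      _ ≤ cf j * |φ u - ψ u| :=
          mul_le_mul_of_nonneg_right (hcfb j hj1 hjn _ hw) (abs_nonneg _)
      _ ≤ C * sSup D :=
          mul_le_mul (hCge j hj1 hjn) hsup_ge (abs_nonneg _) hC0
end

section
/- (Theorem 1) In the RIFS interpolation setup with matching conditions, there exists a unique continuous function f : I → R such that f(x_i) = y_i for i = 0, 1, …, n and, for every i = 1, …, n (with k = γ(i)) and every x ∈ I_i, f(x) = s_{i,k}(x) a(f(L_{i,k}^{−1}(x))) + b_{i,k}(L_{i,k}^{−1}(x)). Consequently the graph Gr(f) of f satisfies the invariance relation Gr(f) ∩ (I_i × R) = W_{i,k}({(x, f(x)) : x ∈ Ĩ_k}) for each i, where W_{i,k}(x,y) = (L_{i,k}(x), F_{i,k}(x,y)); i.e., Gr(f) is the attractor of the recurrent iterated function system {I × H; M; W_{1,γ(1)}, …, W_{n,γ(n)}} and interpolates the data set P. -/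
open Set

namespace RIFSaux

variable {n : ℕ} {x : ℕ → ℝ}

lemma xle (hx : ∀ i < n, x i < x (i + 1)) : ∀ {i j : ℕ}, i ≤ j → j ≤ n → x i ≤ x j := by
  intro i j hij hj
  induction j with
  | zero => simp [Nat.le_zero.mp hij]
  | succ m ih =>
    rcases Nat.eq_or_lt_of_le hij with h | h
    · rw [h]
    · exact le_trans (ih (by omega) (by omega)) (le_of_lt (hx m (by omega)))

lemma xlt (hx : ∀ i < n, x i < x (i + 1)) : ∀ {i j : ℕ}, i < j → j ≤ n → x i < x j := by
  intro i j hij hj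
  rcases Nat.exists_eq_add_of_lt hij with ⟨m, rfl⟩
  calc x i ≤ x (i + m) := xle hx (by omega) (by omega)
    _ < x (i + m + 1) := hx _ (by omega)

/-- index of the region containing `t`. -/
noncomputable def idx (n : ℕ) (x : ℕ → ℝ) (t : ℝ) : ℕ :=
  min n (Nat.findGreatest (fun j => x j ≤ t) n + 1)

lemma idx_spec (hn : 0 < n) (hx : ∀ i < n, x i < x (i + 1)) {t : ℝ}
    (ht : t ∈ Icc (x 0) (x n)) :
    1 ≤ idx n x t ∧ idx n x t ≤ n ∧ t ∈ Icc (x (idx n x t - 1)) (x (idx n x t)) := by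
  classical
  set m := Nat.findGreatest (fun j => x j ≤ t) n with hm
  have hm0 : x m ≤ t :=
    Nat.findGreatest_spec (P := fun j => x j ≤ t) (Nat.zero_le n) ht.1
  have hmn : m ≤ n := Nat.findGreatest_le n
  have h1 : 1 ≤ idx n x t := by
    unfold idx; omega
  rcases Nat.lt_or_ge m n with h | h
  · have hidx : idx n x t = m + 1 := by unfold idx; omega
    have hgt : ¬ (x (m + 1) ≤ t) :=
      Nat.findGreatest_is_greatest (P := fun j => x j ≤ t) (n := n) (k := m + 1) (by omega) (by omega)
    refine ⟨h1, by omega, ?_, ?_⟩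
    · rw [hidx]; simpa using hm0
    · rw [hidx]; exact le_of_lt (lt_of_not_ge hgt)
  · have hmn' : m = n := le_antisymm hmn h
    have hidx : idx n x t = n := by unfold idx; omega
    refine ⟨h1, by omega, ?_, ?_⟩
    · rw [hidx]
      calc x (n - 1) ≤ x n := xle hx (by omega) le_rfl
        _ ≤ t := hmn' ▸ hm0
    · rw [hidx]; exact ht.2

lemma idx_subset (hx : ∀ i < n, x i < x (i + 1)) {i : ℕ} (h1 : 1 ≤ i) (h2 : i ≤ n) :
    Icc (x (i - 1)) (x i) ⊆ Icc (x 0) (x n) :=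
  Icc_subset_Icc (xle hx (Nat.zero_le _) (by omega)) (xle hx h2 le_rfl)

end RIFSaux

namespace RIFSaux

variable {n l : ℕ} {x y : ℝ → ℝ}

noncomputable def formula (Linv b sfun : ℕ → ℝ → ℝ) (a : ℝ → ℝ) (g : ℝ → ℝ)
    (i : ℕ) (t : ℝ) : ℝ :=
  sfun i t * a (g (Linv i t)) + b i (Linv i t)

section main

variable {n l : ℕ} {x y : ℕ → ℝ} {s e γ : ℕ → ℕ} {L Linv b sfun : ℕ → ℝ → ℝ} {a : ℝ → ℝ}

lemma knot (hx : ∀ i < n, x i < x (i + 1))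
    (hse : ∀ k, 1 ≤ k → k ≤ l → s k + 2 ≤ e k ∧ e k ≤ n)
    (hγ : ∀ i, 1 ≤ i → i ≤ n → 1 ≤ γ i ∧ γ i ≤ l)
    (hLend : ∀ i, 1 ≤ i → i ≤ n →
      (L i) '' {x (s (γ i)), x (e (γ i))} = {x (i - 1), x i})
    (hLinv : ∀ i, 1 ≤ i → i ≤ n →
      (MapsTo (Linv i) (Icc (x (i - 1)) (x i)) (Icc (x (s (γ i))) (x (e (γ i)))) ∧
       (∀ t ∈ Icc (x (i - 1)) (x i), L i (Linv i t) = t) ∧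
       (∀ u ∈ Icc (x (s (γ i))) (x (e (γ i))), Linv i (L i u) = u)))
    (hmatch : ∀ i, 1 ≤ i → i ≤ n → ∀ α ∈ ({s (γ i), e (γ i)} : Set ℕ),
      ∀ β ∈ ({i - 1, i} : Set ℕ), L i (x α) = x β →
        sfun i (x β) * a (y α) + b i (x α) = y β)
    (g : ℝ → ℝ) (hg : ∀ j ≤ n, g (x j) = y j)
    {i β : ℕ} (h1 : 1 ≤ i) (h2 : i ≤ n) (hβ : β = i - 1 ∨ β = i) :
    formula Linv b sfun a g i (x β) = y β := by
  obtain ⟨hk1, hk2⟩ := hγ i h1 h2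
  obtain ⟨he1, he2⟩ := hse (γ i) hk1 hk2
  have hxse : x (s (γ i)) ≤ x (e (γ i)) := xle hx (by omega) he2
  have hmem : x β ∈ ({x (i - 1), x i} : Set ℝ) := by
    rcases hβ with h | h <;> simp [h]
  rw [← hLend i h1 h2] at hmem
  obtain ⟨w, hw, hwL⟩ := hmem
  have : ∃ α : ℕ, α ∈ ({s (γ i), e (γ i)} : Set ℕ) ∧ w = x α := by
    rcases hw with h | h
    · exact ⟨s (γ i), by simp, h⟩
    · exact ⟨e (γ i), by simp [Set.mem_insert_iff], h⟩
  obtain ⟨α, hα, rfl⟩ := this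
  have hα' : α = s (γ i) ∨ α = e (γ i) := by
    simpa [Set.mem_insert_iff] using hα
  have hαIcc : x α ∈ Icc (x (s (γ i))) (x (e (γ i))) := by
    rcases hα' with rfl | rfl
    · exact ⟨le_rfl, hxse⟩
    · exact ⟨hxse, le_rfl⟩
  have hαn : α ≤ n := by rcases hα' with rfl | rfl <;> omega
  have hinv : Linv i (x β) = x α := by
    rw [← hwL]; exact (hLinv i h1 h2).2.2 _ hαIcc
  have hβmem : β ∈ ({i - 1, i} : Set ℕ) := by
    rcases hβ with h | h <;> simp [h]
  unfold formula
  rw [hinv, hg α hαn]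
  exact hmatch i h1 h2 α hα β hβmem hwL


lemma agree (hx : ∀ i < n, x i < x (i + 1))
    (hse : ∀ k, 1 ≤ k → k ≤ l → s k + 2 ≤ e k ∧ e k ≤ n)
    (hγ : ∀ i, 1 ≤ i → i ≤ n → 1 ≤ γ i ∧ γ i ≤ l)
    (hLend : ∀ i, 1 ≤ i → i ≤ n →
      (L i) '' {x (s (γ i)), x (e (γ i))} = {x (i - 1), x i})
    (hLinv : ∀ i, 1 ≤ i → i ≤ n →
      (MapsTo (Linv i) (Icc (x (i - 1)) (x i)) (Icc (x (s (γ i))) (x (e (γ i)))) ∧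
       (∀ t ∈ Icc (x (i - 1)) (x i), L i (Linv i t) = t) ∧
       (∀ u ∈ Icc (x (s (γ i))) (x (e (γ i))), Linv i (L i u) = u)))
    (hmatch : ∀ i, 1 ≤ i → i ≤ n → ∀ α ∈ ({s (γ i), e (γ i)} : Set ℕ),
      ∀ β ∈ ({i - 1, i} : Set ℕ), L i (x α) = x β →
        sfun i (x β) * a (y α) + b i (x α) = y β)
    (g : ℝ → ℝ) (hg : ∀ j ≤ n, g (x j) = y j) :
    ∀ {i i' : ℕ}, 1 ≤ i → i ≤ n → 1 ≤ i' → i' ≤ n → ∀ {t : ℝ},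
      t ∈ Icc (x (i - 1)) (x i) → t ∈ Icc (x (i' - 1)) (x i') →
      formula Linv b sfun a g i t = formula Linv b sfun a g i' t := by
  have key : ∀ {i i' : ℕ}, i < i' → 1 ≤ i → i ≤ n → i' ≤ n → ∀ {t : ℝ},
      t ∈ Icc (x (i - 1)) (x i) → t ∈ Icc (x (i' - 1)) (x i') →
      formula Linv b sfun a g i t = formula Linv b sfun a g i' t := by
    intro i i' hii h1 h2 h2' t ht ht'
    have hle : x (i' - 1) ≤ x i := le_trans ht'.1 ht.2
    have hi'eq : i' = i + 1 := by
      by_contra hne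
      have : i < i' - 1 := by omega
      exact absurd hle (not_le.mpr (xlt hx this (by omega)))
    have hteq : t = x i := by
      have : x i ≤ t := by
        have : i' - 1 = i := by omega
        exact this ▸ ht'.1
      exact le_antisymm ht.2 this
    subst hteq
    rw [knot hx hse hγ hLend hLinv hmatch g hg h1 h2 (Or.inr rfl)]
    have : i = i' - 1 := by omega
    rw [this]
    exact (knot hx hse hγ hLend hLinv hmatch g hg (by omega) h2' (Or.inl rfl)).symm
  intro i i' h1 h2 h1' h2' t ht ht'
  rcases lt_trichotomy i i' with h | h | h
  · exact key h h1 h2 h2' ht ht'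
  · rw [h]
  · exact (key h h1' h2' h2 ht' ht).symm


lemma contOn_of_lip {f : ℝ → ℝ} {S : Set ℝ} {c : ℝ}
    (h : ∀ u ∈ S, ∀ v ∈ S, |f u - f v| ≤ c * |u - v|) : ContinuousOn f S := by
  refine (LipschitzOnWith.of_dist_le' (K := c) ?_).continuousOn
  intro u hu v hv
  rw [Real.dist_eq, Real.dist_eq]
  exact h u hu v hv

lemma cont_of_lip {f : ℝ → ℝ} {c : ℝ}
    (h : ∀ u v : ℝ, |f u - f v| ≤ c * |u - v|) : Continuous f := by
  refine (LipschitzWith.of_dist_le' (K := c) ?_).continuous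
  intro u v
  rw [Real.dist_eq, Real.dist_eq]
  exact h u v

/-- Continuity of the inverse homeomorphism `Linv i` on `I_i`. -/
lemma Linv_contOn {A B : Set ℝ} {F G : ℝ → ℝ}
    (hAcomp : IsCompact A) (hF : ContinuousOn F A) (hFmap : MapsTo F A B)
    (hGmap : MapsTo G B A) (hFG : ∀ t ∈ B, F (G t) = t) (hGF : ∀ u ∈ A, G (F u) = u) :
    ContinuousOn G B := by
  haveI : CompactSpace A := isCompact_iff_compactSpace.mp hAcomp
  let eqv : A ≃ B :=
    { toFun := fun u => ⟨F u.1, hFmap u.2⟩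
      invFun := fun t => ⟨G t.1, hGmap t.2⟩
      left_inv := fun u => Subtype.ext (hGF u.1 u.2)
      right_inv := fun t => Subtype.ext (hFG t.1 t.2) }
  have hcont : Continuous (fun u : A => (⟨F u.1, hFmap u.2⟩ : B)) :=
    (hF.restrict).subtype_mk _
  have hsymm : Continuous (eqv.symm : B → A) :=
    Continuous.continuous_symm_of_equiv_compact_to_t2 (f := eqv) hcont
  rw [continuousOn_iff_continuous_restrict]
  have : B.restrict G = fun t : B => ((eqv.symm t : A) : ℝ) := by
    funext t; rfl
  show Continuous (fun t : B => ((eqv.symm t : A) : ℝ))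
  exact continuous_subtype_val.comp hsymm


lemma contOn_union_closed {f : ℝ → ℝ} {S T : Set ℝ} (hS : IsClosed S) (hT : IsClosed T)
    (hfS : ContinuousOn f S) (hfT : ContinuousOn f T) : ContinuousOn f (S ∪ T) := by
  intro p hp
  have h1 : ContinuousWithinAt f S p := by
    by_cases h : p ∈ S
    · exact hfS p h
    · exact continuousWithinAt_of_notMem_closure (by rwa [hS.closure_eq])
  have h2 : ContinuousWithinAt f T p := by
    by_cases h : p ∈ T
    · exact hfT p h
    · exact continuousWithinAt_of_notMem_closure (by rwa [hT.closure_eq])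
  exact h1.union h2

lemma glue (hn : 0 < n) (hx : ∀ i < n, x i < x (i + 1)) {f : ℝ → ℝ}
    (hpiece : ∀ i, 1 ≤ i → i ≤ n → ContinuousOn f (Icc (x (i - 1)) (x i))) :
    ContinuousOn f (Icc (x 0) (x n)) := by
  have key : ∀ m, 1 ≤ m → m ≤ n → ContinuousOn f (Icc (x 0) (x m)) := by
    intro m
    induction m with
    | zero => omega
    | succ m ih =>
      intro _ hm
      rcases Nat.eq_zero_or_pos m with rfl | hm0
      · simpa using hpiece 1 le_rfl (by omega)
      · have hu : Icc (x 0) (x m) ∪ Icc (x m) (x (m + 1)) = Icc (x 0) (x (m + 1)) :=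
          Icc_union_Icc_eq_Icc (xle hx (Nat.zero_le m) (by omega)) (le_of_lt (hx m (by omega)))
        rw [← hu]
        have hp := hpiece (m + 1) (by omega) hm
        simp only [Nat.add_sub_cancel] at hp
        exact contOn_union_closed isClosed_Icc isClosed_Icc (ih (by omega) (by omega)) hp
  exact key n hn le_rfl


lemma Tfun_eq (hn : 0 < n) (hx : ∀ i < n, x i < x (i + 1))
    (hse : ∀ k, 1 ≤ k → k ≤ l → s k + 2 ≤ e k ∧ e k ≤ n)
    (hγ : ∀ i, 1 ≤ i → i ≤ n → 1 ≤ γ i ∧ γ i ≤ l)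
    (hLend : ∀ i, 1 ≤ i → i ≤ n →
      (L i) '' {x (s (γ i)), x (e (γ i))} = {x (i - 1), x i})
    (hLinv : ∀ i, 1 ≤ i → i ≤ n →
      (MapsTo (Linv i) (Icc (x (i - 1)) (x i)) (Icc (x (s (γ i))) (x (e (γ i)))) ∧
       (∀ t ∈ Icc (x (i - 1)) (x i), L i (Linv i t) = t) ∧
       (∀ u ∈ Icc (x (s (γ i))) (x (e (γ i))), Linv i (L i u) = u)))
    (hmatch : ∀ i, 1 ≤ i → i ≤ n → ∀ α ∈ ({s (γ i), e (γ i)} : Set ℕ),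
      ∀ β ∈ ({i - 1, i} : Set ℕ), L i (x α) = x β →
        sfun i (x β) * a (y α) + b i (x α) = y β)
    (g : ℝ → ℝ) (hg : ∀ j ≤ n, g (x j) = y j)
    {i : ℕ} (h1 : 1 ≤ i) (h2 : i ≤ n) {t : ℝ} (ht : t ∈ Icc (x (i - 1)) (x i)) :
    formula Linv b sfun a g (idx n x t) t = formula Linv b sfun a g i t := by
  have htI : t ∈ Icc (x 0) (x n) := idx_subset hx h1 h2 ht
  obtain ⟨j1, j2, hj⟩ := idx_spec hn hx htI
  exact agree hx hse hγ hLend hLinv hmatch g hg j1 j2 h1 h2 hj ht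


lemma formula_contOn (hx : ∀ i < n, x i < x (i + 1))
    (hse : ∀ k, 1 ≤ k → k ≤ l → s k + 2 ≤ e k ∧ e k ≤ n)
    (hγ : ∀ i, 1 ≤ i → i ≤ n → 1 ≤ γ i ∧ γ i ≤ l)
    (hLcon : ∀ i, 1 ≤ i → i ≤ n → ∃ c : ℝ, 0 ≤ c ∧ c < 1 ∧
      ∀ u ∈ Icc (x (s (γ i))) (x (e (γ i))),
      ∀ v ∈ Icc (x (s (γ i))) (x (e (γ i))), |L i u - L i v| ≤ c * |u - v|)
    (hLmap : ∀ i, 1 ≤ i → i ≤ n →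
      MapsTo (L i) (Icc (x (s (γ i))) (x (e (γ i)))) (Icc (x (i - 1)) (x i)))
    (hLinv : ∀ i, 1 ≤ i → i ≤ n →
      (MapsTo (Linv i) (Icc (x (i - 1)) (x i)) (Icc (x (s (γ i))) (x (e (γ i)))) ∧
       (∀ t ∈ Icc (x (i - 1)) (x i), L i (Linv i t) = t) ∧
       (∀ u ∈ Icc (x (s (γ i))) (x (e (γ i))), Linv i (L i u) = u)))
    {La : ℝ} (ha : ∀ u v : ℝ, |a u - a v| ≤ La * |u - v|)
    (hb : ∀ i, 1 ≤ i → i ≤ n → ∃ K : ℝ, 0 ≤ K ∧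
      ∀ u ∈ Icc (x (s (γ i))) (x (e (γ i))),
      ∀ v ∈ Icc (x (s (γ i))) (x (e (γ i))), |b i u - b i v| ≤ K * |u - v|)
    (hscon : ∀ i, 1 ≤ i → i ≤ n → ∃ c : ℝ, 0 ≤ c ∧ c < 1 ∧
      ∀ u ∈ Icc (x (i - 1)) (x i), ∀ v ∈ Icc (x (i - 1)) (x i),
        |sfun i u - sfun i v| ≤ c * |u - v|)
    (g : ℝ → ℝ) (hgc : Continuous g)
    {i : ℕ} (h1 : 1 ≤ i) (h2 : i ≤ n) :
    ContinuousOn (formula Linv b sfun a g i) (Icc (x (i - 1)) (x i)) := by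
  obtain ⟨cs, _, _, hcs⟩ := hscon i h1 h2
  obtain ⟨cL, _, _, hcL⟩ := hLcon i h1 h2
  obtain ⟨cb, _, hcb⟩ := hb i h1 h2
  obtain ⟨hLinvmap, hLG, hGL⟩ := hLinv i h1 h2
  have hsc : ContinuousOn (sfun i) (Icc (x (i - 1)) (x i)) := contOn_of_lip hcs
  have hLc : ContinuousOn (L i) (Icc (x (s (γ i))) (x (e (γ i)))) := contOn_of_lip hcL
  have hLinvc : ContinuousOn (Linv i) (Icc (x (i - 1)) (x i)) :=
    Linv_contOn isCompact_Icc hLc (hLmap i h1 h2) hLinvmap hLG hGL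
  have hac : Continuous a := cont_of_lip ha
  have hbc : ContinuousOn (b i) (Icc (x (s (γ i))) (x (e (γ i)))) := contOn_of_lip hcb
  exact (hsc.mul (hac.comp_continuousOn (hgc.comp_continuousOn hLinvc))).add
    (hbc.comp hLinvc hLinvmap)

end main

noncomputable def extIcc {x0 xn : ℝ} (h : x0 ≤ xn) (g : C(Icc x0 xn, ℝ)) : ℝ → ℝ :=
  fun t => g (projIcc x0 xn h t)

lemma extIcc_cont {x0 xn : ℝ} (h : x0 ≤ xn) (g : C(Icc x0 xn, ℝ)) :
    Continuous (extIcc h g) := g.continuous.comp continuous_projIcc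

lemma extIcc_of_mem {x0 xn : ℝ} (h : x0 ≤ xn) (g : C(Icc x0 xn, ℝ)) {t : ℝ}
    (ht : t ∈ Icc x0 xn) : extIcc h g t = g ⟨t, ht⟩ := by
  unfold extIcc; rw [projIcc_of_mem h ht]



end RIFSaux

open RIFSaux

/-- **Theorem 1.** In the RIFS interpolation setup with matching conditions, there is a unique
continuous function `f : I → ℝ` interpolating the data and satisfying
`f(x) = s_{i,k}(x) a(f(L_{i,k}⁻¹(x))) + b_{i,k}(L_{i,k}⁻¹(x))` on each region `I_i`;
moreover its graph satisfies the RIFS invariance relation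
`Gr(f) ∩ (I_i × ℝ) = W_{i,k}({(x, f(x)) : x ∈ Ĩ_k})`, i.e. `Gr(f)` is the attractor of the
recurrent iterated function system and interpolates the data set `P`. -/
theorem stmt2
    -- the data set P: x 0 < x 1 < … < x n, points (x i, y i)
    (n l : ℕ) (hn : 0 < n) (hl : 0 < l)
    (x y : ℕ → ℝ) (hx : ∀ i < n, x i < x (i + 1))
    -- domains Ĩ_k = [x (s k), x (e k)], with e k − s k ≥ 2
    (s e : ℕ → ℕ)
    (hse : ∀ k, 1 ≤ k → k ≤ l → s k + 2 ≤ e k ∧ e k ≤ n)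
    -- each region I_i is related to the domain Ĩ_(γ i)
    (γ : ℕ → ℕ) (hγ : ∀ i, 1 ≤ i → i ≤ n → 1 ≤ γ i ∧ γ i ≤ l)
    -- H is a (sufficiently large) interval containing all the y i
    (H0 H1 : ℝ) (hH01 : H0 ≤ H1) (hH : ∀ i ≤ n, y i ∈ Icc H0 H1)
    (L Linv b sfun : ℕ → ℝ → ℝ) (a : ℝ → ℝ)
    -- L i : Ĩ_(γ i) → I_i is a contraction homeomorphism mapping endpoints onto endpoints,
    -- with inverse Linv i
    (hLmap : ∀ i, 1 ≤ i → i ≤ n →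
      MapsTo (L i) (Icc (x (s (γ i))) (x (e (γ i)))) (Icc (x (i - 1)) (x i)))
    (hLend : ∀ i, 1 ≤ i → i ≤ n →
      (L i) '' {x (s (γ i)), x (e (γ i))} = {x (i - 1), x i})
    (hLcon : ∀ i, 1 ≤ i → i ≤ n → ∃ c : ℝ, 0 ≤ c ∧ c < 1 ∧
      ∀ u ∈ Icc (x (s (γ i))) (x (e (γ i))),
      ∀ v ∈ Icc (x (s (γ i))) (x (e (γ i))), |L i u - L i v| ≤ c * |u - v|)
    (hLinv : ∀ i, 1 ≤ i → i ≤ n →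
      (MapsTo (Linv i) (Icc (x (i - 1)) (x i)) (Icc (x (s (γ i))) (x (e (γ i)))) ∧
       (∀ t ∈ Icc (x (i - 1)) (x i), L i (Linv i t) = t) ∧
       (∀ u ∈ Icc (x (s (γ i))) (x (e (γ i))), Linv i (L i u) = u)))
    -- a is Lipschitz with constant La, fixing the interpolation values over domain endpoints
    (La : ℝ) (hLa0 : 0 ≤ La)
    (ha : ∀ u v : ℝ, |a u - a v| ≤ La * |u - v|)
    (hafix : ∀ k, 1 ≤ k → k ≤ l → a (y (s k)) = y (s k) ∧ a (y (e k)) = y (e k))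
    -- b i is Lipschitz on Ĩ_(γ i)
    (hb : ∀ i, 1 ≤ i → i ≤ n → ∃ K : ℝ, 0 ≤ K ∧
      ∀ u ∈ Icc (x (s (γ i))) (x (e (γ i))),
      ∀ v ∈ Icc (x (s (γ i))) (x (e (γ i))), |b i u - b i v| ≤ K * |u - v|)
    -- sfun i is a contraction on I_i with sup_{I_i} |sfun i| · La < 1
    (hscon : ∀ i, 1 ≤ i → i ≤ n → ∃ c : ℝ, 0 ≤ c ∧ c < 1 ∧
      ∀ u ∈ Icc (x (i - 1)) (x i), ∀ v ∈ Icc (x (i - 1)) (x i),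
        |sfun i u - sfun i v| ≤ c * |u - v|)
    (hsLa : ∀ i, 1 ≤ i → i ≤ n → ∃ sb : ℝ,
      (∀ u ∈ Icc (x (i - 1)) (x i), |sfun i u| ≤ sb) ∧ sb * La < 1)
    -- matching conditions: F_{i,k}(x_α, y_α) = y_β whenever L_{i,k}(x_α) = x_β
    (hmatch : ∀ i, 1 ≤ i → i ≤ n → ∀ α ∈ ({s (γ i), e (γ i)} : Set ℕ),
      ∀ β ∈ ({i - 1, i} : Set ℕ), L i (x α) = x β →
        sfun i (x β) * a (y α) + b i (x α) = y β) :
    ∃ f : ℝ → ℝ,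
      -- f is continuous, interpolates the data set P, and satisfies the self-affine equations
      (ContinuousOn f (Icc (x 0) (x n)) ∧ (∀ i ≤ n, f (x i) = y i) ∧
        ∀ i, 1 ≤ i → i ≤ n → ∀ t ∈ Icc (x (i - 1)) (x i),
          f t = sfun i t * a (f (Linv i t)) + b i (Linv i t)) ∧
      -- f is the unique such function (on I)
      (∀ g : ℝ → ℝ,
        (ContinuousOn g (Icc (x 0) (x n)) ∧ (∀ i ≤ n, g (x i) = y i) ∧
          ∀ i, 1 ≤ i → i ≤ n → ∀ t ∈ Icc (x (i - 1)) (x i),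
            g t = sfun i t * a (g (Linv i t)) + b i (Linv i t)) →
        ∀ t ∈ Icc (x 0) (x n), g t = f t) ∧
      -- the graph of f is invariant: Gr(f) ∩ (I_i × ℝ) = W_{i,k}(Gr(f|Ĩ_k))
      (∀ i, 1 ≤ i → i ≤ n →
        {p : ℝ × ℝ | p.1 ∈ Icc (x 0) (x n) ∧ p.2 = f p.1} ∩
            (Icc (x (i - 1)) (x i) ×ˢ (univ : Set ℝ)) =
          (fun p : ℝ × ℝ => (L i p.1, sfun i (L i p.1) * a p.2 + b i p.1)) ''
            {p : ℝ × ℝ | p.1 ∈ Icc (x (s (γ i))) (x (e (γ i))) ∧ p.2 = f p.1}) := by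

  classical
  have hxx : x 0 ≤ x n := xle hx (Nat.zero_le n) le_rfl
  set I₀ : Set ℝ := Icc (x 0) (x n) with hI₀
  have hxj : ∀ j ≤ n, x j ∈ I₀ := fun j hj => ⟨xle hx (Nat.zero_le j) hj, xle hx hj le_rfl⟩
  have hIi : ∀ i, 1 ≤ i → i ≤ n → Icc (x (i - 1)) (x i) ⊆ I₀ := fun i h1 h2 =>
    idx_subset hx h1 h2
  -- the domain intervals Ĩ_k are inside I₀
  have hIdom : ∀ i, 1 ≤ i → i ≤ n → Icc (x (s (γ i))) (x (e (γ i))) ⊆ I₀ := by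
    intro i h1 h2
    obtain ⟨hk1, hk2⟩ := hγ i h1 h2
    obtain ⟨he1, he2⟩ := hse (γ i) hk1 hk2
    exact Icc_subset_Icc (xle hx (Nat.zero_le _) (by omega)) (xle hx he2 le_rfl)
  -- the subspace of continuous interpolants
  set S : Set (C(I₀, ℝ)) := {g | ∀ j ≤ n, extIcc hxx g (x j) = y j} with hS
  have hSclosed : IsClosed S := by
    have : S = ⋂ j, {g : C(I₀, ℝ) | j ≤ n → extIcc hxx g (x j) = y j} := by
      ext g; simp [hS]
    rw [this]
    refine isClosed_iInter fun j => ?_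
    by_cases hj : j ≤ n
    · simp only [hj, forall_true_left]
      exact isClosed_eq (continuous_eval_const _) continuous_const
    · simp only [hj, false_implies]
      exact isClosed_univ.mono (by simp)
  -- nonempty via Lagrange interpolation
  have hSne : S.Nonempty := by
    have hinj : Set.InjOn x ↑(Finset.range (n + 1)) := by
      intro i hi j hj hij
      simp only [Finset.coe_range, Set.mem_Iio] at hi hj
      rcases lt_trichotomy i j with h | h | h
      · exact absurd hij (ne_of_lt (xlt hx h (by omega)))
      · exact h
      · exact absurd hij.symm (ne_of_lt (xlt hx h (by omega)))
    refine ⟨⟨fun t => Polynomial.eval t.val (Lagrange.interpolate (Finset.range (n + 1)) x y),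
      (Polynomial.continuous _).comp continuous_subtype_val⟩, ?_⟩
    intro j hj
    rw [extIcc_of_mem hxx _ (hxj j hj)]
    show Polynomial.eval (x j) (Lagrange.interpolate (Finset.range (n + 1)) x y) = y j
    have hjmem : j ∈ Finset.range (n + 1) := Finset.mem_range.mpr (by omega)
    exact Lagrange.eval_interpolate_at_node (i := j) y hinj hjmem
  haveI : Nonempty ↥S := hSne.to_subtype
  haveI : CompleteSpace ↥S := hSclosed.completeSpace_coe
  -- the RIFS operator
  set Φf : C(I₀, ℝ) → ℝ → ℝ :=
    fun g t => formula Linv b sfun a (extIcc hxx g) (idx n x t) t with hΦf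
  have hTeq : ∀ g : C(I₀, ℝ), (∀ j ≤ n, extIcc hxx g (x j) = y j) →
      ∀ i, 1 ≤ i → i ≤ n → ∀ t ∈ Icc (x (i - 1)) (x i),
        Φf g t = formula Linv b sfun a (extIcc hxx g) i t := by
    intro g hg i h1 h2 t ht
    exact Tfun_eq hn hx hse hγ hLend hLinv hmatch _ hg h1 h2 ht
  have hΦcont : ∀ g : C(I₀, ℝ), (∀ j ≤ n, extIcc hxx g (x j) = y j) →
      ContinuousOn (Φf g) I₀ := by
    intro g hg
    refine glue hn hx (fun i h1 h2 => ?_)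
    exact (formula_contOn hx hse hγ hLcon hLmap hLinv ha hb hscon _
      (extIcc_cont hxx g) h1 h2).congr (fun t ht => hTeq g hg i h1 h2 t ht)
  have hΦknot : ∀ g : C(I₀, ℝ), (∀ j ≤ n, extIcc hxx g (x j) = y j) →
      ∀ j ≤ n, Φf g (x j) = y j := by
    intro g hg j hj
    rcases Nat.eq_zero_or_pos j with rfl | hj0
    · have h0 : x 0 ∈ Icc (x (1 - 1)) (x 1) := ⟨le_rfl, le_of_lt (hx 0 hn)⟩
      rw [hTeq g hg 1 le_rfl hn _ h0]
      exact knot hx hse hγ hLend hLinv hmatch _ hg le_rfl hn (Or.inl rfl)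
    · have h0 : x j ∈ Icc (x (j - 1)) (x j) := ⟨xle hx (by omega) hj, le_rfl⟩
      rw [hTeq g hg j hj0 hj _ h0]
      exact knot hx hse hγ hLend hLinv hmatch _ hg hj0 hj (Or.inr rfl)
  set Φ : ↥S → ↥S := fun g =>
    ⟨⟨I₀.restrict (Φf g.1), continuousOn_iff_continuous_restrict.mp (hΦcont g.1 g.2)⟩,
      fun j hj => by
        rw [extIcc_of_mem hxx _ (hxj j hj)]
        exact hΦknot g.1 g.2 j hj⟩ with hΦ
  have hΦapp : ∀ (g : ↥S) (t : ℝ) (ht : t ∈ I₀), extIcc hxx (Φ g).1 t = Φf g.1 t := by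
    intro g t ht
    rw [extIcc_of_mem hxx _ ht]
    rfl
  -- contraction constants
  have hsbex : ∀ i, ∃ sb : ℝ, 1 ≤ i → i ≤ n →
      ((∀ u ∈ Icc (x (i - 1)) (x i), |sfun i u| ≤ sb) ∧ sb * La < 1) := by
    intro i
    by_cases h : 1 ≤ i ∧ i ≤ n
    · obtain ⟨sb, h1, h2⟩ := hsLa i h.1 h.2
      exact ⟨sb, fun _ _ => ⟨h1, h2⟩⟩
    · exact ⟨0, fun h1 h2 => absurd ⟨h1, h2⟩ h⟩
  choose sb hsb using hsbex
  have hsb0 : ∀ i, 1 ≤ i → i ≤ n → 0 ≤ sb i := fun i h1 h2 =>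
    le_trans (abs_nonneg _) ((hsb i h1 h2).1 (x (i - 1)) ⟨le_rfl, xle hx (by omega) h2⟩)
  have hne : (Finset.Icc 1 n).Nonempty := ⟨1, Finset.mem_Icc.mpr ⟨le_rfl, hn⟩⟩
  set c : ℝ := (Finset.Icc 1 n).sup' hne (fun i => sb i * La) with hc
  have hcb : ∀ i, 1 ≤ i → i ≤ n → sb i * La ≤ c := by
    intro i h1 h2
    rw [hc]
    exact Finset.le_sup' (fun j => sb j * La) (Finset.mem_Icc.mpr ⟨h1, h2⟩)
  have hc1 : c < 1 := by
    rw [hc, Finset.sup'_lt_iff]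
    intro i hi
    rw [Finset.mem_Icc] at hi
    exact (hsb i hi.1 hi.2).2
  have hc0 : 0 ≤ c := le_trans (mul_nonneg (hsb0 1 le_rfl hn) hLa0) (hcb 1 le_rfl hn)
  set K : NNReal := ⟨c, hc0⟩ with hK
  have hlip : LipschitzWith K Φ := by
    apply LipschitzWith.of_dist_le_mul
    intro g h
    have hdistgh : dist g h = dist g.1 h.1 := rfl
    rw [Subtype.dist_eq]
    have hKc : (K : ℝ) = c := rfl
    rw [hKc, hdistgh]
    refine (ContinuousMap.dist_le (mul_nonneg hc0 dist_nonneg)).mpr (fun t => ?_)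
    have htI : (t : ℝ) ∈ I₀ := t.2
    obtain ⟨h1, h2, ht⟩ := idx_spec hn hx htI
    set i := idx n x (t : ℝ) with hi
    have hval : ∀ g' : ↥S, (Φ g').1 t = Φf g'.1 (t : ℝ) := fun g' => rfl
    rw [hval g, hval h]
    have hu : Linv i (t : ℝ) ∈ Icc (x (s (γ i))) (x (e (γ i))) := (hLinv i h1 h2).1 ht
    have huI : Linv i (t : ℝ) ∈ I₀ := hIdom i h1 h2 hu
    set u := Linv i (t : ℝ) with hudef
    have hGu : extIcc hxx g.1 u = g.1 ⟨u, huI⟩ := extIcc_of_mem hxx _ huI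
    have hHu : extIcc hxx h.1 u = h.1 ⟨u, huI⟩ := extIcc_of_mem hxx _ huI
    have hdiff : Φf g.1 (t : ℝ) - Φf h.1 (t : ℝ) =
        sfun i (t : ℝ) * (a (extIcc hxx g.1 u) - a (extIcc hxx h.1 u)) := by
      simp only [hΦf, ← hi, formula, ← hudef]
      ring
    rw [Real.dist_eq, hdiff, abs_mul]
    have hGH : |extIcc hxx g.1 u - extIcc hxx h.1 u| ≤ dist g.1 h.1 := by
      rw [hGu, hHu, ← Real.dist_eq]
      exact ContinuousMap.dist_apply_le_dist _
    have step1 : |a (extIcc hxx g.1 u) - a (extIcc hxx h.1 u)| ≤ La * dist g.1 h.1 :=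
      le_trans (ha _ _) (mul_le_mul_of_nonneg_left hGH hLa0)
    have step2 : |sfun i (t : ℝ)| ≤ sb i := (hsb i h1 h2).1 _ ht
    calc |sfun i (t : ℝ)| * |a (extIcc hxx g.1 u) - a (extIcc hxx h.1 u)|
        ≤ sb i * (La * dist g.1 h.1) :=
          mul_le_mul step2 step1 (abs_nonneg _) (hsb0 i h1 h2)
      _ = (sb i * La) * dist g.1 h.1 := by ring
      _ ≤ c * dist g.1 h.1 :=
          mul_le_mul_of_nonneg_right (hcb i h1 h2) dist_nonneg
  have hcontr : ContractingWith K Φ := by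
    constructor
    · rw [← NNReal.coe_lt_coe]
      exact hc1
    · exact hlip
  set f₀ : ↥S := ContractingWith.fixedPoint Φ hcontr with hf₀
  have hfix : Φ f₀ = f₀ := hcontr.fixedPoint_isFixedPt
  have hfi : ∀ j ≤ n, extIcc hxx f₀.1 (x j) = y j := f₀.2
  have hfeq : ∀ i, 1 ≤ i → i ≤ n → ∀ t ∈ Icc (x (i - 1)) (x i),
      extIcc hxx f₀.1 t = sfun i t * a (extIcc hxx f₀.1 (Linv i t)) + b i (Linv i t) := by
    intro i h1 h2 t ht
    have htI := hIi i h1 h2 ht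
    have e1 : extIcc hxx f₀.1 t = Φf f₀.1 t := by
      conv_lhs => rw [← hfix]
      exact hΦapp f₀ t htI
    rw [e1, hTeq f₀.1 f₀.2 i h1 h2 t ht]
    rfl
  refine ⟨extIcc hxx f₀.1, ⟨(extIcc_cont hxx f₀.1).continuousOn, hfi, hfeq⟩, ?_, ?_⟩
  · -- uniqueness
    rintro g ⟨hgc, hgi, hgeq⟩ t htI
    set G : C(I₀, ℝ) := ⟨I₀.restrict g, continuousOn_iff_continuous_restrict.mp hgc⟩ with hG
    have hGmem : G ∈ S := by
      intro j hj
      rw [extIcc_of_mem hxx _ (hxj j hj)]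
      exact hgi j hj
    have hGval : ∀ u, u ∈ I₀ → extIcc hxx G u = g u := by
      intro u hu; rw [extIcc_of_mem hxx _ hu]; rfl
    have hfixG : Function.IsFixedPt Φ ⟨G, hGmem⟩ := by
      apply Subtype.ext
      apply ContinuousMap.ext
      intro u
      show Φf G (u : ℝ) = G u
      obtain ⟨h1, h2, hu⟩ := idx_spec hn hx u.2
      rw [hTeq G hGmem _ h1 h2 _ hu]
      have hLu : Linv (idx n x (u : ℝ)) (u : ℝ) ∈ I₀ :=
        hIdom _ h1 h2 ((hLinv _ h1 h2).1 hu)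
      show sfun _ _ * a (extIcc hxx G (Linv _ (u : ℝ))) + b _ (Linv _ (u : ℝ)) = G u
      rw [hGval _ hLu, ← hgeq _ h1 h2 _ hu]
      rfl
    have huniq : (⟨G, hGmem⟩ : ↥S) = f₀ := by
      rw [hf₀]
      exact hcontr.fixedPoint_unique hfixG
    have hG₀ : G = f₀.1 := congrArg Subtype.val huniq
    rw [← hGval t htI, hG₀]
  · -- graph invariance
    intro i h1 h2
    ext ⟨t, v⟩
    simp only [Set.mem_inter_iff, Set.mem_setOf_eq, Set.mem_prod, Set.mem_univ, and_true,
      Set.mem_image, Prod.mk.injEq, Prod.exists]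
    constructor
    · rintro ⟨⟨htI, hv⟩, hti⟩
      refine ⟨Linv i t, extIcc hxx f₀.1 (Linv i t), ⟨(hLinv i h1 h2).1 hti, rfl⟩,
        (hLinv i h1 h2).2.1 t hti, ?_⟩
      rw [(hLinv i h1 h2).2.1 t hti, hv]
      exact (hfeq i h1 h2 t hti).symm
    · rintro ⟨u, w, ⟨hu, rfl⟩, hL, hv⟩
      subst hL
      have htIi : L i u ∈ Icc (x (i - 1)) (x i) := hLmap i h1 h2 hu
      refine ⟨⟨hIi i h1 h2 htIi, ?_⟩, htIi⟩
      rw [← hv, hfeq i h1 h2 _ htIi, (hLinv i h1 h2).2.2 u hu]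
end

section
/- (Lemma 5) Let I be an interval in R, L : I → I a contraction homeomorphism, a, b : R → R Lipschitz functions with Lipschitz constants L_a, L_b, and s : I → R a contraction with contraction constant c_s satisfying |s(x)| L_a < 1 for all x. Define F : I × R → R by F(x,y) = s(L(x)) a(y) + b(x). Then for every continuous function f : I → R, the maximum variation of the function x ↦ F(L^{−1}(x), f(L^{−1}(x))) over L(I) satisfies R_{F(L^{−1}, f∘L^{−1})}[L(I)] ≤ s̄ L_a R_f[I] + |I| (c_s ā_f + L_b), where |I| is the length of I, s̄ = max_{x∈I} |s(x)| and ā_f = max_{x∈I} |a(f(x))|. -/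
open Set

/-- Maximum variation `R_f[D] = sup{|f(x₂) − f(x₁)| : x₁, x₂ ∈ D}` of `f` on `D`. -/
noncomputable def maxVar (f : ℝ → ℝ) (D : Set ℝ) : ℝ :=
  sSup {d : ℝ | ∃ u ∈ D, ∃ v ∈ D, d = |f u - f v|}

/-- **Lemma 5.** If `F(x,y) = s(L(x)) a(y) + b(x)`, then for every continuous `f : I → ℝ`,
`R_{F(L⁻¹, f∘L⁻¹)}[L(I)] ≤ s̄ L_a R_f[I] + |I| (c_s ā_f + L_b)`. -/
theorem stmt3 (p q : ℝ) (hpq : p ≤ q)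
    (L Linv a b s : ℝ → ℝ)
    (La Lb cL cs : ℝ) (hLa : 0 ≤ La) (hLb : 0 ≤ Lb)
    -- `L : I → I` is a contraction homeomorphism with inverse `Linv`
    (hLmap : Set.MapsTo L (Icc p q) (Icc p q))
    (hcL : 0 ≤ cL) (hcL1 : cL < 1)
    (hLcon : ∀ u ∈ Icc p q, ∀ v ∈ Icc p q, |L u - L v| ≤ cL * |u - v|)
    (hLinv : ∀ u ∈ Icc p q, Linv (L u) = u)
    -- `a, b : ℝ → ℝ` Lipschitz with constants `La`, `Lb`
    (ha : ∀ u v : ℝ, |a u - a v| ≤ La * |u - v|)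
    (hb : ∀ u v : ℝ, |b u - b v| ≤ Lb * |u - v|)
    -- `s : I → ℝ` a contraction with constant `cs`, with `|s(x)| La < 1`
    (hcs : 0 ≤ cs) (hcs1 : cs < 1)
    (hscon : ∀ u ∈ Icc p q, ∀ v ∈ Icc p q, |s u - s v| ≤ cs * |u - v|)
    (hsa : ∀ u ∈ Icc p q, |s u| * La < 1)
    (f : ℝ → ℝ) (hf : ContinuousOn f (Icc p q)) :
    maxVar (fun t => s (L (Linv t)) * a (f (Linv t)) + b (Linv t)) (L '' Icc p q) ≤
      sSup ((fun t => |s t|) '' Icc p q) * La * maxVar f (Icc p q) +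
        (q - p) * (cs * sSup ((fun t => |a (f t)|) '' Icc p q) + Lb) := by
  have hp : p ∈ Icc p q := ⟨le_refl p, hpq⟩
  -- distance bound inside Icc
  have hdist : ∀ u ∈ Icc p q, ∀ v ∈ Icc p q, |u - v| ≤ q - p := by
    intro u hu v hv
    rw [abs_sub_le_iff]
    constructor <;> linarith [hu.1, hu.2, hv.1, hv.2]
  -- a is continuous
  have haC : Continuous a := by
    have : LipschitzWith (Real.toNNReal La) a := by
      rw [lipschitzWith_iff_dist_le_mul]
      intro u v
      rw [Real.dist_eq, Real.dist_eq, Real.coe_toNNReal La hLa]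
      exact ha u v
    exact this.continuous
  -- bounds for sSup of |s| on Icc
  have hsbdd : BddAbove ((fun t => |s t|) '' Icc p q) := by
    refine ⟨|s p| + cs * (q - p), ?_⟩
    rintro x ⟨t, ht, rfl⟩
    have h1 : |s t| - |s p| ≤ |s t - s p| := abs_sub_abs_le_abs_sub _ _
    have h2 := hscon t ht p hp
    have h3 : |t - p| ≤ q - p := hdist t ht p hp
    nlinarith
  set sbar := sSup ((fun t => |s t|) '' Icc p q) with hsbar_def
  have hsbar : ∀ t ∈ Icc p q, |s t| ≤ sbar := fun t ht =>
    le_csSup hsbdd ⟨t, ht, rfl⟩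
  have hsbar0 : 0 ≤ sbar := le_trans (abs_nonneg _) (hsbar p hp)
  -- bounds for sSup of |a ∘ f| on Icc
  have habdd : BddAbove ((fun t => |a (f t)|) '' Icc p q) :=
    isCompact_Icc.bddAbove_image
      ((continuous_abs.comp haC).comp_continuousOn hf)
  set abar := sSup ((fun t => |a (f t)|) '' Icc p q) with habar_def
  have habar : ∀ t ∈ Icc p q, |a (f t)| ≤ abar := fun t ht =>
    le_csSup habdd ⟨t, ht, rfl⟩
  have habar0 : 0 ≤ abar := le_trans (abs_nonneg _) (habar p hp)
  -- bound for maxVar f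
  have hfbdd : BddAbove ((fun t => |f t|) '' Icc p q) :=
    isCompact_Icc.bddAbove_image (continuous_abs.comp_continuousOn hf)
  set Mf := sSup ((fun t => |f t|) '' Icc p q) with hMf_def
  have hMf : ∀ t ∈ Icc p q, |f t| ≤ Mf := fun t ht =>
    le_csSup hfbdd ⟨t, ht, rfl⟩
  have hRfbdd : BddAbove {d : ℝ | ∃ u ∈ Icc p q, ∃ v ∈ Icc p q, d = |f u - f v|} := by
    refine ⟨2 * Mf, ?_⟩
    rintro x ⟨u, hu, v, hv, rfl⟩
    have := hMf u hu
    have := hMf v hv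
    have := abs_sub (f u) (f v)
    linarith
  have hRf : ∀ u ∈ Icc p q, ∀ v ∈ Icc p q, |f u - f v| ≤ maxVar f (Icc p q) := by
    intro u hu v hv
    exact le_csSup hRfbdd ⟨u, hu, v, hv, rfl⟩
  have hRf0 : 0 ≤ maxVar f (Icc p q) := le_trans (abs_nonneg _) (hRf p hp p hp)
  -- RHS nonneg
  have hRHS : 0 ≤ sbar * La * maxVar f (Icc p q) + (q - p) * (cs * abar + Lb) := by
    have h1 : 0 ≤ q - p := by linarith
    positivity
  apply Real.sSup_le _ hRHS
  rintro x ⟨u', ⟨u, hu, rfl⟩, v', ⟨v, hv, rfl⟩, rfl⟩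
  simp only
  rw [hLinv u hu, hLinv v hv]
  have hLu : L u ∈ Icc p q := hLmap hu
  have hLv : L v ∈ Icc p q := hLmap hv
  have key : s (L u) * a (f u) + b u - (s (L v) * a (f v) + b v)
      = s (L u) * (a (f u) - a (f v)) + (s (L u) - s (L v)) * a (f v) + (b u - b v) := by
    ring
  rw [key]
  have h1 : |s (L u) * (a (f u) - a (f v))| ≤ sbar * (La * maxVar f (Icc p q)) := by
    rw [abs_mul]
    apply mul_le_mul (hsbar _ hLu) (le_trans (ha _ _) ?_) (abs_nonneg _) hsbar0
    exact mul_le_mul_of_nonneg_left (hRf u hu v hv) hLa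
  have h2 : |(s (L u) - s (L v)) * a (f v)| ≤ (q - p) * (cs * abar) := by
    rw [abs_mul]
    have hA : |s (L u) - s (L v)| ≤ cs * (q - p) := by
      calc |s (L u) - s (L v)| ≤ cs * |L u - L v| := hscon _ hLu _ hLv
        _ ≤ cs * (q - p) := mul_le_mul_of_nonneg_left (hdist _ hLu _ hLv) hcs
    calc |s (L u) - s (L v)| * |a (f v)| ≤ (cs * (q - p)) * abar :=
          mul_le_mul hA (habar v hv) (abs_nonneg _) (mul_nonneg hcs (by linarith))
      _ = (q - p) * (cs * abar) := by ring
  have h3 : |b u - b v| ≤ (q - p) * Lb := by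
    calc |b u - b v| ≤ Lb * |u - v| := hb u v
      _ ≤ Lb * (q - p) := mul_le_mul_of_nonneg_left (hdist u hu v hv) hLb
      _ = (q - p) * Lb := by ring
  calc |s (L u) * (a (f u) - a (f v)) + (s (L u) - s (L v)) * a (f v) + (b u - b v)|
      ≤ |s (L u) * (a (f u) - a (f v))| + |(s (L u) - s (L v)) * a (f v)| + |b u - b v| :=
        (abs_add_le _ _).trans (add_le_add_left (abs_add_le _ _) _)
    _ ≤ sbar * (La * maxVar f (Icc p q)) + (q - p) * (cs * abar) + (q - p) * Lb :=
        add_le_add (add_le_add h1 h2) h3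
    _ = sbar * La * maxVar f (Icc p q) + (q - p) * (cs * abar + Lb) := by ring
end

section
/- (Lemma 7) Let f, g : [0,1] → R be continuous functions whose graphs have box-counting dimensions dim_B Gr(f) and dim_B Gr(g) (the defining limits exist). Define F' : [0,1]² → R by F'(x,y) = f(x) + g(y). Then the box-counting dimension of the graph of F' exists and equals dim_B Gr(F') = 1 + max{dim_B Gr(f), dim_B Gr(g)}. -/
open Set Filter Topology

/-- `N_δ(A)` for `A ⊆ ℝ²`: the number of `δ`-mesh squares that intersect `A`. -/
noncomputable def meshCount2 (δ : ℝ) (A : Set (ℝ × ℝ)) : ℕ :=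
  Set.ncard {k : ℤ × ℤ |
    (A ∩ (Set.Ico ((k.1 : ℝ) * δ) (((k.1 : ℝ) + 1) * δ) ×ˢ
          Set.Ico ((k.2 : ℝ) * δ) (((k.2 : ℝ) + 1) * δ))).Nonempty}

/-- `N_δ(A)` for `A ⊆ ℝ³`: the number of `δ`-mesh cubes that intersect `A`. -/
noncomputable def meshCount3 (δ : ℝ) (A : Set (ℝ × ℝ × ℝ)) : ℕ :=
  Set.ncard {k : ℤ × ℤ × ℤ |
    (A ∩ (Set.Ico ((k.1 : ℝ) * δ) (((k.1 : ℝ) + 1) * δ) ×ˢ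
          (Set.Ico ((k.2.1 : ℝ) * δ) (((k.2.1 : ℝ) + 1) * δ) ×ˢ
           Set.Ico ((k.2.2 : ℝ) * δ) (((k.2.2 : ℝ) + 1) * δ)))).Nonempty}

/-- `A ⊆ ℝ²` has box-counting dimension `D`: the defining limit exists and equals `D`. -/
def HasBoxDim2 (A : Set (ℝ × ℝ)) (D : ℝ) : Prop :=
  Tendsto (fun δ : ℝ => Real.log (meshCount2 δ A) / (-Real.log δ)) (𝓝[>] 0) (𝓝 D)

/-- `A ⊆ ℝ³` has box-counting dimension `D`: the defining limit exists and equals `D`. -/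
def HasBoxDim3 (A : Set (ℝ × ℝ × ℝ)) (D : ℝ) : Prop :=
  Tendsto (fun δ : ℝ => Real.log (meshCount3 δ A) / (-Real.log δ)) (𝓝[>] 0) (𝓝 D)

/-- The graph of `f` over `[0,1]`. -/
def Gr1 (f : ℝ → ℝ) : Set (ℝ × ℝ) := {p | p.1 ∈ Set.Icc (0:ℝ) 1 ∧ p.2 = f p.1}

/-- The graph of `F : [0,1]² → ℝ`. -/
def Gr2 (F : ℝ → ℝ → ℝ) : Set (ℝ × ℝ × ℝ) :=
  {p | p.1 ∈ Set.Icc (0:ℝ) 1 ∧ p.2.1 ∈ Set.Icc (0:ℝ) 1 ∧ p.2.2 = F p.1 p.2.1}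

noncomputable section
open Pointwise
namespace Stmt11Aux


def Kset (δ : ℝ) (T : Set ℝ) : Set ℤ :=
  {k : ℤ | (T ∩ Set.Ico ((k:ℝ)*δ) (((k:ℝ)+1)*δ)).Nonempty}

lemma Kset_eq_image {δ : ℝ} (hδ : 0 < δ) (T : Set ℝ) :
    Kset δ T = (fun t => ⌊t/δ⌋) '' T := by
  ext k
  simp only [Kset, Set.mem_setOf_eq, Set.mem_image, Set.inter_nonempty]
  constructor
  · rintro ⟨t, ht, h1, h2⟩
    refine ⟨t, ht, ?_⟩
    rw [Int.floor_eq_iff]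
    constructor
    · rwa [le_div_iff₀ hδ]
    · rw [div_lt_iff₀ hδ]; linarith
  · rintro ⟨t, ht, hk⟩
    refine ⟨t, ht, ?_, ?_⟩
    · rw [← hk]
      have h := Int.floor_le (t/δ)
      calc (⌊t/δ⌋:ℝ) * δ ≤ (t/δ) * δ := by nlinarith
      _ = t := by field_simp
    · rw [← hk]
      calc t = (t/δ)*δ := by field_simp
      _ < (⌊t/δ⌋ + 1) * δ := by
          have := Int.lt_floor_add_one (t/δ)
          nlinarith

lemma Kset_empty {δ : ℝ} : Kset δ (∅ : Set ℝ) = ∅ := by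
  simp [Kset]

/-- Main 1D counting lemma. -/
lemma Kset_spec {δ : ℝ} (hδ : 0 < δ) {T : Set ℝ}
    (hT : T.Nonempty) (hbb : BddBelow T) (hba : BddAbove T) (hoc : T.OrdConnected) :
    (Kset δ T).Finite ∧ 1 ≤ (Kset δ T).ncard ∧
      sSup T - sInf T ≤ ((Kset δ T).ncard : ℝ) * δ ∧
      ((Kset δ T).ncard : ℝ) * δ ≤ sSup T - sInf T + 2*δ := by
  rw [Kset_eq_image hδ]
  set φ : ℝ → ℤ := fun t => ⌊t/δ⌋ with hφ
  have hmono : Monotone φ := fun a b hab => Int.floor_le_floor (by gcongr)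
  have key : ∀ {t : ℝ} {k : ℤ}, φ t = k → (k:ℝ)*δ ≤ t ∧ t < ((k:ℝ)+1)*δ := by
    intro t k hk
    rw [hφ] at hk
    simp only at hk
    rw [Int.floor_eq_iff] at hk
    constructor
    · calc (k:ℝ)*δ ≤ (t/δ)*δ := by nlinarith [hk.1]
      _ = t := by field_simp
    · calc t = (t/δ)*δ := by field_simp
      _ < ((k:ℝ)+1)*δ := by nlinarith [hk.2]
  have hsub : φ '' T ⊆ Set.Icc (φ (sInf T)) (φ (sSup T)) := by
    rintro k ⟨t, ht, rfl⟩
    exact ⟨hmono (csInf_le hbb ht), hmono (le_csSup hba ht)⟩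
  have hfin : (φ '' T).Finite := (Set.finite_Icc _ _).subset hsub
  set F := hfin.toFinset with hF
  have hFne : F.Nonempty := by
    obtain ⟨t0, ht0⟩ := hT
    exact ⟨φ t0, by simp [hF, Set.mem_image]; exact ⟨t0, ht0, rfl⟩⟩
  set k₁ := F.min' hFne with hk₁
  set k₂ := F.max' hFne with hk₂
  obtain ⟨t₁, ht₁T, ht₁⟩ : ∃ t ∈ T, φ t = k₁ :=
    hfin.mem_toFinset.mp (F.min'_mem hFne)
  obtain ⟨t₂, ht₂T, ht₂⟩ : ∃ t ∈ T, φ t = k₂ :=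
    hfin.mem_toFinset.mp (F.max'_mem hFne)
  have h12 : k₁ ≤ k₂ := F.min'_le _ (F.max'_mem hFne)
  have hE : φ '' T = Set.Icc k₁ k₂ := by
    apply Set.Subset.antisymm
    · intro k hk
      have hk' : k ∈ F := by rwa [hF, Set.Finite.mem_toFinset]
      exact ⟨F.min'_le _ hk', F.le_max' _ hk'⟩
    · rintro k ⟨hk1, hk2⟩
      rcases eq_or_lt_of_le hk1 with h | h
      · exact ⟨t₁, ht₁T, by rw [ht₁, h]⟩
      · refine ⟨(k:ℝ)*δ, ?_, ?_⟩
        · have hc1 : (k₁:ℝ)+1 ≤ (k:ℝ) := by exact_mod_cast h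
          have hc2 : (k:ℝ) ≤ (k₂:ℝ) := by exact_mod_cast hk2
          have hA : t₁ ≤ (k:ℝ)*δ := by nlinarith [(key ht₁).2]
          have hB : (k:ℝ)*δ ≤ t₂ := by nlinarith [(key ht₂).1]
          exact hoc.out ht₁T ht₂T ⟨hA, hB⟩
        · show (⌊((k:ℝ)*δ)/δ⌋ : ℤ) = k
          rw [mul_div_assoc, div_self hδ.ne', mul_one, Int.floor_intCast]
  have hncard : ((φ '' T).ncard : ℝ) = (k₂:ℝ) - k₁ + 1 := by
    rw [hE, ← Finset.coe_Icc, Set.ncard_coe_finset, Int.card_Icc]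
    have h0 : (0:ℤ) ≤ k₂ + 1 - k₁ := by omega
    have h1 : ((k₂ + 1 - k₁).toNat : ℤ) = k₂ + 1 - k₁ := Int.toNat_of_nonneg h0
    have h2 : (((k₂ + 1 - k₁).toNat : ℕ) : ℝ) = (k₂ : ℝ) + 1 - k₁ := by exact_mod_cast h1
    rw [h2]; ring
  have hbl : ∀ t ∈ T, (k₁:ℝ)*δ ≤ t ∧ t < ((k₂:ℝ)+1)*δ := by
    intro t ht
    have hm : φ t ∈ F := by rw [hF, Set.Finite.mem_toFinset]; exact ⟨t, ht, rfl⟩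
    have h1 : (k₁:ℝ) ≤ ((φ t : ℤ):ℝ) := by exact_mod_cast F.min'_le _ hm
    have h2 : ((φ t : ℤ):ℝ) ≤ (k₂:ℝ) := by exact_mod_cast F.le_max' _ hm
    obtain ⟨hl, hr⟩ := key (rfl : φ t = φ t)
    constructor
    · nlinarith
    · nlinarith
  have hsup_le : sSup T ≤ ((k₂:ℝ)+1)*δ := csSup_le hT (fun t ht => (hbl t ht).2.le)
  have hinf_ge : (k₁:ℝ)*δ ≤ sInf T := le_csInf hT (fun t ht => (hbl t ht).1)
  have hsup_ge : (k₂:ℝ)*δ ≤ sSup T := le_trans (key ht₂).1 (le_csSup hba ht₂T)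
  have hinf_le : sInf T < ((k₁:ℝ)+1)*δ := lt_of_le_of_lt (csInf_le hbb ht₁T) (key ht₁).2
  refine ⟨hfin, ?_, ?_, ?_⟩
  · exact (Set.ncard_pos hfin).mpr (hT.image φ)
  · rw [hncard]; nlinarith
  · rw [hncard]; nlinarith



lemma sigma_eq_coe {α β : Type*} [DecidableEq α] [DecidableEq β] (X : Finset α) (K : α → Set β)
    (hfin : ∀ i, (K i).Finite) (hempty : ∀ i ∉ X, K i = ∅) :
    {p : α × β | p.2 ∈ K p.1} = ↑(X.biUnion fun i => ({i} : Finset α) ×ˢ (hfin i).toFinset) := by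
  ext ⟨i, j⟩
  simp only [Set.mem_setOf_eq, Finset.coe_biUnion, Set.mem_iUnion, Finset.mem_coe,
    Finset.mem_product, Finset.mem_singleton, Set.Finite.mem_toFinset]
  constructor
  · intro h
    by_cases hi : i ∈ X
    · exact ⟨i, hi, rfl, h⟩
    · rw [hempty i hi] at h; exact absurd h (Set.notMem_empty j)
  · rintro ⟨i', _, rfl, h⟩
    exact h

lemma sigma_finite {α β : Type*} [DecidableEq α] [DecidableEq β] (X : Finset α) (K : α → Set β)
    (hfin : ∀ i, (K i).Finite) (hempty : ∀ i ∉ X, K i = ∅) :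
    {p : α × β | p.2 ∈ K p.1}.Finite := by
  rw [sigma_eq_coe X K hfin hempty]
  exact Finset.finite_toSet _

lemma sigma_ncard {α β : Type*} [DecidableEq α] [DecidableEq β] (X : Finset α) (K : α → Set β)
    (hfin : ∀ i, (K i).Finite) (hempty : ∀ i ∉ X, K i = ∅) :
    {p : α × β | p.2 ∈ K p.1}.ncard = ∑ i ∈ X, (K i).ncard := by
  rw [sigma_eq_coe X K hfin hempty, Set.ncard_coe_finset, Finset.card_biUnion]
  · refine Finset.sum_congr rfl fun i _ => ?_
    rw [Finset.card_product, Finset.card_singleton, one_mul, Set.ncard_eq_toFinset_card (K i) (hfin i)]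
  · intro i _ i' _ hii'
    rw [Function.onFun, Finset.disjoint_left]
    rintro ⟨a, b⟩ hab hab'
    rw [Finset.mem_product, Finset.mem_singleton] at hab hab'
    exact hii' (hab.1 ▸ hab'.1 ▸ rfl)


def Iv (δ : ℝ) (i : ℤ) : Set ℝ := Set.Icc (0:ℝ) 1 ∩ Set.Ico ((i:ℝ)*δ) (((i:ℝ)+1)*δ)

lemma mesh2_decomp (δ : ℝ) (f : ℝ → ℝ) :
    meshCount2 δ (Gr1 f) =
      {p : ℤ × ℤ | p.2 ∈ Kset δ (f '' Iv δ p.1)}.ncard := by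
  apply congrArg Set.ncard
  ext ⟨i, j⟩
  simp only [Set.mem_setOf_eq, Kset, Set.inter_nonempty]
  constructor
  · rintro ⟨⟨x, y⟩, ⟨hx, hy⟩, hx2, hy2⟩
    simp only at hx hy hx2 hy2
    subst hy
    exact ⟨f x, ⟨x, ⟨hx, hx2⟩, rfl⟩, hy2⟩
  · rintro ⟨t, ⟨x, ⟨hx, hx2⟩, rfl⟩, ht⟩
    exact ⟨(x, f x), ⟨hx, rfl⟩, hx2, ht⟩

lemma mesh3_decomp (δ : ℝ) (f g : ℝ → ℝ) :
    meshCount3 δ (Gr2 fun x y => f x + g y) =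
      {p : ℤ × ℤ × ℤ | p.2 ∈ {q : ℤ × ℤ |
        q.2 ∈ Kset δ (f '' Iv δ p.1 + g '' Iv δ q.1)}}.ncard := by
  apply congrArg Set.ncard
  ext ⟨i, j, k⟩
  simp only [Set.mem_setOf_eq, Kset, Set.inter_nonempty]
  constructor
  · rintro ⟨⟨x, y, z⟩, ⟨hx, hy, hz⟩, hx2, hy2, hz2⟩
    simp only at hx hy hz hx2 hy2 hz2
    subst hz
    exact ⟨f x + g y, Set.add_mem_add ⟨x, ⟨hx, hx2⟩, rfl⟩ ⟨y, ⟨hy, hy2⟩, rfl⟩, hz2⟩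
  · rintro ⟨t, ht, htk⟩
    rw [Set.mem_add] at ht
    obtain ⟨a, ⟨x, ⟨hx, hx2⟩, rfl⟩, b, ⟨y, ⟨hy, hy2⟩, rfl⟩, rfl⟩ := ht
    exact ⟨(x, y, f x + g y), ⟨hx, hy, rfl⟩, hx2, hy2, htk⟩

lemma Kset_finite {δ : ℝ} (hδ : 0 < δ) {T : Set ℝ} {A B : ℝ} (hT : T ⊆ Set.Icc A B) :
    (Kset δ T).Finite := by
  rw [Kset_eq_image hδ]
  apply (Set.finite_Icc ⌊A/δ⌋ ⌊B/δ⌋).subset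
  rintro k ⟨t, ht, rfl⟩
  obtain ⟨h1, h2⟩ := hT ht
  exact ⟨Int.floor_le_floor (by gcongr), Int.floor_le_floor (by gcongr)⟩

lemma Iv_ordConnected (δ : ℝ) (i : ℤ) : (Iv δ i).OrdConnected :=
  Set.ordConnected_Icc.inter Set.ordConnected_Ico

lemma img_subset {h : ℝ → ℝ} {C : ℝ} (hC : ∀ x ∈ Set.Icc (0:ℝ) 1, |h x| ≤ C)
    (δ : ℝ) (i : ℤ) : h '' Iv δ i ⊆ Set.Icc (-C) C := by
  rintro y ⟨x, hx, rfl⟩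
  exact abs_le.mp (hC x hx.1)

lemma img_spec {h : ℝ → ℝ} (hh : ContinuousOn h (Set.Icc 0 1)) {C : ℝ}
    (hC : ∀ x ∈ Set.Icc (0:ℝ) 1, |h x| ≤ C) (δ : ℝ) {i : ℤ}
    (hne : (Iv δ i).Nonempty) :
    (h '' Iv δ i).Nonempty ∧ BddBelow (h '' Iv δ i) ∧ BddAbove (h '' Iv δ i) ∧
      (h '' Iv δ i).OrdConnected := by
  refine ⟨hne.image h, ?_, ?_, ?_⟩
  · exact (bddBelow_Icc : BddBelow (Set.Icc (-C) C)).mono (img_subset hC δ i)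
  · exact (bddAbove_Icc (a := -C) (b := C)).mono (img_subset hC δ i)
  · exact (((Iv_ordConnected δ i).isPreconnected).image h
      (hh.mono Set.inter_subset_left)).ordConnected

lemma main_bounds (f g : ℝ → ℝ)
    (hf : ContinuousOn f (Set.Icc 0 1)) (hg : ContinuousOn g (Set.Icc 0 1))
    {δ : ℝ} (hδ : 0 < δ) :
    ∃ m : ℕ,
      1 ≤ m ∧ 1 ≤ (m:ℝ)*δ ∧ (m:ℝ)*δ ≤ 1 + 2*δ ∧
      m ≤ meshCount2 δ (Gr1 f) ∧ m ≤ meshCount2 δ (Gr1 g) ∧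
      m * meshCount2 δ (Gr1 f) ≤ 3 * meshCount3 δ (Gr2 fun x y => f x + g y) ∧
      m * meshCount2 δ (Gr1 g) ≤ 3 * meshCount3 δ (Gr2 fun x y => f x + g y) ∧
      meshCount3 δ (Gr2 fun x y => f x + g y) ≤
        m * meshCount2 δ (Gr1 f) + m * meshCount2 δ (Gr1 g) + 2 * m * m := by
  obtain ⟨Cf, hCf⟩ := isCompact_Icc.exists_bound_of_continuousOn hf
  obtain ⟨Cg, hCg⟩ := isCompact_Icc.exists_bound_of_continuousOn hg
  simp only [Real.norm_eq_abs] at hCf hCg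
  have hXfin : (Kset δ (Set.Icc (0:ℝ) 1)).Finite := Kset_finite hδ subset_rfl
  set X := hXfin.toFinset with hX
  set m := X.card with hmdef
  refine ⟨m, ?_⟩
  -- membership in X ↔ Iv nonempty
  have hmem : ∀ i : ℤ, i ∈ X ↔ (Iv δ i).Nonempty := by
    intro i
    rw [hX, Set.Finite.mem_toFinset]
    rfl
  -- empty case facts
  have hIvempty : ∀ i ∉ X, Iv δ i = ∅ := by
    intro i hi
    rw [hmem] at hi
    exact Set.not_nonempty_iff_eq_empty.mp hi
  -- finiteness of all relevant Kset's
  have hfinf : ∀ i, (Kset δ (f '' Iv δ i)).Finite :=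
    fun i => Kset_finite hδ (img_subset hCf δ i)
  have hfing : ∀ j, (Kset δ (g '' Iv δ j)).Finite :=
    fun j => Kset_finite hδ (img_subset hCg δ j)
  have hsumsub : ∀ i j, f '' Iv δ i + g '' Iv δ j ⊆ Set.Icc (-(Cf+Cg)) (Cf+Cg) := by
    intro i j y hy
    rw [Set.mem_add] at hy
    obtain ⟨a, ha, b, hb, rfl⟩ := hy
    obtain ⟨ha1, ha2⟩ := img_subset hCf δ i ha
    obtain ⟨hb1, hb2⟩ := img_subset hCg δ j hb
    exact ⟨by linarith, by linarith⟩
  have hfinfg : ∀ i j, (Kset δ (f '' Iv δ i + g '' Iv δ j)).Finite :=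
    fun i j => Kset_finite hδ (hsumsub i j)
  -- empty propagation
  have hKf_empty : ∀ i ∉ X, Kset δ (f '' Iv δ i) = ∅ := by
    intro i hi; rw [hIvempty i hi, Set.image_empty, Kset_empty]
  have hKg_empty : ∀ j ∉ X, Kset δ (g '' Iv δ j) = ∅ := by
    intro j hj; rw [hIvempty j hj, Set.image_empty, Kset_empty]
  have hKfg_emptyL : ∀ i ∉ X, ∀ j, Kset δ (f '' Iv δ i + g '' Iv δ j) = ∅ := by
    intro i hi j
    rw [hIvempty i hi, Set.image_empty, Set.empty_add, Kset_empty]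
  have hKfg_emptyR : ∀ j ∉ X, ∀ i, Kset δ (f '' Iv δ i + g '' Iv δ j) = ∅ := by
    intro j hj i
    rw [hIvempty j hj, Set.image_empty, Set.add_empty, Kset_empty]
  -- sum decompositions
  have hNf : meshCount2 δ (Gr1 f) = ∑ i ∈ X, (Kset δ (f '' Iv δ i)).ncard := by
    rw [mesh2_decomp]
    exact sigma_ncard X _ hfinf hKf_empty
  have hNg : meshCount2 δ (Gr1 g) = ∑ j ∈ X, (Kset δ (g '' Iv δ j)).ncard := by
    rw [mesh2_decomp]
    exact sigma_ncard X _ hfing hKg_empty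
  have hN3 : meshCount3 δ (Gr2 fun x y => f x + g y)
      = ∑ i ∈ X, ∑ j ∈ X, (Kset δ (f '' Iv δ i + g '' Iv δ j)).ncard := by
    rw [mesh3_decomp]
    have houter := sigma_ncard X
      (fun i => {q : ℤ × ℤ | q.2 ∈ Kset δ (f '' Iv δ i + g '' Iv δ q.1)})
      (fun i => sigma_finite X _ (fun j => hfinfg i j)
        (fun j hj => hKfg_emptyR j hj i))
      (fun i hi => by
        ext ⟨j, k⟩
        simp [hKfg_emptyL i hi j])
    rw [houter]
    refine Finset.sum_congr rfl fun i _ => ?_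
    exact sigma_ncard X _ (fun j => hfinfg i j) (fun j hj => hKfg_emptyR j hj i)
  -- notation for counts
  set c : ℤ → ℕ := fun i => (Kset δ (f '' Iv δ i)).ncard with hc
  set c' : ℤ → ℕ := fun j => (Kset δ (g '' Iv δ j)).ncard with hc'
  set n : ℤ → ℤ → ℕ := fun i j => (Kset δ (f '' Iv δ i + g '' Iv δ j)).ncard with hn
  -- per-cell bounds
  have key : ∀ i ∈ X, ∀ j ∈ X,
      1 ≤ n i j ∧ c i ≤ n i j + 2 ∧ c' j ≤ n i j + 2 ∧ n i j ≤ c i + c' j + 2 := by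
    intro i hi j hj
    have hnei := (hmem i).mp hi
    have hnej := (hmem j).mp hj
    obtain ⟨hfne, hfbb, hfba, hfoc⟩ := img_spec hf hCf δ hnei
    obtain ⟨hgne, hgbb, hgba, hgoc⟩ := img_spec hg hCg δ hnej
    obtain ⟨_, hc1, hc2, hc3⟩ := Kset_spec hδ hfne hfbb hfba hfoc
    obtain ⟨_, hd1, hd2, hd3⟩ := Kset_spec hδ hgne hgbb hgba hgoc
    -- sum set properties
    have hsne : (f '' Iv δ i + g '' Iv δ j).Nonempty := hfne.add hgne
    have hsbb : BddBelow (f '' Iv δ i + g '' Iv δ j) :=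
      (bddBelow_Icc : BddBelow (Set.Icc (-(Cf+Cg)) (Cf+Cg))).mono (hsumsub i j)
    have hsba : BddAbove (f '' Iv δ i + g '' Iv δ j) :=
      (bddAbove_Icc (a := -(Cf+Cg)) (b := Cf+Cg)).mono (hsumsub i j)
    have hsoc : (f '' Iv δ i + g '' Iv δ j).OrdConnected :=
      convex_iff_ordConnected.mp
        ((convex_iff_ordConnected.mpr hfoc).add (convex_iff_ordConnected.mpr hgoc))
    obtain ⟨_, hn1, hn2, hn3⟩ := Kset_spec hδ hsne hsbb hsba hsoc
    have hsup : sSup (f '' Iv δ i + g '' Iv δ j)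
        = sSup (f '' Iv δ i) + sSup (g '' Iv δ j) := csSup_add hfne hfba hgne hgba
    have hinf : sInf (f '' Iv δ i + g '' Iv δ j)
        = sInf (f '' Iv δ i) + sInf (g '' Iv δ j) := csInf_add hfne hfbb hgne hgbb
    rw [hsup, hinf] at hn2 hn3
    have hdf : sInf (f '' Iv δ i) ≤ sSup (f '' Iv δ i) := csInf_le_csSup hfne hfbb hfba
    have hdg : sInf (g '' Iv δ j) ≤ sSup (g '' Iv δ j) := csInf_le_csSup hgne hgbb hgba
    refine ⟨hn1, ?_, ?_, ?_⟩
    · have : (c i : ℝ) ≤ (n i j : ℝ) + 2 := by nlinarith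
      exact_mod_cast this
    · have : (c' j : ℝ) ≤ (n i j : ℝ) + 2 := by nlinarith
      exact_mod_cast this
    · have : (n i j : ℝ) ≤ (c i : ℝ) + (c' j : ℝ) + 2 := by nlinarith
      exact_mod_cast this
  have key1 : ∀ i ∈ X, 1 ≤ c i := by
    intro i hi
    have hnei := (hmem i).mp hi
    obtain ⟨hfne, hfbb, hfba, hfoc⟩ := img_spec hf hCf δ hnei
    exact (Kset_spec hδ hfne hfbb hfba hfoc).2.1
  have key1' : ∀ j ∈ X, 1 ≤ c' j := by
    intro j hj
    have hnej := (hmem j).mp hj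
    obtain ⟨hgne, hgbb, hgba, hgoc⟩ := img_spec hg hCg δ hnej
    exact (Kset_spec hδ hgne hgbb hgba hgoc).2.1
  -- bounds for m
  have hIccspec := Kset_spec hδ (Set.nonempty_Icc.mpr zero_le_one) bddBelow_Icc
    bddAbove_Icc Set.ordConnected_Icc
  have hmcard : m = (Kset δ (Set.Icc (0:ℝ) 1)).ncard := by
    rw [hmdef, hX, ← Set.ncard_eq_toFinset_card _ hXfin]
  have hsupIcc : sSup (Set.Icc (0:ℝ) 1) = 1 := csSup_Icc zero_le_one
  have hinfIcc : sInf (Set.Icc (0:ℝ) 1) = 0 := csInf_Icc zero_le_one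
  rw [hsupIcc, hinfIcc] at hIccspec
  have hm1 : 1 ≤ m := by rw [hmcard]; exact hIccspec.2.1
  have hm2 : 1 ≤ (m:ℝ)*δ := by
    have := hIccspec.2.2.1
    rw [← hmcard] at this
    linarith
  have hm3 : (m:ℝ)*δ ≤ 1 + 2*δ := by
    have := hIccspec.2.2.2
    rw [← hmcard] at this
    linarith
  have hmNf : m ≤ meshCount2 δ (Gr1 f) := by
    rw [hNf]
    calc m = ∑ _i ∈ X, 1 := by rw [Finset.sum_const, smul_eq_mul, mul_one]
    _ ≤ ∑ i ∈ X, c i := Finset.sum_le_sum key1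
  have hmNg : m ≤ meshCount2 δ (Gr1 g) := by
    rw [hNg]
    calc m = ∑ _j ∈ X, 1 := by rw [Finset.sum_const, smul_eq_mul, mul_one]
    _ ≤ ∑ j ∈ X, c' j := Finset.sum_le_sum key1'
  refine ⟨hm1, hm2, hm3, hmNf, hmNg, ?_, ?_, ?_⟩
  · -- m * Nf ≤ 3 * N3
    rw [hNf, hN3, Finset.mul_sum, Finset.mul_sum]
    have : ∀ i ∈ X, m * c i ≤ 3 * ∑ j ∈ X, n i j := by
      intro i hi
      calc m * c i = ∑ j ∈ X, c i := by rw [Finset.sum_const, smul_eq_mul]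
      _ ≤ ∑ j ∈ X, 3 * n i j := Finset.sum_le_sum (fun j hj => by
          obtain ⟨h1, h2, _, _⟩ := key i hi j hj
          omega)
      _ = 3 * ∑ j ∈ X, n i j := by rw [Finset.mul_sum]
    exact Finset.sum_le_sum this
  · -- m * Ng ≤ 3 * N3
    rw [hNg, hN3, Finset.mul_sum]
    rw [show (3 : ℕ) * ∑ i ∈ X, ∑ j ∈ X, n i j
        = ∑ i ∈ X, ∑ j ∈ X, 3 * n i j by
      rw [Finset.mul_sum]
      exact Finset.sum_congr rfl fun i _ => by rw [Finset.mul_sum]]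
    rw [show ∑ j ∈ X, m * c' j = ∑ i ∈ X, ∑ j ∈ X, c' j by
      rw [Finset.sum_comm]
      exact Finset.sum_congr rfl fun j _ => by rw [Finset.sum_const, smul_eq_mul, mul_comm]]
    refine Finset.sum_le_sum fun i hi => Finset.sum_le_sum fun j hj => ?_
    obtain ⟨h1, _, h3, _⟩ := key i hi j hj
    omega
  · -- N3 ≤ m*Nf + m*Ng + 2*m*m
    rw [hNf, hNg, hN3]
    calc ∑ i ∈ X, ∑ j ∈ X, n i j
        ≤ ∑ i ∈ X, ∑ j ∈ X, (c i + c' j + 2) :=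
          Finset.sum_le_sum fun i hi => Finset.sum_le_sum fun j hj =>
            (key i hi j hj).2.2.2
    _ = m * ∑ i ∈ X, c i + m * ∑ j ∈ X, c' j + 2 * m * m := by
        simp only [Finset.sum_add_distrib, Finset.sum_const, smul_eq_mul, ← Finset.mul_sum]
        ring
    _ = _ := rfl

theorem aux_main (f g : ℝ → ℝ)
    (hf : ContinuousOn f (Icc 0 1)) (hg : ContinuousOn g (Icc 0 1))
    (Df Dg : ℝ) (hDf : HasBoxDim2 (Gr1 f) Df) (hDg : HasBoxDim2 (Gr1 g) Dg) :
    HasBoxDim3 (Gr2 fun x y => f x + g y) (1 + max Df Dg) := by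
  classical
  -- choose m for each δ
  set M : ℝ → ℕ := fun δ =>
    if h : 0 < δ then (main_bounds f g hf hg h).choose else 0 with hM
  -- abbreviations
  set Nf : ℝ → ℕ := fun δ => meshCount2 δ (Gr1 f) with hNfd
  set Ng : ℝ → ℕ := fun δ => meshCount2 δ (Gr1 g) with hNgd
  set N3 : ℝ → ℕ := fun δ => meshCount3 δ (Gr2 fun x y => f x + g y) with hN3d
  have hMspec : ∀ δ : ℝ, 0 < δ →
      1 ≤ M δ ∧ 1 ≤ (M δ:ℝ)*δ ∧ (M δ:ℝ)*δ ≤ 1 + 2*δ ∧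
      M δ ≤ Nf δ ∧ M δ ≤ Ng δ ∧
      M δ * Nf δ ≤ 3 * N3 δ ∧ M δ * Ng δ ≤ 3 * N3 δ ∧
      N3 δ ≤ M δ * Nf δ + M δ * Ng δ + 2 * M δ * M δ := by
    intro δ h
    rw [hM]
    simp only [dif_pos h]
    exact (main_bounds f g hf hg h).choose_spec
  -- the filter facts
  have hl : Tendsto (fun δ : ℝ => -Real.log δ) (𝓝[>] 0) atTop :=
    tendsto_neg_atBot_atTop.comp Real.tendsto_log_nhdsGT_zero
  have hIoo : ∀ᶠ δ in 𝓝[>] (0:ℝ), δ ∈ Set.Ioo (0:ℝ) 1 :=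
    Ioo_mem_nhdsGT_of_mem ⟨le_refl 0, zero_lt_one⟩
  have hzero : ∀ c : ℝ, Tendsto (fun δ : ℝ => c / (-Real.log δ)) (𝓝[>] 0) (𝓝 0) :=
    fun c => tendsto_const_nhds.div_atTop hl
  -- pointwise real facts for δ ∈ Ioo 0 1
  have hreal : ∀ δ ∈ Set.Ioo (0:ℝ) 1,
      0 < -Real.log δ ∧
      1 ≤ (M δ : ℝ) ∧ 1 ≤ (Nf δ : ℝ) ∧ 1 ≤ (Ng δ : ℝ) ∧ 1 ≤ (N3 δ : ℝ) ∧
      -Real.log δ ≤ Real.log (M δ) ∧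
      Real.log (M δ) ≤ Real.log 3 + -Real.log δ ∧
      Real.log (M δ) + Real.log (max (Nf δ) (Ng δ) : ℕ) - Real.log 3 ≤ Real.log (N3 δ) ∧
      Real.log (N3 δ) ≤ Real.log (M δ) + Real.log (max (Nf δ) (Ng δ) : ℕ) + Real.log 4 ∧
      Real.log (max (Nf δ) (Ng δ) : ℕ) = max (Real.log (Nf δ)) (Real.log (Ng δ)) := by
    intro δ hδ
    obtain ⟨hδ0, hδ1⟩ := hδ
    obtain ⟨q1, q2, q3, q4, q5, q6, q7, q8⟩ := hMspec δ hδ0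
    have hlog : 0 < -Real.log δ := by
      have := Real.log_neg hδ0 hδ1
      linarith
    have hm1 : 1 ≤ (M δ : ℝ) := by exact_mod_cast q1
    have hf1 : 1 ≤ (Nf δ : ℝ) := by
      have : 1 ≤ Nf δ := le_trans q1 q4
      exact_mod_cast this
    have hg1 : 1 ≤ (Ng δ : ℝ) := by
      have : 1 ≤ Ng δ := le_trans q1 q5
      exact_mod_cast this
    have h31 : 1 ≤ N3 δ := by nlinarith [q1, q4, q6]
    have h31' : 1 ≤ (N3 δ : ℝ) := by exact_mod_cast h31
    -- Q facts
    have hQcast : ((max (Nf δ) (Ng δ) : ℕ) : ℝ) = max (Nf δ : ℝ) (Ng δ : ℝ) :=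
      Nat.cast_max _ _
    have hQ1 : 1 ≤ ((max (Nf δ) (Ng δ) : ℕ) : ℝ) := by
      rw [hQcast]; exact le_trans hf1 (le_max_left _ _)
    have hmQ : (M δ : ℝ) * ((max (Nf δ) (Ng δ) : ℕ) : ℝ) ≤ 3 * (N3 δ : ℝ) := by
      rw [hQcast]
      rcases max_cases (Nf δ : ℝ) (Ng δ : ℝ) with ⟨h, _⟩ | ⟨h, _⟩ <;> rw [h]
      · exact_mod_cast q6
      · exact_mod_cast q7
    have hN3Q : (N3 δ : ℝ) ≤ 4 * ((M δ : ℝ) * ((max (Nf δ) (Ng δ) : ℕ) : ℝ)) := by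
      rw [hQcast]
      have e1 : (N3 δ : ℝ) ≤ (M δ:ℝ) * (Nf δ:ℝ) + (M δ:ℝ) * (Ng δ:ℝ)
          + 2 * (M δ:ℝ) * (M δ:ℝ) := by exact_mod_cast q8
      have e2 : (Nf δ:ℝ) ≤ max (Nf δ : ℝ) (Ng δ : ℝ) := le_max_left _ _
      have e3 : (Ng δ:ℝ) ≤ max (Nf δ : ℝ) (Ng δ : ℝ) := le_max_right _ _
      have e4 : (M δ:ℝ) ≤ max (Nf δ : ℝ) (Ng δ : ℝ) := by
        have : (M δ:ℝ) ≤ (Nf δ:ℝ) := by exact_mod_cast q4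
        linarith
      nlinarith
    -- log bounds for M
    have hMlow : -Real.log δ ≤ Real.log (M δ) := by
      have h1 : (1:ℝ)/δ ≤ (M δ : ℝ) := by
        rw [div_le_iff₀ hδ0]; linarith
      calc -Real.log δ = Real.log (1/δ) := by rw [Real.log_div one_ne_zero hδ0.ne']; simp
      _ ≤ Real.log (M δ) := Real.log_le_log (by positivity) h1
    have hMhigh : Real.log (M δ) ≤ Real.log 3 + -Real.log δ := by
      have h1 : (M δ : ℝ) ≤ 3/δ := by
        rw [le_div_iff₀ hδ0]; linarith
      calc Real.log (M δ) ≤ Real.log (3/δ) := Real.log_le_log (by linarith) h1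
      _ = Real.log 3 + -Real.log δ := by
          rw [Real.log_div (by norm_num) hδ0.ne']; ring
    -- log bounds for N3
    have hlow : Real.log (M δ) + Real.log (max (Nf δ) (Ng δ) : ℕ) - Real.log 3
        ≤ Real.log (N3 δ) := by
      have h1 : (M δ:ℝ) * ((max (Nf δ) (Ng δ) : ℕ):ℝ) / 3 ≤ (N3 δ : ℝ) := by linarith
      calc Real.log (M δ) + Real.log (max (Nf δ) (Ng δ) : ℕ) - Real.log 3
          = Real.log ((M δ:ℝ) * ((max (Nf δ) (Ng δ) : ℕ):ℝ) / 3) := by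
            rw [Real.log_div (by positivity) (by norm_num),
              Real.log_mul (by positivity) (by positivity)]
      _ ≤ Real.log (N3 δ) := Real.log_le_log (by positivity) h1
    have hhigh : Real.log (N3 δ)
        ≤ Real.log (M δ) + Real.log (max (Nf δ) (Ng δ) : ℕ) + Real.log 4 := by
      have h1 : (N3 δ : ℝ) ≤ (M δ:ℝ) * ((max (Nf δ) (Ng δ) : ℕ):ℝ) * 4 := by linarith
      calc Real.log (N3 δ) ≤ Real.log ((M δ:ℝ) * ((max (Nf δ) (Ng δ) : ℕ):ℝ) * 4) :=
            Real.log_le_log (by linarith) h1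
      _ = _ := by
          rw [Real.log_mul (by positivity) (by norm_num),
            Real.log_mul (by positivity) (by positivity)]
    have hmax : Real.log (max (Nf δ) (Ng δ) : ℕ)
        = max (Real.log (Nf δ)) (Real.log (Ng δ)) := by
      rcases max_cases (Nf δ) (Ng δ) with ⟨h, h'⟩ | ⟨h, h'⟩ <;> rw [h]
      · rw [max_eq_left]
        exact Real.log_le_log (by linarith) (by exact_mod_cast h')
      · rw [max_eq_right]
        exact Real.log_le_log (by linarith) (by exact_mod_cast (le_of_lt h'))
    exact ⟨hlog, hm1, hf1, hg1, h31', hMlow, hMhigh, hlow, hhigh, hmax⟩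
  -- limit of log M / l
  have hMlim : Tendsto (fun δ : ℝ => Real.log (M δ) / (-Real.log δ)) (𝓝[>] 0) (𝓝 1) := by
    apply tendsto_of_tendsto_of_tendsto_of_le_of_le'
      (tendsto_const_nhds : Tendsto (fun _ : ℝ => (1:ℝ)) _ _)
      (by simpa using ((tendsto_const_nhds : Tendsto (fun _ : ℝ => (1:ℝ)) (𝓝[>] 0) _).add
        (hzero (Real.log 3))))
    · filter_upwards [hIoo] with δ hδ
      obtain ⟨hlog, _, _, _, _, hMlow, _⟩ := hreal δ hδ
      rw [le_div_iff₀ hlog]; linarith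
    · filter_upwards [hIoo] with δ hδ
      obtain ⟨hlog, _, _, _, _, _, hMhigh, _⟩ := hreal δ hδ
      rw [div_le_iff₀ hlog]
      have h2 : 0 ≤ Real.log 3 / (-Real.log δ) * (-Real.log δ) := by
        rw [div_mul_cancel₀ _ hlog.ne']
        positivity
      calc Real.log (M δ) ≤ Real.log 3 + -Real.log δ := hMhigh
      _ = (1 + Real.log 3 / (-Real.log δ)) * (-Real.log δ) := by
          rw [add_mul, one_mul, div_mul_cancel₀ _ hlog.ne']
          ring
  -- limit of log Q / l
  have hQlim : Tendsto (fun δ : ℝ => Real.log (max (Nf δ) (Ng δ) : ℕ) / (-Real.log δ))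
      (𝓝[>] 0) (𝓝 (max Df Dg)) := by
    apply Tendsto.congr' _ (hDf.max hDg)
    filter_upwards [hIoo] with δ hδ
    obtain ⟨hlog, _, _, _, _, _, _, _, _, hmax⟩ := hreal δ hδ
    rw [max_div_div_right hlog.le, ← hmax]
  -- final squeeze
  show Tendsto (fun δ : ℝ => Real.log (N3 δ) / (-Real.log δ)) (𝓝[>] 0)
    (𝓝 (1 + max Df Dg))
  apply tendsto_of_tendsto_of_tendsto_of_le_of_le'
    (g := fun δ : ℝ => Real.log (M δ) / (-Real.log δ)
      + Real.log (max (Nf δ) (Ng δ) : ℕ) / (-Real.log δ)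
      - Real.log 3 / (-Real.log δ))
    (h := fun δ : ℝ => Real.log (M δ) / (-Real.log δ)
      + Real.log (max (Nf δ) (Ng δ) : ℕ) / (-Real.log δ)
      + Real.log 4 / (-Real.log δ))
    (by simpa using (hMlim.add hQlim).sub (hzero (Real.log 3)))
    (by simpa using (hMlim.add hQlim).add (hzero (Real.log 4)))
  · filter_upwards [hIoo] with δ hδ
    obtain ⟨hlog, _, _, _, _, _, _, hlow, _, _⟩ := hreal δ hδ
    rw [← add_div, div_sub_div_same]
    gcongr
  · filter_upwards [hIoo] with δ hδ
    obtain ⟨hlog, _, _, _, _, _, _, _, hhigh, _⟩ := hreal δ hδ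
    rw [← add_div, ← add_div]
    gcongr

end Stmt11Aux
end

/-- **Lemma 7.** For continuous `f, g : [0,1] → ℝ` with box-counting dimensional graphs,
the graph of `F'(x,y) = f(x) + g(y)` has box-counting dimension
`1 + max{dim_B Gr(f), dim_B Gr(g)}`. -/
theorem stmt11 (f g : ℝ → ℝ)
    (hf : ContinuousOn f (Icc 0 1)) (hg : ContinuousOn g (Icc 0 1))
    (Df Dg : ℝ) (hDf : HasBoxDim2 (Gr1 f) Df) (hDg : HasBoxDim2 (Gr1 g) Dg) :
    HasBoxDim3 (Gr2 fun x y => f x + g y) (1 + max Df Dg) :=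
  Stmt11Aux.aux_main f g hf hg Df Dg hDf hDg
end

section
/- (Lemma 8) Let f : [0,1] → R be a continuous function whose graph has box-counting dimension dim_B Gr(f) (the defining limit exists), and let λ : [0,1] → R be a Lipschitz function with min_{x∈[0,1]} |λ(x)| > 0. Then the box-counting dimension of the graph of the product λf, defined by (λf)(x) = λ(x) f(x), exists and equals that of f: dim_B Gr(λf) = dim_B Gr(f). -/
open Set Filter Topology

namespace Stmt12Aux

noncomputable def idx (δ x : ℝ) : ℤ := ⌊x / δ⌋

lemma mem_Ico_iff_idx {δ : ℝ} (hδ : 0 < δ) {x : ℝ} {k : ℤ} :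
    x ∈ Set.Ico ((k : ℝ) * δ) (((k : ℝ) + 1) * δ) ↔ idx δ x = k := by
  rw [Set.mem_Ico, idx, Int.floor_eq_iff, le_div_iff₀ hδ, div_lt_iff₀ hδ]

lemma mem_Ico_idx {δ : ℝ} (hδ : 0 < δ) (x : ℝ) :
    x ∈ Set.Ico ((idx δ x : ℝ) * δ) (((idx δ x : ℝ) + 1) * δ) :=
  (mem_Ico_iff_idx hδ).mpr rfl

lemma abs_idx_sub_le {δ : ℝ} (hδ : 0 < δ) {x y L : ℝ} (h : |x - y| ≤ L * δ) :
    |idx δ x - idx δ y| ≤ ⌊L⌋ + 1 := by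
  have h1 : |x / δ - y / δ| ≤ L := by
    rw [div_sub_div_same, abs_div, abs_of_pos hδ, div_le_iff₀ hδ]
    exact h
  have h2 := abs_le.mp h1
  have hd : |((idx δ x - idx δ y : ℤ) : ℝ)| ≤ L + 1 := by
    have f1 := Int.floor_le (x / δ)
    have f2 := Int.lt_floor_add_one (x / δ)
    have f3 := Int.floor_le (y / δ)
    have f4 := Int.lt_floor_add_one (y / δ)
    rw [abs_le]
    unfold idx
    push_cast
    constructor <;> linarith [h2.1, h2.2]
  have : |idx δ x - idx δ y| ≤ ⌊L + 1⌋ := by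
    apply Int.le_floor.mpr
    rwa [Int.cast_abs]
  rwa [Int.floor_add_one] at this


def box (δ : ℝ) (k : ℤ × ℤ) : Set (ℝ × ℝ) :=
  Set.Ico ((k.1 : ℝ) * δ) (((k.1 : ℝ) + 1) * δ) ×ˢ
    Set.Ico ((k.2 : ℝ) * δ) (((k.2 : ℝ) + 1) * δ)

def idxSet (δ : ℝ) (A : Set (ℝ × ℝ)) : Set (ℤ × ℤ) := {k | (A ∩ box δ k).Nonempty}

lemma meshCount2_eq (δ : ℝ) (A : Set (ℝ × ℝ)) : meshCount2 δ A = (idxSet δ A).ncard := rfl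

noncomputable def idx2 (δ : ℝ) (p : ℝ × ℝ) : ℤ × ℤ := (idx δ p.1, idx δ p.2)

lemma mem_box_iff_idx2 {δ : ℝ} (hδ : 0 < δ) {p : ℝ × ℝ} {k : ℤ × ℤ} :
    p ∈ box δ k ↔ idx2 δ p = k := by
  simp only [box, Set.mem_prod, mem_Ico_iff_idx hδ, idx2, Prod.ext_iff]

lemma mem_box_idx2 {δ : ℝ} (hδ : 0 < δ) (p : ℝ × ℝ) : p ∈ box δ (idx2 δ p) :=
  (mem_box_iff_idx2 hδ).mpr rfl

lemma dist_le_of_mem_box {δ : ℝ} (hδ : 0 < δ) {p q : ℝ × ℝ} {k : ℤ × ℤ}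
    (hp : p ∈ box δ k) (hq : q ∈ box δ k) : dist p q ≤ δ := by
  obtain ⟨⟨hp1, hp1'⟩, hp2, hp2'⟩ := hp
  obtain ⟨⟨hq1, hq1'⟩, hq2, hq2'⟩ := hq
  rw [Prod.dist_eq, max_le_iff, Real.dist_eq, Real.dist_eq]
  constructor <;> rw [abs_le] <;> constructor <;> nlinarith

lemma idxSet_finite {A : Set (ℝ × ℝ)} {R δ : ℝ} (hδ : 0 < δ)
    (hA : ∀ p ∈ A, |p.1| ≤ R ∧ |p.2| ≤ R) : (idxSet δ A).Finite := by
  apply Set.Finite.subset ((Set.finite_Icc (⌊-R / δ⌋ - 1) ⌊R / δ⌋).prod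
    (Set.finite_Icc (⌊-R / δ⌋ - 1) ⌊R / δ⌋))
  rintro ⟨k1, k2⟩ ⟨p, hpA, hp⟩
  obtain ⟨⟨h11, h12⟩, h21, h22⟩ := hp
  obtain ⟨hb1, hb2⟩ := hA p hpA
  have hb1' := abs_le.mp hb1
  have hb2' := abs_le.mp hb2
  have key : ∀ (k : ℤ) (x : ℝ), (k : ℝ) * δ ≤ x → x < ((k : ℝ) + 1) * δ →
      -R ≤ x → x ≤ R → k ∈ Set.Icc (⌊-R / δ⌋ - 1) ⌊R / δ⌋ := by
    intro k x h1 h2 h3 h4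
    constructor
    · have : (-R) / δ < (k : ℝ) + 1 := by
        rw [div_lt_iff₀ hδ]; nlinarith
      have := lt_of_le_of_lt (Int.floor_le ((-R) / δ)) this
      have : ⌊-R / δ⌋ < k + 1 := by exact_mod_cast this
      omega
    · apply Int.le_floor.mpr
      rw [le_div_iff₀ hδ]; nlinarith
  exact ⟨key k1 p.1 h11 h12 hb1'.1 hb1'.2, key k2 p.2 h21 h22 hb2'.1 hb2'.2⟩

lemma meshCount2_pos {A : Set (ℝ × ℝ)} {δ : ℝ} (hδ : 0 < δ) (hne : A.Nonempty)
    (hfin : (idxSet δ A).Finite) : 0 < meshCount2 δ A := by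
  rw [meshCount2_eq]
  rw [Set.ncard_pos hfin]
  obtain ⟨p, hp⟩ := hne
  exact ⟨idx2 δ p, p, hp, mem_box_idx2 hδ p⟩

lemma ncard_prod {α β : Type*} {s : Set α} {t : Set β} (hs : s.Finite) (ht : t.Finite) :
    (s ×ˢ t).ncard = s.ncard * t.ncard := by
  rw [Set.ncard_eq_toFinset_card _ (hs.prod ht), Set.ncard_eq_toFinset_card _ hs,
    Set.ncard_eq_toFinset_card _ ht, ← Finset.card_product]
  congr 1
  ext ⟨a, b⟩
  simp [Set.Finite.mem_toFinset]

lemma ncard_Icc_int (M : ℤ) (hM : 0 ≤ M) : (Set.Icc (-M) M).ncard = 2 * M.toNat + 1 := by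
  rw [← Finset.coe_Icc, Set.ncard_coe_finset, Int.card_Icc]
  omega


lemma count_image_le {A : Set (ℝ × ℝ)} {g : ℝ × ℝ → ℝ × ℝ} {L : ℝ} (hL : 0 ≤ L)
    (hg : ∀ a ∈ A, ∀ b ∈ A, dist (g a) (g b) ≤ L * dist a b)
    {δ : ℝ} (hδ : 0 < δ) (hfin : (idxSet δ A).Finite) :
    meshCount2 δ (g '' A) ≤ (2 * (⌊L⌋ + 1).toNat + 1) ^ 2 * meshCount2 δ A := by
  classical
  set M : ℤ := ⌊L⌋ + 1 with hM
  have hM0 : 0 ≤ M := by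
    have := Int.floor_nonneg.mpr hL; omega
  set F : Set (ℤ × ℤ) := Set.Icc (-M) M ×ˢ Set.Icc (-M) M with hF
  have hFfin : F.Finite := (Set.finite_Icc _ _).prod (Set.finite_Icc _ _)
  have hq : ∀ k ∈ idxSet δ (g '' A), ∃ a, a ∈ A ∧ g a ∈ box δ k := by
    rintro k ⟨p, ⟨a, haA, rfl⟩, hpb⟩
    exact ⟨a, haA, hpb⟩
  choose! a haA hab using hq
  have hr : ∀ j ∈ idxSet δ A, ∃ p, p ∈ A ∧ p ∈ box δ j := by
    rintro j ⟨p, hpA, hpb⟩; exact ⟨p, hpA, hpb⟩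
  choose! r hrA hrb using hr
  rw [meshCount2_eq, meshCount2_eq]
  have key : ∀ k ∈ idxSet δ (g '' A),
      idx2 δ (a k) ∈ idxSet δ A ∧
      k - idx2 δ (g (r (idx2 δ (a k)))) ∈ F := by
    intro k hk
    have haA' := haA k hk
    have hab' := hab k hk
    set j := idx2 δ (a k) with hj
    have hjmem : j ∈ idxSet δ A := ⟨a k, haA', mem_box_idx2 hδ (a k)⟩
    refine ⟨hjmem, ?_⟩
    have hrA' := hrA j hjmem
    have hrb' := hrb j hjmem
    have hd : dist (a k) (r j) ≤ δ := dist_le_of_mem_box hδ (mem_box_idx2 hδ (a k)) hrb'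
    have hgd : dist (g (a k)) (g (r j)) ≤ L * δ :=
      le_trans (hg _ haA' _ hrA') (by nlinarith [dist_nonneg (x := a k) (y := r j)])
    have hk1 : k = idx2 δ (g (a k)) := ((mem_box_iff_idx2 hδ).mp hab').symm
    have h1 : |(g (a k)).1 - (g (r j)).1| ≤ L * δ := by
      rw [← Real.dist_eq]
      exact le_trans (by rw [Prod.dist_eq]; exact le_max_left _ _) hgd
    have h2 : |(g (a k)).2 - (g (r j)).2| ≤ L * δ := by
      rw [← Real.dist_eq]
      exact le_trans (by rw [Prod.dist_eq]; exact le_max_right _ _) hgd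
    have e1 := abs_le.mp (abs_idx_sub_le hδ h1)
    have e2 := abs_le.mp (abs_idx_sub_le hδ h2)
    rw [hk1]
    constructor
    · constructor <;> simp only [idx2, Prod.fst_sub, Prod.snd_sub] <;> omega
    · constructor <;> simp only [idx2, Prod.fst_sub, Prod.snd_sub] <;> omega
  calc (idxSet δ (g '' A)).ncard
      ≤ (idxSet δ A ×ˢ F).ncard := by
        refine Set.ncard_le_ncard_of_injOn
          (fun k => (idx2 δ (a k), k - idx2 δ (g (r (idx2 δ (a k)))))) ?_ ?_ (hfin.prod hFfin)
        · intro k hk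
          exact Set.mk_mem_prod (key k hk).1 (key k hk).2
        · intro k hk k' hk' h
          have h1 : idx2 δ (a k) = idx2 δ (a k') := congrArg Prod.fst h
          have h2 := congrArg Prod.snd h
          simp only at h2
          rw [h1] at h2
          exact sub_left_injective h2
    _ = (2 * M.toNat + 1) ^ 2 * (idxSet δ A).ncard := by
        rw [ncard_prod hfin hFfin, hF, ncard_prod (Set.finite_Icc _ _) (Set.finite_Icc _ _),
          ncard_Icc_int M hM0, mul_comm]
        ring
    _ = (2 * (⌊L⌋ + 1).toNat + 1) ^ 2 * (idxSet δ A).ncard := rfl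


lemma transfer {A B : Set (ℝ × ℝ)} {D : ℝ} (hA : HasBoxDim2 A D) {C : ℕ}
    (h1 : ∀ δ : ℝ, 0 < δ → meshCount2 δ B ≤ C * meshCount2 δ A)
    (h2 : ∀ δ : ℝ, 0 < δ → meshCount2 δ A ≤ C * meshCount2 δ B)
    (hpA : ∀ δ : ℝ, 0 < δ → 0 < meshCount2 δ A)
    (hpB : ∀ δ : ℝ, 0 < δ → 0 < meshCount2 δ B) :
    HasBoxDim2 B D := by
  have hC : 0 < C := by
    by_contra h
    have : C = 0 := by omega
    have h1' := h1 1 one_pos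
    rw [this, zero_mul] at h1'
    have := hpB 1 one_pos
    omega
  have key : ∀ δ : ℝ, 0 < δ →
      |Real.log (meshCount2 δ B) - Real.log (meshCount2 δ A)| ≤ Real.log C := by
    intro δ hδ
    have pA := hpA δ hδ
    have pB := hpB δ hδ
    have cA : (0:ℝ) < (meshCount2 δ A : ℝ) := by exact_mod_cast pA
    have cB : (0:ℝ) < (meshCount2 δ B : ℝ) := by exact_mod_cast pB
    have cC : (0:ℝ) < (C : ℝ) := by exact_mod_cast hC
    have lB : Real.log (meshCount2 δ B) ≤ Real.log C + Real.log (meshCount2 δ A) := by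
      rw [← Real.log_mul (ne_of_gt cC) (ne_of_gt cA)]
      apply Real.log_le_log cB
      exact_mod_cast h1 δ hδ
    have lA : Real.log (meshCount2 δ A) ≤ Real.log C + Real.log (meshCount2 δ B) := by
      rw [← Real.log_mul (ne_of_gt cC) (ne_of_gt cB)]
      apply Real.log_le_log cA
      exact_mod_cast h2 δ hδ
    rw [abs_le]
    constructor <;> linarith
  have h0 : Tendsto (fun δ : ℝ => Real.log C * (-Real.log δ)⁻¹) (𝓝[>] (0:ℝ)) (𝓝 0) := by
    have ht : Tendsto (fun δ : ℝ => -Real.log δ) (𝓝[>] (0:ℝ)) atTop :=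
      tendsto_neg_atTop_iff.mpr Real.tendsto_log_nhdsGT_zero
    simpa using (ht.inv_tendsto_atTop).const_mul (Real.log C)
  have hdiff : Tendsto (fun δ : ℝ => Real.log (meshCount2 δ B) / (-Real.log δ)
      - Real.log (meshCount2 δ A) / (-Real.log δ)) (𝓝[>] (0:ℝ)) (𝓝 0) := by
    apply squeeze_zero_norm' _ h0
    have hmem : Set.Ioo (0:ℝ) 1 ∈ 𝓝[>] (0:ℝ) := Ioo_mem_nhdsGT_of_mem (by simp)
    filter_upwards [hmem] with δ hδ
    have hlog : Real.log δ < 0 := Real.log_neg hδ.1 hδ.2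
    have hpos : 0 < -Real.log δ := by linarith
    rw [div_sub_div_same, Real.norm_eq_abs, abs_div, abs_of_pos hpos, div_eq_mul_inv]
    gcongr
    exact key δ hδ.1
  have : (fun δ : ℝ => Real.log (meshCount2 δ B) / (-Real.log δ)) =
      fun δ : ℝ => Real.log (meshCount2 δ A) / (-Real.log δ) +
        (Real.log (meshCount2 δ B) / (-Real.log δ) - Real.log (meshCount2 δ A) / (-Real.log δ)) := by
    funext δ; ring
  rw [HasBoxDim2, this]
  simpa using hA.add hdiff


end Stmt12Aux


open Stmt12Aux in
/-- **Lemma 8.** For continuous `f : [0,1] → ℝ` whose graph has a box-counting dimension and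
a Lipschitz `λ : [0,1] → ℝ` with `min |λ| > 0`, the graph of `λf` has the same box-counting
dimension as that of `f`. -/
theorem stmt12 (f lam : ℝ → ℝ) (hf : ContinuousOn f (Icc 0 1))
    (hlip : ∃ K : NNReal, LipschitzOnWith K lam (Icc 0 1))
    (hmin : 0 < sInf ((fun x => |lam x|) '' Icc 0 1))
    (Df : ℝ) (hDf : HasBoxDim2 (Gr1 f) Df) :
    HasBoxDim2 (Gr1 fun x => lam x * f x) Df := by
  classical
  obtain ⟨K, hK⟩ := hlip
  set m : ℝ := sInf ((fun x => |lam x|) '' Icc 0 1) with hm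
  -- lower bound on |lam|
  have hlow : ∀ x ∈ Icc (0:ℝ) 1, m ≤ |lam x| := by
    intro x hx
    apply csInf_le
    · exact ⟨0, fun y ⟨z, _, hz⟩ => hz ▸ abs_nonneg _⟩
    · exact ⟨x, hx, rfl⟩
  have hlamne : ∀ x ∈ Icc (0:ℝ) 1, lam x ≠ 0 := by
    intro x hx h
    have := hlow x hx
    rw [h, abs_zero] at this
    linarith [hmin]
  -- Lipschitz estimate for lam
  have hKd : ∀ x ∈ Icc (0:ℝ) 1, ∀ y ∈ Icc (0:ℝ) 1, |lam x - lam y| ≤ (K:ℝ) * |x - y| := by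
    intro x hx y hy
    have := hK.dist_le_mul x hx y hy
    rwa [Real.dist_eq, Real.dist_eq] at this
  -- upper bound on |lam|
  set Λ : ℝ := |lam 0| + K with hΛdef
  have hΛ : ∀ x ∈ Icc (0:ℝ) 1, |lam x| ≤ Λ := by
    intro x hx
    have h0 : (0:ℝ) ∈ Icc (0:ℝ) 1 := ⟨le_refl _, zero_le_one⟩
    have := hKd x hx 0 h0
    have hxb : |x - 0| ≤ 1 := by
      rw [sub_zero, abs_of_nonneg hx.1]; exact hx.2
    have : |lam x - lam 0| ≤ (K:ℝ) := by
      calc |lam x - lam 0| ≤ (K:ℝ) * |x - 0| := this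
        _ ≤ (K:ℝ) * 1 := mul_le_mul_of_nonneg_left hxb K.coe_nonneg
        _ = K := mul_one _
    have e : lam 0 + (lam x - lam 0) = lam x := by ring
    calc |lam x| = |lam 0 + (lam x - lam 0)| := by rw [e]
      _ ≤ |lam 0| + |lam x - lam 0| := abs_add_le _ _
      _ ≤ |lam 0| + K := by linarith
  have hΛ0 : 0 < Λ := lt_of_lt_of_le (lt_of_lt_of_le hmin (hlow 0 ⟨le_refl _, zero_le_one⟩))
    (hΛ 0 ⟨le_refl _, zero_le_one⟩)
  -- bound on |f|
  obtain ⟨R0, hR0⟩ := (isCompact_Icc (a := (0:ℝ)) (b := 1)).exists_bound_of_continuousOn hf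
  set R : ℝ := max 1 R0 with hRdef
  have hR1 : (1:ℝ) ≤ R := le_max_left _ _
  have hRf : ∀ x ∈ Icc (0:ℝ) 1, |f x| ≤ R := fun x hx =>
    le_trans (hR0 x hx) (le_max_right _ _)
  -- the maps
  set Φ : ℝ × ℝ → ℝ × ℝ := fun p => (p.1, lam p.1 * p.2) with hΦdef
  set Ψ : ℝ × ℝ → ℝ × ℝ := fun p => (p.1, p.2 / lam p.1) with hΨdef
  set A : Set (ℝ × ℝ) := Gr1 f with hAdef
  set B : Set (ℝ × ℝ) := Gr1 (fun x => lam x * f x) with hBdef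
  have hgr1 : B = Φ '' A := by
    ext ⟨x, z⟩
    constructor
    · rintro ⟨hx, hz⟩
      exact ⟨(x, f x), ⟨hx, rfl⟩, by simp only [hΦdef]; exact Prod.ext rfl hz.symm⟩
    · rintro ⟨⟨x', y⟩, ⟨hx', hy⟩, h⟩
      simp only [hΦdef, Prod.ext_iff] at h
      obtain ⟨h1, h2⟩ := h
      subst h1
      exact ⟨hx', by simp at hy ⊢; rw [← h2, hy]⟩
  have hgr2 : A = Ψ '' B := by
    ext ⟨x, z⟩
    constructor
    · rintro ⟨hx, hz⟩
      refine ⟨(x, lam x * f x), ⟨hx, rfl⟩, ?_⟩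
      simp only [hΨdef]
      refine Prod.ext rfl ?_
      simp only
      rw [mul_comm, mul_div_assoc, div_self (hlamne x hx), mul_one]
      exact hz.symm
    · rintro ⟨⟨x', y⟩, ⟨hx', hy⟩, h⟩
      simp only [hΨdef, Prod.ext_iff] at h
      obtain ⟨h1, h2⟩ := h
      subst h1
      simp only at hy
      refine ⟨hx', ?_⟩
      simp only [← h2, hy]
      rw [mul_comm, mul_div_assoc, div_self (hlamne x' hx'), mul_one]
  -- bounds on the graphs
  have hAbd : ∀ p ∈ A, |p.1| ≤ R ∧ |p.2| ≤ R := by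
    rintro ⟨x, z⟩ ⟨hx, hz⟩
    constructor
    · calc |x| = x := abs_of_nonneg hx.1
        _ ≤ 1 := hx.2
        _ ≤ R := hR1
    · simp only at hz; rw [hz]; exact hRf x hx
  have hBbd : ∀ p ∈ B, |p.1| ≤ max 1 (Λ * R) ∧ |p.2| ≤ max 1 (Λ * R) := by
    rintro ⟨x, z⟩ ⟨hx, hz⟩
    constructor
    · calc |x| = x := abs_of_nonneg hx.1
        _ ≤ 1 := hx.2
        _ ≤ max 1 (Λ * R) := le_max_left _ _
    · simp only at hz
      calc |z| ≤ Λ * R := by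
            rw [hz, abs_mul]
            exact mul_le_mul (hΛ x hx) (hRf x hx) (abs_nonneg _) (le_of_lt hΛ0)
        _ ≤ max 1 (Λ * R) := le_max_right _ _
  -- Lipschitz constants
  set L : ℝ := max 1 (max (Λ + (K:ℝ) * R) ((Λ * R * (K:ℝ) + Λ) / (m * m))) with hLdef
  have hL0 : 0 ≤ L := le_trans zero_le_one (le_max_left _ _)
  have hL1 : (1:ℝ) ≤ L := le_max_left _ _
  have hLa : Λ + (K:ℝ) * R ≤ L := le_trans (le_max_left _ _) (le_max_right _ _)
  have hLb : (Λ * R * (K:ℝ) + Λ) / (m * m) ≤ L :=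
    le_trans (le_max_right _ _) (le_max_right _ _)
  -- Lipschitz estimate for Φ on A
  have hΦlip : ∀ a ∈ A, ∀ b ∈ A, dist (Φ a) (Φ b) ≤ L * dist a b := by
    rintro ⟨x, y⟩ ⟨hx, hy⟩ ⟨x', y'⟩ ⟨hx', hy'⟩
    simp only [hΦdef, Prod.dist_eq, Real.dist_eq]
    have hd1 : |x - x'| ≤ max |x - x'| |y - y'| := le_max_left _ _
    have hd2 : |y - y'| ≤ max |x - x'| |y - y'| := le_max_right _ _
    have hdnn : 0 ≤ max |x - x'| |y - y'| := le_trans (abs_nonneg _) hd1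
    have hR0' : (0:ℝ) ≤ R := le_trans zero_le_one hR1
    rw [max_le_iff]
    constructor
    · calc |x - x'| ≤ 1 * max |x - x'| |y - y'| := by rw [one_mul]; exact hd1
        _ ≤ L * max |x - x'| |y - y'| := mul_le_mul_of_nonneg_right hL1 hdnn
    · have e2 : |y'| ≤ R := by simp only at hy'; rw [hy']; exact hRf x' hx'
      have e1 : lam x * y - lam x' * y' = lam x * (y - y') + y' * (lam x - lam x') := by ring
      calc |lam x * y - lam x' * y'|
          ≤ |lam x * (y - y')| + |y' * (lam x - lam x')| := by rw [e1]; exact abs_add_le _ _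
        _ = |lam x| * |y - y'| + |y'| * |lam x - lam x'| := by rw [abs_mul, abs_mul]
        _ ≤ Λ * max |x - x'| |y - y'| + R * ((K:ℝ) * |x - x'|) :=
            add_le_add (mul_le_mul (hΛ x hx) hd2 (abs_nonneg _) (le_of_lt hΛ0))
              (mul_le_mul e2 (hKd x hx x' hx') (abs_nonneg _) hR0')
        _ ≤ Λ * max |x - x'| |y - y'| + R * ((K:ℝ) * max |x - x'| |y - y'|) :=
            add_le_add_right (mul_le_mul_of_nonneg_left
              (mul_le_mul_of_nonneg_left hd1 K.coe_nonneg) hR0') _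
        _ = (Λ + (K:ℝ) * R) * max |x - x'| |y - y'| := by ring
        _ ≤ L * max |x - x'| |y - y'| := mul_le_mul_of_nonneg_right hLa hdnn
  -- Lipschitz estimate for Ψ on B
  have hΨlip : ∀ a ∈ B, ∀ b ∈ B, dist (Ψ a) (Ψ b) ≤ L * dist a b := by
    rintro ⟨x, z⟩ ⟨hx, hz⟩ ⟨x', z'⟩ ⟨hx', hz'⟩
    simp only [hΨdef, Prod.dist_eq, Real.dist_eq]
    have hd1 : |x - x'| ≤ max |x - x'| |z - z'| := le_max_left _ _
    have hd2 : |z - z'| ≤ max |x - x'| |z - z'| := le_max_right _ _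
    have hdnn : 0 ≤ max |x - x'| |z - z'| := le_trans (abs_nonneg _) hd1
    have hR0' : (0:ℝ) ≤ R := le_trans zero_le_one hR1
    have hmx : m ≤ |lam x| := hlow x hx
    have hmx' : m ≤ |lam x'| := hlow x' hx'
    have hnex := hlamne x hx
    have hnex' := hlamne x' hx'
    rw [max_le_iff]
    constructor
    · calc |x - x'| ≤ 1 * max |x - x'| |z - z'| := by rw [one_mul]; exact hd1
        _ ≤ L * max |x - x'| |z - z'| := mul_le_mul_of_nonneg_right hL1 hdnn
    · have hzb : |z| ≤ Λ * R := by
        simp only at hz; rw [hz, abs_mul]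
        exact mul_le_mul (hΛ x hx) (hRf x hx) (abs_nonneg _) (le_of_lt hΛ0)
      have e0 : z / lam x - z' / lam x' = (z * lam x' - lam x * z') / (lam x * lam x') :=
        div_sub_div z z' hnex hnex'
      have hx'x : |x' - x| ≤ max |x - x'| |z - z'| := by rw [abs_sub_comm]; exact hd1
      have hΛR0 : (0:ℝ) ≤ Λ * R := by positivity
      have enum : |z * lam x' - lam x * z'| ≤
          (Λ * R * (K:ℝ) + Λ) * max |x - x'| |z - z'| := by
        have e1 : z * lam x' - lam x * z' = z * (lam x' - lam x) + lam x * (z - z') := by ring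
        calc |z * lam x' - lam x * z'|
            ≤ |z * (lam x' - lam x)| + |lam x * (z - z')| := by rw [e1]; exact abs_add_le _ _
          _ = |z| * |lam x' - lam x| + |lam x| * |z - z'| := by rw [abs_mul, abs_mul]
          _ ≤ (Λ * R) * ((K:ℝ) * |x' - x|) + Λ * max |x - x'| |z - z'| :=
              add_le_add (mul_le_mul hzb (hKd x' hx' x hx) (abs_nonneg _) hΛR0)
                (mul_le_mul (hΛ x hx) hd2 (abs_nonneg _) (le_of_lt hΛ0))
          _ ≤ (Λ * R) * ((K:ℝ) * max |x - x'| |z - z'|) + Λ * max |x - x'| |z - z'| :=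
              add_le_add_left (mul_le_mul_of_nonneg_left
                (mul_le_mul_of_nonneg_left hx'x K.coe_nonneg) hΛR0) _
          _ = (Λ * R * (K:ℝ) + Λ) * max |x - x'| |z - z'| := by ring
      have hden : m * m ≤ |lam x * lam x'| := by
        rw [abs_mul]
        exact mul_le_mul hmx hmx' (le_of_lt hmin) (abs_nonneg _)
      have hm2 : (0:ℝ) < m * m := mul_pos hmin hmin
      have hdenpos : (0:ℝ) < |lam x * lam x'| := lt_of_lt_of_le hm2 hden
      calc |z / lam x - z' / lam x'| = |z * lam x' - lam x * z'| / |lam x * lam x'| := by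
            rw [e0, abs_div]
        _ ≤ |z * lam x' - lam x * z'| / (m * m) :=
            div_le_div_of_nonneg_left (abs_nonneg _) hm2 hden |>.trans_eq rfl
        _ ≤ ((Λ * R * (K:ℝ) + Λ) * max |x - x'| |z - z'|) / (m * m) :=
            by gcongr
        _ = ((Λ * R * (K:ℝ) + Λ) / (m * m)) * max |x - x'| |z - z'| := by ring
        _ ≤ L * max |x - x'| |z - z'| := mul_le_mul_of_nonneg_right hLb hdnn
  -- assemble
  set C : ℕ := (2 * (⌊L⌋ + 1).toNat + 1) ^ 2 with hCdef
  have hAne : A.Nonempty := ⟨(0, f 0), ⟨le_refl _, zero_le_one⟩, rfl⟩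
  have hBne : B.Nonempty := ⟨(0, lam 0 * f 0), ⟨le_refl _, zero_le_one⟩, rfl⟩
  apply transfer hDf (C := C)
  · intro δ hδ
    rw [hgr1]
    exact count_image_le hL0 hΦlip hδ (idxSet_finite hδ hAbd)
  · intro δ hδ
    rw [hgr2]
    exact count_image_le hL0 hΨlip hδ (idxSet_finite hδ hBbd)
  · intro δ hδ
    exact meshCount2_pos hδ hAne (idxSet_finite hδ hAbd)
  · intro δ hδ
    exact meshCount2_pos hδ hBne (idxSet_finite hδ hBbd)
end

section
/- (Corollary 1, upper bound) Let f_i, g_j : [0,1] → R (i = 1, …, N; j = 1, …, M) be continuous functions whose graphs have box-counting dimensions (the defining limits exist), and let λ_i, μ_j : [0,1] → R be Lipschitz functions. Define F : [0,1]² → R by F(x,y) = Σ_{i=1}^N λ_i(x) f_i(x) + Σ_{j=1}^M μ_j(y) g_j(y). Then the upper box-counting dimension of the graph of F satisfies dim̄_B Gr(F) ≤ 1 + max_{i,j} {dim_B Gr(f_i), dim_B Gr(g_j)}. -/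
open Set Filter Topology

def mbox (δ : ℝ) (c : ℤ) : Set ℝ := Set.Ico ((c : ℝ) * δ) (((c : ℝ) + 1) * δ)

lemma mem_mbox_iff {δ : ℝ} (hδ : 0 < δ) {c : ℤ} {t : ℝ} :
    t ∈ mbox δ c ↔ ⌊t / δ⌋ = c := by
  rw [mbox, Set.mem_Ico, Int.floor_eq_iff]
  constructor
  · rintro ⟨h1, h2⟩
    exact ⟨by rwa [le_div_iff₀ hδ], by rwa [div_lt_iff₀ hδ]⟩
  · rintro ⟨h1, h2⟩
    exact ⟨by rwa [← le_div_iff₀ hδ], by rwa [← div_lt_iff₀ hδ]⟩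

/-- the set of mesh-box indices hit by `h` over column `a` -/
def colC (δ : ℝ) (h : ℝ → ℝ) (a : ℤ) : Set ℤ :=
  {c | ∃ x, x ∈ Set.Icc (0:ℝ) 1 ∧ x ∈ mbox δ a ∧ h x ∈ mbox δ c}

lemma colC_subset {δ B : ℝ} (hδ : 0 < δ) {h : ℝ → ℝ}
    (hB : ∀ x ∈ Set.Icc (0:ℝ) 1, |h x| ≤ B) (a : ℤ) :
    colC δ h a ⊆ Set.Icc ⌊-B / δ⌋ ⌊B / δ⌋ := by
  rintro c ⟨x, hx01, _, hc1, hc2⟩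
  have hb := hB x hx01
  rw [abs_le] at hb
  constructor
  · have h1 : (⌊-B / δ⌋ : ℝ) ≤ -B / δ := Int.floor_le _
    have h2 : -B / δ < (c : ℝ) + 1 := by
      rw [div_lt_iff₀ hδ]; nlinarith
    have : (⌊-B / δ⌋ : ℝ) < (c : ℝ) + 1 := lt_of_le_of_lt h1 h2
    have : ⌊-B / δ⌋ < c + 1 := by exact_mod_cast this
    omega
  · apply Int.le_floor.2
    rw [le_div_iff₀ hδ]
    nlinarith

lemma colC_finite {δ B : ℝ} (hδ : 0 < δ) {h : ℝ → ℝ}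
    (hB : ∀ x ∈ Set.Icc (0:ℝ) 1, |h x| ≤ B) (a : ℤ) : (colC δ h a).Finite :=
  (Set.finite_Icc _ _).subset (colC_subset hδ hB a)

lemma diam_le_aux {δ : ℝ} (hδ : 0 < δ) {h : ℝ → ℝ} (hc : ContinuousOn h (Set.Icc 0 1))
    {B : ℝ} (hB : ∀ x ∈ Set.Icc (0:ℝ) 1, |h x| ≤ B) {a : ℤ} {x x' : ℝ}
    (hx : x ∈ Set.Icc (0:ℝ) 1) (hxa : x ∈ mbox δ a)
    (hx' : x' ∈ Set.Icc (0:ℝ) 1) (hx'a : x' ∈ mbox δ a)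
    (hle : h x' ≤ h x) :
    h x - h x' ≤ δ * (colC δ h a).ncard := by
  set c := ⌊h x / δ⌋ with hcdef
  set c' := ⌊h x' / δ⌋ with hc'def
  have hcc' : c' ≤ c := Int.floor_le_floor (by gcongr)
  -- inclusion Icc c' c ⊆ colC δ h a
  have hsub : Set.Icc c' c ⊆ colC δ h a := by
    intro c'' hc''
    rw [Set.mem_Icc] at hc''
    set t : ℝ := max ((c'' : ℝ) * δ) (h x')
    have hc'd : (c' : ℝ) * δ ≤ h x' := (le_div_iff₀ hδ).1 (Int.floor_le _)
    have hcd : (c : ℝ) * δ ≤ h x := (le_div_iff₀ hδ).1 (Int.floor_le _)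
    have ht1 : h x' ≤ t := le_max_right _ _
    have ht2 : t ≤ h x := by
      apply max_le _ hle
      calc ((c'' : ℝ)) * δ ≤ (c : ℝ) * δ := by
            have : (c'' : ℝ) ≤ c := by exact_mod_cast hc''.2
            nlinarith
        _ ≤ h x := hcd
    have htfloor : ⌊t / δ⌋ = c'' := by
      rw [Int.floor_eq_iff]
      constructor
      · rw [le_div_iff₀ hδ]; exact le_max_left _ _
      · rw [div_lt_iff₀ hδ]
        apply max_lt
        · nlinarith
        · calc h x' < ((c' : ℝ) + 1) * δ := by
                have := Int.lt_floor_add_one (h x' / δ)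
                rw [← hc'def] at this
                rw [← div_lt_iff₀ hδ]; exact this
            _ ≤ ((c'' : ℝ) + 1) * δ := by
                have : (c' : ℝ) ≤ c'' := by exact_mod_cast hc''.1
                nlinarith
    -- IVT
    have hucc : Set.uIcc x' x ⊆ Set.Icc (0:ℝ) 1 :=
      Set.ordConnected_Icc.uIcc_subset hx' hx
    have hucc2 : Set.uIcc x' x ⊆ mbox δ a := Set.ordConnected_Ico.uIcc_subset hx'a hxa
    have hmem : t ∈ Set.uIcc (h x') (h x) := Set.Icc_subset_uIcc ⟨ht1, ht2⟩
    obtain ⟨x'', hx''u, hx''⟩ := intermediate_value_uIcc (hc.mono hucc) hmem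
    exact ⟨x'', hucc hx''u, hucc2 hx''u, by
      rw [mem_mbox_iff hδ, hx'', htfloor]⟩
  have hfin : (colC δ h a).Finite := colC_finite hδ hB a
  have hcard : (Set.Icc c' c).ncard ≤ (colC δ h a).ncard := Set.ncard_le_ncard hsub hfin
  have hIcc : ((Set.Icc c' c).ncard : ℝ) = (c : ℝ) - c' + 1 := by
    rw [← Finset.coe_Icc, Set.ncard_coe_finset, Int.card_Icc]
    have h0 : ((c + 1 - c').toNat : ℤ) = c + 1 - c' := Int.toNat_of_nonneg (by omega)
    have : (((c + 1 - c').toNat : ℤ) : ℝ) = ((c + 1 - c' : ℤ) : ℝ) := by rw [h0]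
    push_cast at this ⊢
    linarith
  have h1 : h x < ((c : ℝ) + 1) * δ := by
    have := Int.lt_floor_add_one (h x / δ)
    rw [← hcdef] at this
    rw [← div_lt_iff₀ hδ]; exact this
  have h2 : (c' : ℝ) * δ ≤ h x' := by
    have := Int.floor_le (h x' / δ)
    rw [← hc'def] at this
    rw [← le_div_iff₀ hδ]; exact this
  have : ((Set.Icc c' c).ncard : ℝ) ≤ ((colC δ h a).ncard : ℝ) := by exact_mod_cast hcard
  nlinarith [this, hIcc]

lemma abs_sub_le_of_mem_mbox {δ : ℝ} (hδ : 0 < δ) {c : ℤ} {s t : ℝ}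
    (hs : s ∈ mbox δ c) (ht : t ∈ mbox δ c) : |s - t| ≤ δ := by
  rw [mbox, Set.mem_Ico] at hs ht
  rw [abs_sub_le_iff]
  constructor <;> nlinarith [hs.1, hs.2, ht.1, ht.2]

/-- a set of integers whose pairwise real distances are ≤ R has at most 2R+1 elements -/
lemma ncard_le_of_bdd_dist {S : Set ℤ} {R : ℝ} (hR : 0 ≤ R)
    (h : ∀ c ∈ S, ∀ c' ∈ S, |(c : ℝ) - (c' : ℝ)| ≤ R) : (S.ncard : ℝ) ≤ 2 * R + 1 := by
  rcases S.eq_empty_or_nonempty with rfl | ⟨c₀, hc₀⟩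
  · simp; linarith
  · have hsub : S ⊆ Set.Icc (c₀ - ⌊R⌋) (c₀ + ⌊R⌋) := by
      intro c hc
      have h1 := h c hc c₀ hc₀
      have h2 := h c₀ hc₀ c hc
      rw [abs_sub_le_iff] at h1
      constructor
      · have : (c₀ : ℝ) - c ≤ R := h1.2
        have : ((c₀ - c : ℤ) : ℝ) ≤ R := by push_cast; linarith
        have := Int.le_floor.2 this
        omega
      · have : (c : ℝ) - c₀ ≤ R := h1.1
        have : ((c - c₀ : ℤ) : ℝ) ≤ R := by push_cast; linarith
        have := Int.le_floor.2 this
        omega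
    have hfin : (Set.Icc (c₀ - ⌊R⌋) (c₀ + ⌊R⌋)).Finite := Set.finite_Icc _ _
    have hcard : S.ncard ≤ (Set.Icc (c₀ - ⌊R⌋) (c₀ + ⌊R⌋)).ncard :=
      Set.ncard_le_ncard hsub hfin
    have hIcc : (Set.Icc (c₀ - ⌊R⌋) (c₀ + ⌊R⌋)).ncard = ((c₀ + ⌊R⌋) + 1 - (c₀ - ⌊R⌋)).toNat := by
      rw [← Finset.coe_Icc, Set.ncard_coe_finset, Int.card_Icc]
    have hfR : (⌊R⌋ : ℝ) ≤ R := Int.floor_le R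
    have hfR0 : 0 ≤ ⌊R⌋ := Int.floor_nonneg.2 hR
    calc (S.ncard : ℝ) ≤ ((Set.Icc (c₀ - ⌊R⌋) (c₀ + ⌊R⌋)).ncard : ℝ) := by exact_mod_cast hcard
      _ = (((c₀ + ⌊R⌋) + 1 - (c₀ - ⌊R⌋)).toNat : ℝ) := by rw [hIcc]
      _ = ((2 * ⌊R⌋ + 1 : ℤ) : ℝ) := by
          have h0 : (c₀ + ⌊R⌋ + 1 - (c₀ - ⌊R⌋)).toNat = (2 * ⌊R⌋ + 1).toNat := by omega
          have h1 : (((2 * ⌊R⌋ + 1).toNat : ℤ) : ℝ) = ((2 * ⌊R⌋ + 1 : ℤ) : ℝ) := by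
            rw [Int.toNat_of_nonneg (by omega)]
          rw [h0]; exact_mod_cast h1
      _ ≤ 2 * R + 1 := by push_cast; linarith

lemma diam_le {δ : ℝ} (hδ : 0 < δ) {h : ℝ → ℝ} (hc : ContinuousOn h (Set.Icc 0 1))
    {B : ℝ} (hB : ∀ x ∈ Set.Icc (0:ℝ) 1, |h x| ≤ B) {a : ℤ} {x x' : ℝ}
    (hx : x ∈ Set.Icc (0:ℝ) 1) (hxa : x ∈ mbox δ a)
    (hx' : x' ∈ Set.Icc (0:ℝ) 1) (hx'a : x' ∈ mbox δ a) :
    |h x - h x'| ≤ δ * (colC δ h a).ncard := by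
  rcases le_total (h x') (h x) with hle | hle
  · rw [abs_of_nonneg (by linarith)]
    exact diam_le_aux hδ hc hB hx hxa hx' hx'a hle
  · rw [abs_of_nonpos (by linarith), neg_sub]
    exact diam_le_aux hδ hc hB hx' hx'a hx hxa hle

/-- columns of the 3d graph -/
def col3 (δ : ℝ) (F : ℝ → ℝ → ℝ) (a b : ℤ) : Set ℤ :=
  {c | ∃ x y, x ∈ Set.Icc (0:ℝ) 1 ∧ y ∈ Set.Icc (0:ℝ) 1 ∧
    x ∈ mbox δ a ∧ y ∈ mbox δ b ∧ F x y ∈ mbox δ c}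

lemma meshCount2_eq (δ : ℝ) (h : ℝ → ℝ) :
    meshCount2 δ (Gr1 h) = {k : ℤ × ℤ | k.2 ∈ colC δ h k.1}.ncard := by
  unfold meshCount2
  congr 1
  ext ⟨a, c⟩
  constructor
  · rintro ⟨⟨x, y⟩, ⟨hx01, hy⟩, hbox⟩
    obtain ⟨hxa, hyc⟩ := hbox
    exact ⟨x, hx01, hxa, by rw [← hy]; exact hyc⟩
  · rintro ⟨x, hx01, hxa, hxc⟩
    exact ⟨(x, h x), ⟨hx01, rfl⟩, hxa, hxc⟩

lemma meshCount3_eq (δ : ℝ) (F : ℝ → ℝ → ℝ) :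
    meshCount3 δ (Gr2 F) = {k : ℤ × ℤ × ℤ | k.2.2 ∈ col3 δ F k.1 k.2.1}.ncard := by
  unfold meshCount3
  congr 1
  ext ⟨a, b, c⟩
  constructor
  · rintro ⟨⟨x, y, z⟩, ⟨hx01, hy01, hz⟩, hbox⟩
    obtain ⟨hxa, hyb, hzc⟩ := hbox
    exact ⟨x, y, hx01, hy01, hxa, hyb, by rw [← hz]; exact hzc⟩
  · rintro ⟨x, y, hx01, hy01, hxa, hyb, hc⟩
    exact ⟨(x, y, F x y), ⟨hx01, hy01, rfl⟩, hxa, hyb, hc⟩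

lemma col_index_mem {δ : ℝ} (hδ : 0 < δ) {a : ℤ} {x : ℝ}
    (hx : x ∈ Set.Icc (0:ℝ) 1) (hxa : x ∈ mbox δ a) : a ∈ Finset.Icc (0:ℤ) ⌊1/δ⌋ := by
  obtain ⟨hx0, hx1⟩ := hx
  obtain ⟨ha1, ha2⟩ := hxa
  rw [Finset.mem_Icc]
  constructor
  · by_contra hneg
    push_neg at hneg
    have : (a : ℝ) + 1 ≤ 0 := by
      have : (a : ℝ) ≤ -1 := by exact_mod_cast (show a ≤ -1 by omega)
      linarith
    nlinarith
  · apply Int.le_floor.2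
    rw [le_div_iff₀ hδ]
    linarith

lemma mbox_index_bounded {δ B t : ℝ} (hδ : 0 < δ) (ht : |t| ≤ B) {c : ℤ}
    (h : t ∈ mbox δ c) : c ∈ Finset.Icc ⌊-B/δ⌋ ⌊B/δ⌋ := by
  rw [abs_le] at ht
  obtain ⟨hc1, hc2⟩ := h
  rw [Finset.mem_Icc]
  constructor
  · have h1 : (⌊-B / δ⌋ : ℝ) ≤ -B / δ := Int.floor_le _
    have h2 : -B / δ < (c : ℝ) + 1 := by rw [div_lt_iff₀ hδ]; nlinarith
    have : (⌊-B / δ⌋ : ℝ) < (c : ℝ) + 1 := lt_of_le_of_lt h1 h2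
    have : ⌊-B / δ⌋ < c + 1 := by exact_mod_cast this
    omega
  · apply Int.le_floor.2
    rw [le_div_iff₀ hδ]
    nlinarith

lemma sum_colC_le {δ B : ℝ} (hδ : 0 < δ) {h : ℝ → ℝ}
    (hB : ∀ x ∈ Set.Icc (0:ℝ) 1, |h x| ≤ B) :
    ∑ a ∈ Finset.Icc (0:ℤ) ⌊1/δ⌋, ((colC δ h a).ncard : ℝ) ≤ (meshCount2 δ (Gr1 h) : ℝ) := by
  classical
  rw [meshCount2_eq]
  set S : Set (ℤ × ℤ) := {k : ℤ × ℤ | k.2 ∈ colC δ h k.1} with hS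
  have hfin : S.Finite := by
    apply Set.Finite.subset (((Finset.Icc (0:ℤ) ⌊1/δ⌋) ×ˢ (Finset.Icc ⌊-B/δ⌋ ⌊B/δ⌋) : Finset (ℤ × ℤ)).finite_toSet)
    rintro ⟨a, c⟩ hk
    obtain ⟨x, hx01, hxa, hxc⟩ := hk
    simp only [Finset.coe_product, Set.mem_prod, Finset.mem_coe]
    exact ⟨col_index_mem hδ hx01 hxa,
      mbox_index_bounded hδ (hB x hx01) hxc⟩
  have hcfin : ∀ a, (colC δ h a).Finite := colC_finite hδ hB
  have key : ∑ a ∈ Finset.Icc (0:ℤ) ⌊1/δ⌋, (colC δ h a).ncard ≤ S.ncard := by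
    have himg : ∀ a : ℤ, ((hcfin a).toFinset.image (fun c => (a, c))).card = (colC δ h a).ncard := by
      intro a
      rw [Finset.card_image_of_injective _ (fun c c' e => by simpa using e),
        Set.ncard_eq_toFinset_card _ (hcfin a)]
    have hdisj : ∀ a ∈ Finset.Icc (0:ℤ) ⌊1/δ⌋, ∀ a' ∈ Finset.Icc (0:ℤ) ⌊1/δ⌋, a ≠ a' →
        Disjoint ((hcfin a).toFinset.image (fun c => (a, c)))
          ((hcfin a').toFinset.image (fun c => (a', c))) := by
      intro a _ a' _ hne
      rw [Finset.disjoint_left]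
      rintro ⟨u, v⟩ hu hv
      simp only [Finset.mem_image] at hu hv
      obtain ⟨c, _, hc⟩ := hu
      obtain ⟨c', _, hc'⟩ := hv
      apply hne
      have h1 := congrArg Prod.fst hc
      have h2 := congrArg Prod.fst hc'
      simp only [Prod.fst] at h1 h2
      rw [h1, h2]
    have hsub : (Finset.Icc (0:ℤ) ⌊1/δ⌋).biUnion
        (fun a => (hcfin a).toFinset.image (fun c => (a, c))) ⊆ hfin.toFinset := by
      intro p hp
      simp only [Finset.mem_biUnion, Finset.mem_image] at hp
      obtain ⟨a, _, c, hc, rfl⟩ := hp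
      rw [Set.Finite.mem_toFinset] at hc ⊢
      exact hc
    calc ∑ a ∈ Finset.Icc (0:ℤ) ⌊1/δ⌋, (colC δ h a).ncard
        = ∑ a ∈ Finset.Icc (0:ℤ) ⌊1/δ⌋, ((hcfin a).toFinset.image (fun c => (a, c))).card := by
          exact Finset.sum_congr rfl (fun a _ => (himg a).symm)
      _ = ((Finset.Icc (0:ℤ) ⌊1/δ⌋).biUnion
            (fun a => (hcfin a).toFinset.image (fun c => (a, c)))).card :=
          (Finset.card_biUnion hdisj).symm
      _ ≤ hfin.toFinset.card := Finset.card_le_card hsub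
      _ = S.ncard := (Set.ncard_eq_toFinset_card S hfin).symm
  exact_mod_cast key

lemma col3_finite {δ B : ℝ} (hδ : 0 < δ) {F : ℝ → ℝ → ℝ}
    (hB : ∀ x ∈ Set.Icc (0:ℝ) 1, ∀ y ∈ Set.Icc (0:ℝ) 1, |F x y| ≤ B) (a b : ℤ) :
    (col3 δ F a b).Finite := by
  apply Set.Finite.subset (Finset.Icc ⌊-B/δ⌋ ⌊B/δ⌋ : Finset ℤ).finite_toSet
  rintro c ⟨x, y, hx01, hy01, _, _, hc⟩
  exact mbox_index_bounded hδ (hB x hx01 y hy01) hc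

lemma meshCount3_le_sum {δ B : ℝ} (hδ : 0 < δ) {F : ℝ → ℝ → ℝ}
    (hB : ∀ x ∈ Set.Icc (0:ℝ) 1, ∀ y ∈ Set.Icc (0:ℝ) 1, |F x y| ≤ B) :
    (meshCount3 δ (Gr2 F) : ℝ) ≤
      ∑ a ∈ Finset.Icc (0:ℤ) ⌊1/δ⌋, ∑ b ∈ Finset.Icc (0:ℤ) ⌊1/δ⌋,
        ((col3 δ F a b).ncard : ℝ) := by
  classical
  rw [meshCount3_eq]
  set S : Set (ℤ × ℤ × ℤ) := {k : ℤ × ℤ × ℤ | k.2.2 ∈ col3 δ F k.1 k.2.1} with hS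
  have hcfin : ∀ a b, (col3 δ F a b).Finite := col3_finite hδ hB
  have hfin : S.Finite := by
    apply Set.Finite.subset
      (((Finset.Icc (0:ℤ) ⌊1/δ⌋) ×ˢ ((Finset.Icc (0:ℤ) ⌊1/δ⌋) ×ˢ
        (Finset.Icc ⌊-B/δ⌋ ⌊B/δ⌋)) : Finset (ℤ × ℤ × ℤ)).finite_toSet)
    rintro ⟨a, b, c⟩ hk
    obtain ⟨x, y, hx01, hy01, hxa, hyb, hc⟩ := hk
    simp only [Finset.coe_product, Set.mem_prod, Finset.mem_coe]
    exact ⟨col_index_mem hδ hx01 hxa, col_index_mem hδ hy01 hyb,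
      mbox_index_bounded hδ (hB x hx01 y hy01) hc⟩
  have key : S.ncard ≤ ∑ ab ∈ (Finset.Icc (0:ℤ) ⌊1/δ⌋) ×ˢ (Finset.Icc (0:ℤ) ⌊1/δ⌋),
      (col3 δ F ab.1 ab.2).ncard := by
    have hsub : hfin.toFinset ⊆
        ((Finset.Icc (0:ℤ) ⌊1/δ⌋) ×ˢ (Finset.Icc (0:ℤ) ⌊1/δ⌋)).biUnion
          (fun ab => ((hcfin ab.1 ab.2).toFinset.image (fun c => (ab.1, ab.2, c)))) := by
      rintro ⟨a, b, c⟩ hp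
      rw [Set.Finite.mem_toFinset] at hp
      obtain ⟨x, y, hx01, hy01, hxa, hyb, hc⟩ := hp
      simp only [Finset.mem_biUnion, Finset.mem_image, Finset.mem_product]
      exact ⟨(a, b), ⟨col_index_mem hδ hx01 hxa, col_index_mem hδ hy01 hyb⟩,
        c, (Set.Finite.mem_toFinset _).2 ⟨x, y, hx01, hy01, hxa, hyb, hc⟩, rfl⟩
    calc S.ncard = hfin.toFinset.card := Set.ncard_eq_toFinset_card S hfin
      _ ≤ (((Finset.Icc (0:ℤ) ⌊1/δ⌋) ×ˢ (Finset.Icc (0:ℤ) ⌊1/δ⌋)).biUnion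
          (fun ab => ((hcfin ab.1 ab.2).toFinset.image (fun c => (ab.1, ab.2, c))))).card :=
          Finset.card_le_card hsub
      _ ≤ ∑ ab ∈ (Finset.Icc (0:ℤ) ⌊1/δ⌋) ×ˢ (Finset.Icc (0:ℤ) ⌊1/δ⌋),
          ((hcfin ab.1 ab.2).toFinset.image (fun c => (ab.1, ab.2, c))).card :=
          Finset.card_biUnion_le
      _ ≤ ∑ ab ∈ (Finset.Icc (0:ℤ) ⌊1/δ⌋) ×ˢ (Finset.Icc (0:ℤ) ⌊1/δ⌋),
          (col3 δ F ab.1 ab.2).ncard := by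
          apply Finset.sum_le_sum
          intro ab _
          calc ((hcfin ab.1 ab.2).toFinset.image (fun c => (ab.1, ab.2, c))).card
              ≤ (hcfin ab.1 ab.2).toFinset.card := Finset.card_image_le
            _ = (col3 δ F ab.1 ab.2).ncard :=
                (Set.ncard_eq_toFinset_card _ (hcfin ab.1 ab.2)).symm
  have key2 : (S.ncard : ℝ) ≤ ∑ ab ∈ (Finset.Icc (0:ℤ) ⌊1/δ⌋) ×ˢ (Finset.Icc (0:ℤ) ⌊1/δ⌋),
      ((col3 δ F ab.1 ab.2).ncard : ℝ) := by exact_mod_cast key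
  rw [Finset.sum_product] at key2
  exact key2

lemma ncard_col3_le {δ : ℝ} (hδ : 0 < δ) {h k : ℝ → ℝ} {a b : ℤ} {P Q : ℝ}
    (hP : ∀ x ∈ Set.Icc (0:ℝ) 1, x ∈ mbox δ a → ∀ x' ∈ Set.Icc (0:ℝ) 1, x' ∈ mbox δ a →
      |h x - h x'| ≤ δ * P)
    (hQ : ∀ y ∈ Set.Icc (0:ℝ) 1, y ∈ mbox δ b → ∀ y' ∈ Set.Icc (0:ℝ) 1, y' ∈ mbox δ b →
      |k y - k y'| ≤ δ * Q)
    (hP0 : 0 ≤ P) (hQ0 : 0 ≤ Q) :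
    ((col3 δ (fun x y => h x + k y) a b).ncard : ℝ) ≤ 2 * (P + Q + 1) + 1 := by
  apply ncard_le_of_bdd_dist (by linarith)
  rintro c ⟨x, y, hx01, hy01, hxa, hyb, hc⟩ c' ⟨x', y', hx'01, hy'01, hx'a, hy'b, hc'⟩
  set t := h x + k y with ht
  set t' := h x' + k y' with ht'
  have hcf : ⌊t / δ⌋ = c := (mem_mbox_iff hδ).1 hc
  have hc'f : ⌊t' / δ⌋ = c' := (mem_mbox_iff hδ).1 hc'
  have h1 : (c : ℝ) ≤ t / δ := by rw [← hcf]; exact Int.floor_le _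
  have h2 : t / δ < (c : ℝ) + 1 := by rw [← hcf]; exact Int.lt_floor_add_one _
  have h3 : (c' : ℝ) ≤ t' / δ := by rw [← hc'f]; exact Int.floor_le _
  have h4 : t' / δ < (c' : ℝ) + 1 := by rw [← hc'f]; exact Int.lt_floor_add_one _
  have hht : |h x - h x'| ≤ δ * P := hP x hx01 hxa x' hx'01 hx'a
  have hkt : |k y - k y'| ≤ δ * Q := hQ y hy01 hyb y' hy'01 hy'b
  have htt : |t - t'| ≤ δ * (P + Q) := by
    calc |t - t'| = |(h x - h x') + (k y - k y')| := by rw [ht, ht']; ring_nf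
      _ ≤ |h x - h x'| + |k y - k y'| := abs_add_le _ _
      _ ≤ δ * P + δ * Q := add_le_add hht hkt
      _ = δ * (P + Q) := by ring
  have hdiv : |t / δ - t' / δ| ≤ P + Q := by
    rw [div_sub_div_same, abs_div, abs_of_pos hδ, div_le_iff₀ hδ]
    calc |t - t'| ≤ δ * (P + Q) := htt
      _ = (P + Q) * δ := by ring
  have hd1 := le_abs_self (t / δ - t' / δ)
  have hd2 := neg_abs_le (t / δ - t' / δ)
  rw [abs_sub_le_iff]
  constructor <;> linarith

lemma prod_osc {δ : ℝ} (hδ : 0 < δ) {lam f : ℝ → ℝ} {Λ B : ℝ} {K : NNReal}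
    (hΛ : ∀ x ∈ Set.Icc (0:ℝ) 1, |lam x| ≤ Λ) (hB : ∀ x ∈ Set.Icc (0:ℝ) 1, |f x| ≤ B)
    (hlip : LipschitzOnWith K lam (Set.Icc 0 1)) (hf : ContinuousOn f (Set.Icc 0 1))
    {a : ℤ} {x x' : ℝ} (hx : x ∈ Set.Icc (0:ℝ) 1) (hxa : x ∈ mbox δ a)
    (hx' : x' ∈ Set.Icc (0:ℝ) 1) (hx'a : x' ∈ mbox δ a) :
    |lam x * f x - lam x' * f x'| ≤ δ * (Λ * ((colC δ f a).ncard : ℝ) + B * (K : ℝ)) := by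
  have h1 : |f x - f x'| ≤ δ * ((colC δ f a).ncard : ℝ) := diam_le hδ hf hB hx hxa hx' hx'a
  have h2 : |lam x - lam x'| ≤ (K : ℝ) * |x - x'| := by
    have := hlip.dist_le_mul x hx x' hx'
    simpa [Real.dist_eq] using this
  have h3 : |x - x'| ≤ δ := abs_sub_le_of_mem_mbox hδ hxa hx'a
  have hΛx := hΛ x hx
  have hBx' := hB x' hx'
  have hΛ0 : (0:ℝ) ≤ Λ := le_trans (abs_nonneg _) hΛx
  have hB0 : (0:ℝ) ≤ B := le_trans (abs_nonneg _) hBx'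
  have hK0 : (0:ℝ) ≤ (K : ℝ) := K.coe_nonneg
  have e : lam x * f x - lam x' * f x' = lam x * (f x - f x') + (lam x - lam x') * f x' := by
    ring
  rw [e]
  calc |lam x * (f x - f x') + (lam x - lam x') * f x'|
      ≤ |lam x * (f x - f x')| + |(lam x - lam x') * f x'| := abs_add_le _ _
    _ = |lam x| * |f x - f x'| + |lam x - lam x'| * |f x'| := by rw [abs_mul, abs_mul]
    _ ≤ Λ * (δ * ((colC δ f a).ncard : ℝ)) + ((K : ℝ) * δ) * B := by
        apply add_le_add
        · exact mul_le_mul hΛx h1 (abs_nonneg _) hΛ0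
        · apply mul_le_mul _ hBx' (abs_nonneg _) (by positivity)
          calc |lam x - lam x'| ≤ (K : ℝ) * |x - x'| := h2
            _ ≤ (K : ℝ) * δ := by nlinarith
    _ = δ * (Λ * ((colC δ f a).ncard : ℝ) + B * (K : ℝ)) := by ring

lemma main_count {N M : ℕ} (f : Fin N → ℝ → ℝ) (g : Fin M → ℝ → ℝ)
    (lam : Fin N → ℝ → ℝ) (mu : Fin M → ℝ → ℝ)
    (Λf : Fin N → ℝ) (Kf : Fin N → NNReal) (Bf : Fin N → ℝ)
    (Λg : Fin M → ℝ) (Kg : Fin M → NNReal) (Bg : Fin M → ℝ)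
    (hf : ∀ i, ContinuousOn (f i) (Set.Icc 0 1)) (hg : ∀ j, ContinuousOn (g j) (Set.Icc 0 1))
    (hΛf : ∀ i, ∀ x ∈ Set.Icc (0:ℝ) 1, |lam i x| ≤ Λf i)
    (hΛg : ∀ j, ∀ y ∈ Set.Icc (0:ℝ) 1, |mu j y| ≤ Λg j)
    (hlipf : ∀ i, LipschitzOnWith (Kf i) (lam i) (Set.Icc 0 1))
    (hlipg : ∀ j, LipschitzOnWith (Kg j) (mu j) (Set.Icc 0 1))
    (hBf : ∀ i, ∀ x ∈ Set.Icc (0:ℝ) 1, |f i x| ≤ Bf i)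
    (hBg : ∀ j, ∀ y ∈ Set.Icc (0:ℝ) 1, |g j y| ≤ Bg j)
    {δ : ℝ} (hδ : 0 < δ) :
    (meshCount3 δ (Gr2 (fun x y => (∑ i, lam i x * f i x) + ∑ j, mu j y * g j y)) : ℝ) ≤
      ((⌊1/δ⌋ : ℝ) + 1) * (2 * ((∑ i, Λf i * (meshCount2 δ (Gr1 (f i)) : ℝ))
        + ∑ j, Λg j * (meshCount2 δ (Gr1 (g j)) : ℝ))
        + (2 * ((∑ i, Bf i * (Kf i : ℝ)) + ∑ j, Bg j * (Kg j : ℝ)) + 3) * ((⌊1/δ⌋ : ℝ) + 1)) := by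
  have hΛf0 : ∀ i, 0 ≤ Λf i := fun i => le_trans (abs_nonneg _) (hΛf i 0 (by norm_num))
  have hΛg0 : ∀ j, 0 ≤ Λg j := fun j => le_trans (abs_nonneg _) (hΛg j 0 (by norm_num))
  have hBf0 : ∀ i, 0 ≤ Bf i := fun i => le_trans (abs_nonneg _) (hBf i 0 (by norm_num))
  have hBg0 : ∀ j, 0 ≤ Bg j := fun j => le_trans (abs_nonneg _) (hBg j 0 (by norm_num))
  set m := ⌊1/δ⌋ with hm
  have hm0 : 0 ≤ m := Int.floor_nonneg.2 (by positivity)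
  set FA := Finset.Icc (0:ℤ) m with hFA
  have hT : (FA.card : ℝ) = (m : ℝ) + 1 := by
    rw [hFA, Int.card_Icc]
    have h0 : ((m + 1 - 0).toNat : ℤ) = m + 1 - 0 := Int.toNat_of_nonneg (by omega)
    have : (((m + 1 - 0).toNat : ℤ) : ℝ) = ((m + 1 - 0 : ℤ) : ℝ) := by rw [h0]
    push_cast at this ⊢
    linarith
  -- boundedness of F
  have hhb : ∀ x ∈ Set.Icc (0:ℝ) 1, |∑ i, lam i x * f i x| ≤ ∑ i, Λf i * Bf i := by
    intro x hx
    calc |∑ i, lam i x * f i x| ≤ ∑ i, |lam i x * f i x| := Finset.abs_sum_le_sum_abs _ _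
      _ ≤ ∑ i, Λf i * Bf i := by
          apply Finset.sum_le_sum
          intro i _
          rw [abs_mul]
          exact mul_le_mul (hΛf i x hx) (hBf i x hx) (abs_nonneg _) (hΛf0 i)
  have hkb : ∀ y ∈ Set.Icc (0:ℝ) 1, |∑ j, mu j y * g j y| ≤ ∑ j, Λg j * Bg j := by
    intro y hy
    calc |∑ j, mu j y * g j y| ≤ ∑ j, |mu j y * g j y| := Finset.abs_sum_le_sum_abs _ _
      _ ≤ ∑ j, Λg j * Bg j := by
          apply Finset.sum_le_sum
          intro j _
          rw [abs_mul]
          exact mul_le_mul (hΛg j y hy) (hBg j y hy) (abs_nonneg _) (hΛg0 j)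
  have hBF : ∀ x ∈ Set.Icc (0:ℝ) 1, ∀ y ∈ Set.Icc (0:ℝ) 1,
      |(∑ i, lam i x * f i x) + ∑ j, mu j y * g j y| ≤ (∑ i, Λf i * Bf i) + ∑ j, Λg j * Bg j :=
    fun x hx y hy => (abs_add_le _ _).trans (add_le_add (hhb x hx) (hkb y hy))
  -- column oscillation quantities
  set P : ℤ → ℝ := fun a => (∑ i, Λf i * ((colC δ (f i) a).ncard : ℝ)) + ∑ i, Bf i * (Kf i : ℝ)
    with hPdef
  set Q : ℤ → ℝ := fun b => (∑ j, Λg j * ((colC δ (g j) b).ncard : ℝ)) + ∑ j, Bg j * (Kg j : ℝ)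
    with hQdef
  have hP0 : ∀ a, 0 ≤ P a := fun a => add_nonneg
    (Finset.sum_nonneg fun i _ => mul_nonneg (hΛf0 i) (Nat.cast_nonneg _))
    (Finset.sum_nonneg fun i _ => mul_nonneg (hBf0 i) (Kf i).coe_nonneg)
  have hQ0 : ∀ b, 0 ≤ Q b := fun b => add_nonneg
    (Finset.sum_nonneg fun j _ => mul_nonneg (hΛg0 j) (Nat.cast_nonneg _))
    (Finset.sum_nonneg fun j _ => mul_nonneg (hBg0 j) (Kg j).coe_nonneg)
  have hoscP : ∀ a : ℤ, ∀ x ∈ Set.Icc (0:ℝ) 1, x ∈ mbox δ a → ∀ x' ∈ Set.Icc (0:ℝ) 1,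
      x' ∈ mbox δ a → |(∑ i, lam i x * f i x) - ∑ i, lam i x' * f i x'| ≤ δ * P a := by
    intro a x hx hxa x' hx' hx'a
    calc |(∑ i, lam i x * f i x) - ∑ i, lam i x' * f i x'|
        = |∑ i, (lam i x * f i x - lam i x' * f i x')| := by rw [Finset.sum_sub_distrib]
      _ ≤ ∑ i, |lam i x * f i x - lam i x' * f i x'| := Finset.abs_sum_le_sum_abs _ _
      _ ≤ ∑ i, δ * (Λf i * ((colC δ (f i) a).ncard : ℝ) + Bf i * (Kf i : ℝ)) := by
          apply Finset.sum_le_sum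
          intro i _
          exact prod_osc hδ (hΛf i) (hBf i) (hlipf i) (hf i) hx hxa hx' hx'a
      _ = δ * P a := by
          rw [← Finset.mul_sum, hPdef]
          simp only [Finset.sum_add_distrib]
  have hoscQ : ∀ b : ℤ, ∀ y ∈ Set.Icc (0:ℝ) 1, y ∈ mbox δ b → ∀ y' ∈ Set.Icc (0:ℝ) 1,
      y' ∈ mbox δ b → |(∑ j, mu j y * g j y) - ∑ j, mu j y' * g j y'| ≤ δ * Q b := by
    intro b y hy hyb y' hy' hy'b
    calc |(∑ j, mu j y * g j y) - ∑ j, mu j y' * g j y'|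
        = |∑ j, (mu j y * g j y - mu j y' * g j y')| := by rw [Finset.sum_sub_distrib]
      _ ≤ ∑ j, |mu j y * g j y - mu j y' * g j y'| := Finset.abs_sum_le_sum_abs _ _
      _ ≤ ∑ j, δ * (Λg j * ((colC δ (g j) b).ncard : ℝ) + Bg j * (Kg j : ℝ)) := by
          apply Finset.sum_le_sum
          intro j _
          exact prod_osc hδ (hΛg j) (hBg j) (hlipg j) (hg j) hy hyb hy' hy'b
      _ = δ * Q b := by
          rw [← Finset.mul_sum, hQdef]
          simp only [Finset.sum_add_distrib]
  -- the double-sum bound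
  have step1 : (meshCount3 δ
      (Gr2 (fun x y => (∑ i, lam i x * f i x) + ∑ j, mu j y * g j y)) : ℝ) ≤
      ∑ a ∈ FA, ∑ b ∈ FA, ((col3 δ
        (fun x y => (∑ i, lam i x * f i x) + ∑ j, mu j y * g j y) a b).ncard : ℝ) :=
    meshCount3_le_sum hδ hBF
  have step2 : ∑ a ∈ FA, ∑ b ∈ FA, ((col3 δ
        (fun x y => (∑ i, lam i x * f i x) + ∑ j, mu j y * g j y) a b).ncard : ℝ) ≤
      ∑ a ∈ FA, ∑ b ∈ FA, (2 * (P a + Q b + 1) + 1) := by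
    apply Finset.sum_le_sum
    intro a _
    apply Finset.sum_le_sum
    intro b _
    exact ncard_col3_le hδ (hoscP a) (hoscQ b) (hP0 a) (hQ0 b)
  have step3 : ∑ a ∈ FA, ∑ b ∈ FA, (2 * (P a + Q b + 1) + 1) =
      2 * (FA.card : ℝ) * (∑ a ∈ FA, P a) + 2 * (FA.card : ℝ) * (∑ b ∈ FA, Q b)
        + 3 * (FA.card : ℝ) * (FA.card : ℝ) := by
    have inner : ∀ a : ℤ, ∑ b ∈ FA, (2 * (P a + Q b + 1) + 1) =
        (FA.card : ℝ) * (2 * P a + 3) + 2 * ∑ b ∈ FA, Q b := by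
      intro a
      rw [Finset.sum_congr rfl (fun b _ => show 2 * (P a + Q b + 1) + 1
        = (2 * P a + 3) + 2 * Q b by ring), Finset.sum_add_distrib,
        Finset.sum_const, ← Finset.mul_sum, nsmul_eq_mul]
    rw [Finset.sum_congr rfl (fun a _ => inner a), Finset.sum_add_distrib,
      Finset.sum_const, ← Finset.mul_sum, nsmul_eq_mul, Finset.mul_sum]
    rw [Finset.sum_congr rfl (fun a _ => show (FA.card : ℝ) * (2 * P a + 3)
      = 2 * (FA.card : ℝ) * P a + 3 * (FA.card : ℝ) by ring), Finset.sum_add_distrib,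
      Finset.sum_const, ← Finset.mul_sum, nsmul_eq_mul]
    ring
  -- bounding the column sums by mesh counts
  have hsumP : ∑ a ∈ FA, P a ≤ (∑ i, Λf i * (meshCount2 δ (Gr1 (f i)) : ℝ))
      + (FA.card : ℝ) * ∑ i, Bf i * (Kf i : ℝ) := by
    rw [hPdef, Finset.sum_add_distrib, Finset.sum_const, nsmul_eq_mul]
    apply add_le_add_left
    rw [Finset.sum_comm]
    apply Finset.sum_le_sum
    intro i _
    rw [← Finset.mul_sum]
    exact mul_le_mul_of_nonneg_left (sum_colC_le hδ (hBf i)) (hΛf0 i)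
  have hsumQ : ∑ b ∈ FA, Q b ≤ (∑ j, Λg j * (meshCount2 δ (Gr1 (g j)) : ℝ))
      + (FA.card : ℝ) * ∑ j, Bg j * (Kg j : ℝ) := by
    rw [hQdef, Finset.sum_add_distrib, Finset.sum_const, nsmul_eq_mul]
    apply add_le_add_left
    rw [Finset.sum_comm]
    apply Finset.sum_le_sum
    intro j _
    rw [← Finset.mul_sum]
    exact mul_le_mul_of_nonneg_left (sum_colC_le hδ (hBg j)) (hΛg0 j)
  have hTnn : (0:ℝ) ≤ (FA.card : ℝ) := Nat.cast_nonneg _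
  calc (meshCount3 δ
      (Gr2 (fun x y => (∑ i, lam i x * f i x) + ∑ j, mu j y * g j y)) : ℝ)
      ≤ 2 * (FA.card : ℝ) * (∑ a ∈ FA, P a) + 2 * (FA.card : ℝ) * (∑ b ∈ FA, Q b)
        + 3 * (FA.card : ℝ) * (FA.card : ℝ) := by
        rw [← step3]; exact step1.trans step2
    _ ≤ 2 * (FA.card : ℝ) * ((∑ i, Λf i * (meshCount2 δ (Gr1 (f i)) : ℝ))
          + (FA.card : ℝ) * ∑ i, Bf i * (Kf i : ℝ))
        + 2 * (FA.card : ℝ) * ((∑ j, Λg j * (meshCount2 δ (Gr1 (g j)) : ℝ))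
          + (FA.card : ℝ) * ∑ j, Bg j * (Kg j : ℝ))
        + 3 * (FA.card : ℝ) * (FA.card : ℝ) := by
        apply add_le_add_left
        exact add_le_add (mul_le_mul_of_nonneg_left hsumP (by positivity))
          (mul_le_mul_of_nonneg_left hsumQ (by positivity))
    _ = ((m : ℝ) + 1) * (2 * ((∑ i, Λf i * (meshCount2 δ (Gr1 (f i)) : ℝ))
        + ∑ j, Λg j * (meshCount2 δ (Gr1 (g j)) : ℝ))
        + (2 * ((∑ i, Bf i * (Kf i : ℝ)) + ∑ j, Bg j * (Kg j : ℝ)) + 3) * ((m : ℝ) + 1)) := by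
        rw [hT]; ring

lemma meshCount2_lower {δ B : ℝ} (hδ : 0 < δ) {f : ℝ → ℝ}
    (hB : ∀ x ∈ Set.Icc (0:ℝ) 1, |f x| ≤ B) (hδ1 : δ ≤ 1) :
    1 / δ ≤ (meshCount2 δ (Gr1 f) : ℝ) := by
  classical
  rw [meshCount2_eq]
  set m := ⌊1/δ⌋ with hm
  have hm0 : 0 ≤ m := Int.floor_nonneg.2 (by positivity)
  set S : Set (ℤ × ℤ) := {k : ℤ × ℤ | k.2 ∈ colC δ f k.1} with hS
  have hfin : S.Finite := by
    apply Set.Finite.subset (((Finset.Icc (0:ℤ) m) ×ˢ (Finset.Icc ⌊-B/δ⌋ ⌊B/δ⌋) :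
      Finset (ℤ × ℤ)).finite_toSet)
    rintro ⟨a, c⟩ ⟨x, hx01, hxa, hxc⟩
    simp only [Finset.coe_product, Set.mem_prod, Finset.mem_coe]
    exact ⟨col_index_mem hδ hx01 hxa, mbox_index_bounded hδ (hB x hx01) hxc⟩
  have hmem : ∀ a ∈ Finset.Icc (0:ℤ) m, ((a, ⌊f ((a:ℝ) * δ) / δ⌋) : ℤ × ℤ) ∈ hfin.toFinset := by
    intro a ha
    rw [Finset.mem_Icc] at ha
    rw [Set.Finite.mem_toFinset]
    have ha0 : (0:ℝ) ≤ (a:ℝ) := by exact_mod_cast ha.1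
    have hx01 : (a:ℝ) * δ ∈ Set.Icc (0:ℝ) 1 := by
      constructor
      · positivity
      · have h1 : (a:ℝ) ≤ (m:ℝ) := by exact_mod_cast ha.2
        have h2 : (m:ℝ) ≤ 1/δ := Int.floor_le _
        calc (a:ℝ) * δ ≤ (1/δ) * δ := by nlinarith
          _ = 1 := by field_simp
    refine ⟨(a:ℝ) * δ, hx01, ⟨le_refl _, by nlinarith⟩, (mem_mbox_iff hδ).2 rfl⟩
  have hinj : Set.InjOn (fun a : ℤ => ((a, ⌊f ((a:ℝ) * δ) / δ⌋) : ℤ × ℤ))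
      (Finset.Icc (0:ℤ) m) := fun a _ a' _ e => congrArg Prod.fst e
  have hcard : (Finset.Icc (0:ℤ) m).card ≤ hfin.toFinset.card :=
    Finset.card_le_card_of_injOn _ hmem hinj
  have h1 : ((Finset.Icc (0:ℤ) m).card : ℝ) = (m : ℝ) + 1 := by
    rw [Int.card_Icc]
    have h0 : ((m + 1 - 0).toNat : ℤ) = m + 1 - 0 := Int.toNat_of_nonneg (by omega)
    have : (((m + 1 - 0).toNat : ℤ) : ℝ) = ((m + 1 - 0 : ℤ) : ℝ) := by rw [h0]
    push_cast at this ⊢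
    linarith
  have h2 : 1/δ ≤ (m : ℝ) + 1 := le_of_lt (Int.lt_floor_add_one _)
  have h3 : S.ncard = hfin.toFinset.card := Set.ncard_eq_toFinset_card S hfin
  calc 1/δ ≤ (m:ℝ) + 1 := h2
    _ = ((Finset.Icc (0:ℤ) m).card : ℝ) := h1.symm
    _ ≤ (hfin.toFinset.card : ℝ) := by exact_mod_cast hcard
    _ = (S.ncard : ℝ) := by rw [h3]

lemma one_le_boxdim {f : ℝ → ℝ} {D : ℝ} (hf : ContinuousOn f (Set.Icc 0 1))
    (hD : HasBoxDim2 (Gr1 f) D) : 1 ≤ D := by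
  obtain ⟨B, hB⟩ := isCompact_Icc.exists_bound_of_continuousOn hf
  have hB' : ∀ x ∈ Set.Icc (0:ℝ) 1, |f x| ≤ B := fun x hx => by
    have := hB x hx; rwa [Real.norm_eq_abs] at this
  apply ge_of_tendsto hD
  have hIoo : Set.Ioo (0:ℝ) 1 ∈ 𝓝[>] (0:ℝ) :=
    Ioo_mem_nhdsGT_of_mem (by constructor <;> norm_num)
  filter_upwards [hIoo] with δ hδ
  have hδ0 : 0 < δ := hδ.1
  have hlog : 0 < -Real.log δ := by
    have := Real.log_neg hδ0 hδ.2
    linarith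
  have hN2 : 1/δ ≤ (meshCount2 δ (Gr1 f) : ℝ) := meshCount2_lower hδ0 hB' hδ.2.le
  have hlogN2 : -Real.log δ ≤ Real.log (meshCount2 δ (Gr1 f)) := by
    have h1 : Real.log (1/δ) ≤ Real.log (meshCount2 δ (Gr1 f)) :=
      Real.log_le_log (by positivity) hN2
    rwa [Real.log_div one_ne_zero (ne_of_gt hδ0), Real.log_one, zero_sub] at h1
  rw [le_div_iff₀ hlog, one_mul]
  exact hlogN2

/-- **Corollary 1 (upper bound).** For continuous `f_i, g_j : [0,1] → ℝ` with box-counting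
dimensional graphs and Lipschitz `λ_i, μ_j : [0,1] → ℝ`, the upper box-counting dimension of
the graph of `F(x,y) = Σ λ_i(x)f_i(x) + Σ μ_j(y)g_j(y)` is at most
`1 + max_{i,j}{dim_B Gr(f_i), dim_B Gr(g_j)}`. -/
theorem stmt14 (N M : ℕ) (hN : 0 < N) (hM : 0 < M)
    (f : Fin N → ℝ → ℝ) (g : Fin M → ℝ → ℝ)
    (lam : Fin N → ℝ → ℝ) (mu : Fin M → ℝ → ℝ)
    (hf : ∀ i, ContinuousOn (f i) (Icc 0 1)) (hg : ∀ j, ContinuousOn (g j) (Icc 0 1))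
    (hliplam : ∀ i, ∃ K : NNReal, LipschitzOnWith K (lam i) (Icc 0 1))
    (hlipmu : ∀ j, ∃ K : NNReal, LipschitzOnWith K (mu j) (Icc 0 1))
    (Df : Fin N → ℝ) (Dg : Fin M → ℝ)
    (hDf : ∀ i, HasBoxDim2 (Gr1 (f i)) (Df i))
    (hDg : ∀ j, HasBoxDim2 (Gr1 (g j)) (Dg j)) :
    limsup (fun δ : ℝ =>
        Real.log (meshCount3 δ
          (Gr2 fun x y => (∑ i, lam i x * f i x) + ∑ j, mu j y * g j y)) / (-Real.log δ))
      (𝓝[>] 0) ≤ 1 + max (⨆ i, Df i) (⨆ j, Dg j) := by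
  classical
  have hNne : Nonempty (Fin N) := ⟨⟨0, hN⟩⟩
  have hMne : Nonempty (Fin M) := ⟨⟨0, hM⟩⟩
  choose Kl hKl using hliplam
  choose Km hKm using hlipmu
  have hBfe : ∀ i, ∃ B, ∀ x ∈ Set.Icc (0:ℝ) 1, |f i x| ≤ B := fun i => by
    obtain ⟨B, hB⟩ := isCompact_Icc.exists_bound_of_continuousOn (hf i)
    exact ⟨B, fun x hx => by have := hB x hx; rwa [Real.norm_eq_abs] at this⟩
  choose Bf hBf using hBfe
  have hBge : ∀ j, ∃ B, ∀ y ∈ Set.Icc (0:ℝ) 1, |g j y| ≤ B := fun j => by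
    obtain ⟨B, hB⟩ := isCompact_Icc.exists_bound_of_continuousOn (hg j)
    exact ⟨B, fun y hy => by have := hB y hy; rwa [Real.norm_eq_abs] at this⟩
  choose Bg hBg using hBge
  have hΛfe : ∀ i, ∃ L, ∀ x ∈ Set.Icc (0:ℝ) 1, |lam i x| ≤ L := fun i => by
    obtain ⟨L, hL⟩ := isCompact_Icc.exists_bound_of_continuousOn (hKl i).continuousOn
    exact ⟨L, fun x hx => by have := hL x hx; rwa [Real.norm_eq_abs] at this⟩
  choose Λf hΛf using hΛfe
  have hΛge : ∀ j, ∃ L, ∀ y ∈ Set.Icc (0:ℝ) 1, |mu j y| ≤ L := fun j => by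
    obtain ⟨L, hL⟩ := isCompact_Icc.exists_bound_of_continuousOn (hKm j).continuousOn
    exact ⟨L, fun y hy => by have := hL y hy; rwa [Real.norm_eq_abs] at this⟩
  choose Λg hΛg using hΛge
  have hΛf0 : ∀ i, 0 ≤ Λf i := fun i => le_trans (abs_nonneg _) (hΛf i 0 (by norm_num))
  have hΛg0 : ∀ j, 0 ≤ Λg j := fun j => le_trans (abs_nonneg _) (hΛg j 0 (by norm_num))
  have hBf0 : ∀ i, 0 ≤ Bf i := fun i => le_trans (abs_nonneg _) (hBf i 0 (by norm_num))
  have hBg0 : ∀ j, 0 ≤ Bg j := fun j => le_trans (abs_nonneg _) (hBg j 0 (by norm_num))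
  set D := max (⨆ i, Df i) (⨆ j, Dg j) with hDdef
  have hDfD : ∀ i, Df i ≤ D := fun i =>
    le_trans (le_ciSup (Set.Finite.bddAbove (Set.finite_range Df)) i) (le_max_left _ _)
  have hDgD : ∀ j, Dg j ≤ D := fun j =>
    le_trans (le_ciSup (Set.Finite.bddAbove (Set.finite_range Dg)) j) (le_max_right _ _)
  have hD1 : 1 ≤ D := le_trans (one_le_boxdim (hf ⟨0, hN⟩) (hDf ⟨0, hN⟩)) (hDfD ⟨0, hN⟩)
  set CK : ℝ := 2 * ((∑ i, Bf i * (Kl i : ℝ)) + ∑ j, Bg j * (Km j : ℝ)) + 3 with hCKdef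
  have hCK0 : 0 ≤ CK := by
    have h1 : 0 ≤ ∑ i, Bf i * (Kl i : ℝ) :=
      Finset.sum_nonneg fun i _ => mul_nonneg (hBf0 i) (Kl i).coe_nonneg
    have h2 : 0 ≤ ∑ j, Bg j * (Km j : ℝ) :=
      Finset.sum_nonneg fun j _ => mul_nonneg (hBg0 j) (Km j).coe_nonneg
    rw [hCKdef]; linarith
  set SΛ : ℝ := (∑ i, Λf i) + ∑ j, Λg j with hSΛdef
  have hSΛ0 : 0 ≤ SΛ := by
    have h1 : 0 ≤ ∑ i, Λf i := Finset.sum_nonneg fun i _ => hΛf0 i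
    have h2 : 0 ≤ ∑ j, Λg j := Finset.sum_nonneg fun j _ => hΛg0 j
    rw [hSΛdef]; linarith
  set K : ℝ := max (4 * SΛ + 4 * CK) 1 with hKdef
  have hK1 : (1:ℝ) ≤ K := le_max_right _ _
  have hK0 : (0:ℝ) < K := lt_of_lt_of_le one_pos hK1
  apply le_of_forall_pos_le_add
  intro ε hε
  have hexp1 : (1:ℝ) ≤ D + ε := by linarith
  -- eventual mesh2 bounds
  have hev2f : ∀ᶠ δ in 𝓝[>] (0:ℝ), ∀ i,
      (meshCount2 δ (Gr1 (f i)) : ℝ) ≤ δ ^ (-(D + ε)) := by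
    rw [eventually_all]
    intro i
    have h1 : ∀ᶠ δ in 𝓝[>] (0:ℝ), Real.log (meshCount2 δ (Gr1 (f i))) / (-Real.log δ)
        ≤ D + ε := (hDf i).eventually_le_const (by linarith [hDfD i])
    have hIoo : Set.Ioo (0:ℝ) 1 ∈ 𝓝[>] (0:ℝ) :=
      Ioo_mem_nhdsGT_of_mem (by constructor <;> norm_num)
    filter_upwards [h1, hIoo] with δ hratio hδI
    have hδ0 : 0 < δ := hδI.1
    have hlogδ : 0 < -Real.log δ := by have := Real.log_neg hδ0 hδI.2; linarith
    by_cases hz : meshCount2 δ (Gr1 (f i)) = 0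
    · rw [hz]
      simp only [Nat.cast_zero]
      positivity
    · have hpos : (0:ℝ) < (meshCount2 δ (Gr1 (f i)) : ℝ) := by
        exact_mod_cast Nat.pos_of_ne_zero hz
      have hlog : Real.log (meshCount2 δ (Gr1 (f i))) ≤ (D + ε) * (-Real.log δ) :=
        (div_le_iff₀ hlogδ).1 hratio
      calc (meshCount2 δ (Gr1 (f i)) : ℝ)
          = Real.exp (Real.log (meshCount2 δ (Gr1 (f i)))) := (Real.exp_log hpos).symm
        _ ≤ Real.exp ((D + ε) * (-Real.log δ)) := Real.exp_le_exp.2 hlog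
        _ = δ ^ (-(D + ε)) := by rw [Real.rpow_def_of_pos hδ0]; congr 1; ring
  have hev2g : ∀ᶠ δ in 𝓝[>] (0:ℝ), ∀ j,
      (meshCount2 δ (Gr1 (g j)) : ℝ) ≤ δ ^ (-(D + ε)) := by
    rw [eventually_all]
    intro j
    have h1 : ∀ᶠ δ in 𝓝[>] (0:ℝ), Real.log (meshCount2 δ (Gr1 (g j))) / (-Real.log δ)
        ≤ D + ε := (hDg j).eventually_le_const (by linarith [hDgD j])
    have hIoo : Set.Ioo (0:ℝ) 1 ∈ 𝓝[>] (0:ℝ) :=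
      Ioo_mem_nhdsGT_of_mem (by constructor <;> norm_num)
    filter_upwards [h1, hIoo] with δ hratio hδI
    have hδ0 : 0 < δ := hδI.1
    have hlogδ : 0 < -Real.log δ := by have := Real.log_neg hδ0 hδI.2; linarith
    by_cases hz : meshCount2 δ (Gr1 (g j)) = 0
    · rw [hz]
      simp only [Nat.cast_zero]
      positivity
    · have hpos : (0:ℝ) < (meshCount2 δ (Gr1 (g j)) : ℝ) := by
        exact_mod_cast Nat.pos_of_ne_zero hz
      have hlog : Real.log (meshCount2 δ (Gr1 (g j))) ≤ (D + ε) * (-Real.log δ) :=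
        (div_le_iff₀ hlogδ).1 hratio
      calc (meshCount2 δ (Gr1 (g j)) : ℝ)
          = Real.exp (Real.log (meshCount2 δ (Gr1 (g j)))) := (Real.exp_log hpos).symm
        _ ≤ Real.exp ((D + ε) * (-Real.log δ)) := Real.exp_le_exp.2 hlog
        _ = δ ^ (-(D + ε)) := by rw [Real.rpow_def_of_pos hδ0]; congr 1; ring
  -- main eventual inequality
  have hmain : ∀ᶠ δ in 𝓝[>] (0:ℝ),
      Real.log (meshCount3 δ
        (Gr2 fun x y => (∑ i, lam i x * f i x) + ∑ j, mu j y * g j y)) / (-Real.log δ)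
      ≤ Real.log K / (-Real.log δ) + (1 + D + ε) := by
    have hIoo : Set.Ioo (0:ℝ) 1 ∈ 𝓝[>] (0:ℝ) :=
      Ioo_mem_nhdsGT_of_mem (by constructor <;> norm_num)
    filter_upwards [hev2f, hev2g, hIoo] with δ hevf hevg hδI
    have hδ0 : 0 < δ := hδI.1
    have hδ1 : δ < 1 := hδI.2
    have hlogδ : 0 < -Real.log δ := by have := Real.log_neg hδ0 hδ1; linarith
    have hlogK : 0 ≤ Real.log K := Real.log_nonneg hK1
    by_cases hz : meshCount3 δ
        (Gr2 fun x y => (∑ i, lam i x * f i x) + ∑ j, mu j y * g j y) = 0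
    · rw [hz]
      simp only [Nat.cast_zero, Real.log_zero, zero_div]
      have h1 : 0 ≤ Real.log K / (-Real.log δ) := div_nonneg hlogK hlogδ.le
      linarith
    · set R : ℝ := δ ^ (-(D + ε)) with hRdef
      have hR0 : 0 ≤ R := (Real.rpow_pos_of_pos hδ0 _).le
      have hRinv : δ ^ (-1 : ℝ) ≤ R := by
        apply Real.rpow_le_rpow_of_exponent_ge hδ0 hδ1.le
        linarith
      have hb := main_count f g lam mu Λf Kl Bf Λg Km Bg hf hg hΛf hΛg hKl hKm hBf hBg hδ0
      set T : ℝ := ((⌊1/δ⌋ : ℤ) : ℝ) + 1 with hTdef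
      have hT0 : 0 ≤ T := by
        have : (0:ℝ) ≤ ((⌊1/δ⌋ : ℤ) : ℝ) := by
          exact_mod_cast Int.floor_nonneg.2 (by positivity : (0:ℝ) ≤ 1/δ)
        rw [hTdef]; linarith
      have hT2 : T ≤ 2 * δ ^ (-1 : ℝ) := by
        have h1 : ((⌊1/δ⌋ : ℤ) : ℝ) ≤ 1/δ := Int.floor_le _
        have h2 : (1:ℝ) ≤ 1/δ := by rw [le_div_iff₀ hδ0]; linarith
        rw [hTdef, Real.rpow_neg_one]
        have : (1:ℝ)/δ = δ⁻¹ := one_div δ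
        linarith [this ▸ h1, this ▸ h2]
      have hA1 : (∑ i, Λf i * (meshCount2 δ (Gr1 (f i)) : ℝ)) ≤ (∑ i, Λf i) * R := by
        rw [Finset.sum_mul]
        exact Finset.sum_le_sum fun i _ => mul_le_mul_of_nonneg_left (hevf i) (hΛf0 i)
      have hA2 : (∑ j, Λg j * (meshCount2 δ (Gr1 (g j)) : ℝ)) ≤ (∑ j, Λg j) * R := by
        rw [Finset.sum_mul]
        exact Finset.sum_le_sum fun j _ => mul_le_mul_of_nonneg_left (hevg j) (hΛg0 j)
      have hA0 : 0 ≤ (∑ i, Λf i * (meshCount2 δ (Gr1 (f i)) : ℝ))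
          + ∑ j, Λg j * (meshCount2 δ (Gr1 (g j)) : ℝ) :=
        add_nonneg (Finset.sum_nonneg fun i _ => mul_nonneg (hΛf0 i) (Nat.cast_nonneg _))
          (Finset.sum_nonneg fun j _ => mul_nonneg (hΛg0 j) (Nat.cast_nonneg _))
      -- combine
      have hfinal : (meshCount3 δ
          (Gr2 fun x y => (∑ i, lam i x * f i x) + ∑ j, mu j y * g j y) : ℝ)
          ≤ K * δ ^ (-(1 + D + ε)) := by
        have hδinv0 : 0 ≤ δ ^ (-1 : ℝ) := (Real.rpow_pos_of_pos hδ0 _).le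
        have hsplit : δ ^ (-(1 + D + ε)) = δ ^ (-1 : ℝ) * R := by
          rw [hRdef, ← Real.rpow_add hδ0]; congr 1; ring
        calc (meshCount3 δ
            (Gr2 fun x y => (∑ i, lam i x * f i x) + ∑ j, mu j y * g j y) : ℝ)
            ≤ T * (2 * ((∑ i, Λf i * (meshCount2 δ (Gr1 (f i)) : ℝ))
              + ∑ j, Λg j * (meshCount2 δ (Gr1 (g j)) : ℝ)) + CK * T) := hb
          _ ≤ (2 * δ ^ (-1 : ℝ)) * (2 * (SΛ * R) + CK * (2 * δ ^ (-1 : ℝ))) := by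
              apply mul_le_mul hT2
              · apply add_le_add
                · apply mul_le_mul_of_nonneg_left _ (by norm_num : (0:ℝ) ≤ 2)
                  calc (∑ i, Λf i * (meshCount2 δ (Gr1 (f i)) : ℝ))
                      + ∑ j, Λg j * (meshCount2 δ (Gr1 (g j)) : ℝ)
                      ≤ (∑ i, Λf i) * R + (∑ j, Λg j) * R := add_le_add hA1 hA2
                    _ = SΛ * R := by rw [hSΛdef]; ring
                · exact mul_le_mul_of_nonneg_left hT2 hCK0
              · have h2 : 0 ≤ CK * T := mul_nonneg hCK0 hT0
                linarith [mul_nonneg (by norm_num : (0:ℝ) ≤ 2) hA0]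
              · positivity
          _ ≤ (2 * δ ^ (-1 : ℝ)) * (2 * (SΛ * R) + CK * (2 * R)) := by
              apply mul_le_mul_of_nonneg_left _ (by positivity)
              apply add_le_add_right
              apply mul_le_mul_of_nonneg_left _ hCK0
              linarith
          _ = (4 * SΛ + 4 * CK) * (δ ^ (-1 : ℝ) * R) := by ring
          _ ≤ K * (δ ^ (-1 : ℝ) * R) := by
              apply mul_le_mul_of_nonneg_right (le_max_left _ _)
              positivity
          _ = K * δ ^ (-(1 + D + ε)) := by rw [hsplit]
      have h3pos : (0:ℝ) < (meshCount3 δ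
          (Gr2 fun x y => (∑ i, lam i x * f i x) + ∑ j, mu j y * g j y) : ℝ) := by
        exact_mod_cast Nat.pos_of_ne_zero hz
      have hloglog : Real.log (meshCount3 δ
          (Gr2 fun x y => (∑ i, lam i x * f i x) + ∑ j, mu j y * g j y))
          ≤ Real.log K + (1 + D + ε) * (-Real.log δ) := by
        calc Real.log (meshCount3 δ
            (Gr2 fun x y => (∑ i, lam i x * f i x) + ∑ j, mu j y * g j y))
            ≤ Real.log (K * δ ^ (-(1 + D + ε))) := Real.log_le_log h3pos hfinal
          _ = Real.log K + Real.log (δ ^ (-(1 + D + ε))) :=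
              Real.log_mul (ne_of_gt hK0) (ne_of_gt (Real.rpow_pos_of_pos hδ0 _))
          _ = Real.log K + (-(1 + D + ε)) * Real.log δ := by rw [Real.log_rpow hδ0]
          _ = Real.log K + (1 + D + ε) * (-Real.log δ) := by ring
      calc Real.log (meshCount3 δ
          (Gr2 fun x y => (∑ i, lam i x * f i x) + ∑ j, mu j y * g j y)) / (-Real.log δ)
          ≤ (Real.log K + (1 + D + ε) * (-Real.log δ)) / (-Real.log δ) := by
            gcongr
          _ = Real.log K / (-Real.log δ) + (1 + D + ε) := by
            rw [add_div, mul_div_assoc, div_self (ne_of_gt hlogδ), mul_one]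
  -- limsup conclusion
  have hlim : Tendsto (fun δ : ℝ => Real.log K / (-Real.log δ) + (1 + D + ε)) (𝓝[>] 0)
      (𝓝 (0 + (1 + D + ε))) := by
    apply Tendsto.add _ tendsto_const_nhds
    exact Tendsto.div_atTop tendsto_const_nhds
      (tendsto_neg_atBot_atTop.comp Real.tendsto_log_nhdsGT_zero)
  have hcob : IsCoboundedUnder (· ≤ ·) (𝓝[>] (0:ℝ)) (fun δ : ℝ =>
      Real.log (meshCount3 δ
        (Gr2 fun x y => (∑ i, lam i x * f i x) + ∑ j, mu j y * g j y)) / (-Real.log δ)) := by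
    apply isCoboundedUnder_le_of_eventually_le (𝓝[>] (0:ℝ)) (x := 0)
    have hIoo : Set.Ioo (0:ℝ) 1 ∈ 𝓝[>] (0:ℝ) :=
      Ioo_mem_nhdsGT_of_mem (by constructor <;> norm_num)
    filter_upwards [hIoo] with δ hδI
    have hδ0 : 0 < δ := hδI.1
    have hlogδ : 0 < -Real.log δ := by have := Real.log_neg hδ0 hδI.2; linarith
    apply div_nonneg _ hlogδ.le
    rcases Nat.eq_zero_or_pos (meshCount3 δ
        (Gr2 fun x y => (∑ i, lam i x * f i x) + ∑ j, mu j y * g j y)) with hz | hp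
    · rw [hz]; simp
    · apply Real.log_nonneg
      exact_mod_cast hp
  have hls := limsup_le_limsup hmain hcob hlim.isBoundedUnder_le
  rw [hlim.limsup_eq] at hls
  linarith [hls]
end
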